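/- arXiv:1804.05011 — 5 statements merged into one kernel-verified Lean document; each statement's English description precedes it below -/
import Mathlib

section
/- Tayloring bound for performance evaluation (Theorem 1, single-policy/linear case, on the state space ℤ^d): Let d ≥ 1, α ∈ (0,1), β ∈ (0,1], and let 𝔧 ≥ 1 be a real number. Let P be a stochastic matrix on ℤ^d with jumps bounded by 𝔧, with drift μ and diffusion matrix σ². Let r : ℤ^d → ℝ and let Γ > 0 and q ∈ ℕ be such that |r(x)| ≤ Γ(1 + ‖x‖^q) for all x ∈ ℤ^d; define V(x) := E_x[Σ_{t=0}^∞ α^t r(X_t)] (this series converges absolutely because the chain has jumps bounded by 𝔧). Let V̂ : ℝ^d → ℝ be twice continuously differentiable with |V̂(x)| ≤ Γ(1 + ‖x‖^q) for all x ∈ ℝ^d, and suppose that for every x ∈ ℤ^d, 0 = r(x) + α(μ(x)·DV̂(x) + (1/2)·trace(σ²(x)·D²V̂(x))) − (1−α)·V̂(x). Then for every x ∈ ℤ^d, |V̂(x) − V(x)| ≤ 𝔧^{2+β} · E_x[Σ_{t=0}^∞ α^t [D²V̂]_{β, B̄(X_t,𝔧)}], where B̄(z,𝔧) is the closed Euclidean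 ball of radius 𝔧 centered at z and the right-hand side is interpreted as a value in [0,+∞]. -/
open scoped ENNReal BigOperators

noncomputable section

/-- `ℤ^d` represented as functions `Fin d → ℤ`. -/
abbrev Zd (d : ℕ) := Fin d → ℤ

/-- The embedding of `ℤ^d` into Euclidean `ℝ^d`. -/
def zToR {d : ℕ} (x : Zd d) : EuclideanSpace ℝ (Fin d) := WithLp.toLp 2 (fun i => (x i : ℝ))

/-- `t`-step transition probabilities of the Markov chain with one-step
transition matrix `P`. -/
def mstep {d : ℕ} (P : Zd d → Zd d → ℝ) : ℕ → Zd d → Zd d → ℝ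
  | 0 => fun x y => if y = x then 1 else 0
  | n + 1 => fun x y => ∑' z : Zd d, mstep P n x z * P z y

/-- Entry `(i, j)` of the Hessian of `f` at `x`. -/
def hessianEntry {d : ℕ} (f : EuclideanSpace ℝ (Fin d) → ℝ)
    (x : EuclideanSpace ℝ (Fin d)) (i j : Fin d) : ℝ :=
  iteratedFDeriv ℝ 2 f x ![EuclideanSpace.single i 1, EuclideanSpace.single j 1]

/-- The Hölder seminorm `[D²f]_{β,Ω}` of the Hessian of `f` over `Ω`
(operator norm on second derivatives), valued in `[0,∞]`. -/
def hessHolder {d : ℕ} (β : ℝ) (f : EuclideanSpace ℝ (Fin d) → ℝ)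
    (Ω : Set (EuclideanSpace ℝ (Fin d))) : ℝ≥0∞ :=
  ⨆ (y : Ω) (z : Ω) (_ : (y : EuclideanSpace ℝ (Fin d)) ≠ (z : EuclideanSpace ℝ (Fin d))),
    ENNReal.ofReal
      (‖iteratedFDeriv ℝ 2 f (y : EuclideanSpace ℝ (Fin d)) -
          iteratedFDeriv ℝ 2 f (z : EuclideanSpace ℝ (Fin d))‖ /
        ‖(y : EuclideanSpace ℝ (Fin d)) - (z : EuclideanSpace ℝ (Fin d))‖ ^ β)

set_option linter.unusedSectionVars false
set_option linter.unusedVariables false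
set_option maxHeartbeats 1000000
namespace Tay

variable {d : ℕ}

lemma abs_coord_le (v : EuclideanSpace ℝ (Fin d)) (i : Fin d) : |v i| ≤ ‖v‖ := by
  rw [EuclideanSpace.norm_eq]
  have h1 : |v i| = Real.sqrt (‖v i‖ ^ 2) := by
    rw [Real.sqrt_sq_eq_abs]; simp
  rw [h1]
  apply Real.sqrt_le_sqrt
  exact Finset.single_le_sum (f := fun j => ‖v j‖ ^ 2) (fun j _ => by positivity) (Finset.mem_univ i)

lemma zToR_sub_apply (x y : Zd d) (i : Fin d) : (zToR y - zToR x) i = (y i : ℝ) - (x i : ℝ) := by simp [zToR]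

def latticeBall (x : Zd d) (R : ℝ) : Finset (Zd d) :=
  Finset.Icc (fun i => x i - ⌈R⌉) (fun i => x i + ⌈R⌉)

lemma mem_latticeBall {x y : Zd d} {R : ℝ} (h : ‖zToR y - zToR x‖ ≤ R) :
    y ∈ latticeBall x R := by
  rw [latticeBall, Finset.mem_Icc]
  constructor <;> intro i <;> simp only [Pi.sub_apply]
  · have h1 : |(y i : ℝ) - (x i : ℝ)| ≤ R := by
      rw [← zToR_sub_apply]; exact le_trans (abs_coord_le _ i) h
    have h2 : ((|y i - x i| : ℤ) : ℝ) ≤ (⌈R⌉ : ℝ) := by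
      push_cast
      exact le_trans h1 (Int.le_ceil R)
    have h3 := abs_le.mp (Int.cast_le.mp h2)
    omega
  · have h1 : |(y i : ℝ) - (x i : ℝ)| ≤ R := by
      rw [← zToR_sub_apply]; exact le_trans (abs_coord_le _ i) h
    have h2 : ((|y i - x i| : ℤ) : ℝ) ≤ (⌈R⌉ : ℝ) := by
      push_cast
      exact le_trans h1 (Int.le_ceil R)
    have h3 := abs_le.mp (Int.cast_le.mp h2)
    omega

lemma euclid_sum_single (v : EuclideanSpace ℝ (Fin d)) :
    v = ∑ i, v i • EuclideanSpace.single i (1 : ℝ) := by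
  ext j
  have : (∑ i, v i • EuclideanSpace.single i (1 : ℝ)) j
      = ∑ i, (v i • EuclideanSpace.single i (1 : ℝ)) j := by
    rw [WithLp.ofLp_sum]; exact Finset.sum_apply j Finset.univ _
  rw [this]
  simp [EuclideanSpace.single_apply]
section mstep
variable {P : Zd d → Zd d → ℝ} {jmp : ℝ}

lemma notmem_norm {x y : Zd d} {R : ℝ} (h : y ∉ latticeBall x R) : R < ‖zToR y - zToR x‖ := by
  by_contra hc
  exact h (mem_latticeBall (not_lt.mp hc))

variable (hP0 : ∀ x y, 0 ≤ P x y) (hPsum : ∀ x, HasSum (P x) 1)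
  (hjump : ∀ x y, jmp < ‖zToR y - zToR x‖ → P x y = 0)

include hjump in
lemma mstep_supp : ∀ (t : ℕ) (x y : Zd d), (t : ℝ) * jmp < ‖zToR y - zToR x‖ →
    mstep P t x y = 0 := by
  intro t
  induction t with
  | zero =>
    intro x y h
    simp only [Nat.cast_zero, zero_mul] at h
    have : y ≠ x := by
      rintro rfl
      simp at h
    simp [mstep, this]
  | succ t ih =>
    intro x y h
    rw [mstep]
    convert tsum_zero with z
    by_cases h1 : (t : ℝ) * jmp < ‖zToR z - zToR x‖
    · rw [ih x z h1, zero_mul]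
    · have h2 : jmp < ‖zToR y - zToR z‖ := by
        push_cast at h
        have := norm_sub_le_norm_sub_add_norm_sub (zToR y) (zToR z) (zToR x)
        push_neg at h1
        nlinarith
      rw [hjump z y h2, mul_zero]

include hjump in
lemma mstep_supp' {t : ℕ} {x y : Zd d} (h : y ∉ latticeBall x (t * jmp)) :
    mstep P t x y = 0 :=
  mstep_supp hjump t x y (notmem_norm h)

include hjump in
lemma P_supp' {x y : Zd d} (h : y ∉ latticeBall x jmp) : P x y = 0 :=
  hjump x y (notmem_norm h)

include hP0 hjump in
lemma mstep_nonneg : ∀ (t : ℕ) (x y : Zd d), 0 ≤ mstep P t x y := by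
  intro t
  induction t with
  | zero => intro x y; rw [mstep]; positivity
  | succ t ih =>
    intro x y
    rw [mstep]
    exact tsum_nonneg fun z => mul_nonneg (ih x z) (hP0 z y)

include hjump in
lemma mstep_eq_sum {t : ℕ} {x : Zd d} {s : Finset (Zd d)}
    (hs : ∀ y, ‖zToR y - zToR x‖ ≤ t * jmp → y ∈ s) (f : Zd d → ℝ) :
    ∑' y, mstep P t x y * f y = ∑ y ∈ s, mstep P t x y * f y :=
  tsum_eq_sum fun y hy => by
    rw [mstep_supp hjump t x y (by by_contra hc; exact hy (hs y (not_lt.mp hc))), zero_mul]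

include hjump in
lemma P_eq_sum {x : Zd d} {s : Finset (Zd d)}
    (hs : ∀ y, ‖zToR y - zToR x‖ ≤ jmp → y ∈ s) (f : Zd d → ℝ) :
    ∑' y, P x y * f y = ∑ y ∈ s, P x y * f y :=
  tsum_eq_sum fun y hy => by
    rw [hjump x y (by by_contra hc; exact hy (hs y (not_lt.mp hc))), zero_mul]

include hP0 hPsum hjump in
lemma P_sum_one {x : Zd d} {s : Finset (Zd d)}
    (hs : ∀ y, ‖zToR y - zToR x‖ ≤ jmp → y ∈ s) :
    ∑ y ∈ s, P x y = 1 := by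
  have h1 : ∑' y, P x y * 1 = ∑ y ∈ s, P x y * 1 := P_eq_sum hjump hs 1
  simp only [mul_one] at h1
  rw [← h1, (hPsum x).tsum_eq]

include hP0 hPsum hjump in
lemma mstep_hasSum (hj0 : 0 ≤ jmp) : ∀ (t : ℕ) (x : Zd d), HasSum (mstep P t x) 1 := by
  intro t
  induction t with
  | zero => intro x; exact hasSum_ite_eq x 1
  | succ t ih =>
    intro x
    set S : Finset (Zd d) := latticeBall x (((t : ℝ) + 1) * jmp) with hS
    have hsupp : ∀ y ∉ S, mstep P (t+1) x y = 0 := fun y hy =>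
      mstep_supp hjump (t+1) x y (by push_cast; exact notmem_norm hy)
    have key : ∑ y ∈ S, mstep P (t+1) x y = 1 := by
      have hrw : ∀ y ∈ S, mstep P (t+1) x y =
          ∑ z ∈ latticeBall x (t * jmp), mstep P t x z * P z y := by
        intro y _
        rw [mstep]
        exact tsum_eq_sum fun z hz => by
          rw [mstep_supp hjump t x z (notmem_norm hz), zero_mul]
      rw [Finset.sum_congr rfl hrw, Finset.sum_comm]
      have hin : ∀ z ∈ latticeBall x (t * jmp), ∑ y ∈ S, mstep P t x z * P z y
          = mstep P t x z := by
        intro z _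
        rw [← Finset.mul_sum]
        by_cases hz : mstep P t x z = 0
        · rw [hz, zero_mul]
        · have hzx : ‖zToR z - zToR x‖ ≤ t * jmp := by
            by_contra hc
            exact hz (mstep_supp hjump t x z (not_le.mp hc))
          rw [P_sum_one hP0 hPsum hjump (fun y hy => mem_latticeBall ?_), mul_one]
          have := norm_sub_le_norm_sub_add_norm_sub (zToR y) (zToR z) (zToR x)
          push_cast
          nlinarith
      rw [Finset.sum_congr rfl hin]
      have h4 : ∑' z, mstep P t x z * 1 = ∑ z ∈ latticeBall x (t * jmp), mstep P t x z * 1 :=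
        mstep_eq_sum hjump (fun z hz => mem_latticeBall hz) 1
      simp only [mul_one] at h4
      rw [← h4]
      simpa using (ih x).tsum_eq
    have : HasSum (mstep P (t+1) x) (∑ y ∈ S, mstep P (t+1) x y) := hasSum_sum_of_ne_finset_zero hsupp
    rwa [key] at this

include hjump in
lemma mstep_fs : ∀ (t : ℕ) (x y : Zd d),
    mstep P (t+1) x y = ∑' z, P x z * mstep P t z y := by
  intro t
  induction t with
  | zero =>
    intro x y
    have hL : mstep P (0+1) x y = P x y := by
      rw [show mstep P (0+1) x y = ∑' z, mstep P 0 x z * P z y from rfl]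
      rw [tsum_eq_single x (fun z hz => by simp [mstep, hz])]
      simp [mstep]
    have hR : ∑' z, P x z * mstep P 0 z y = P x y := by
      rw [tsum_eq_single y (fun z hz => by simp [mstep, Ne.symm hz])]
      simp [mstep]
    rw [hL, hR]
  | succ t ih =>
    intro x y
    have h1 : ∀ w, mstep P (t+1) x w = ∑ z ∈ latticeBall x jmp, P x z * mstep P t z w := by
      intro w
      rw [ih x w]
      exact tsum_eq_sum fun z hz => by rw [hjump x z (notmem_norm hz), zero_mul]
    have h2 : ∑' w, mstep P (t+1) x w * P w y
        = ∑ w ∈ latticeBall x (((t : ℝ)+1) * jmp), mstep P (t+1) x w * P w y :=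
      tsum_eq_sum fun w hw => by
        rw [mstep_supp hjump (t+1) x w (by push_cast; exact notmem_norm hw), zero_mul]
    rw [show mstep P (t+1+1) x y = ∑' w, mstep P (t+1) x w * P w y from rfl]
    rw [h2]
    simp_rw [h1, Finset.sum_mul, mul_assoc]
    rw [Finset.sum_comm]
    have h3 : ∀ z ∈ latticeBall x jmp,
        ∑ w ∈ latticeBall x (((t : ℝ)+1) * jmp), P x z * (mstep P t z w * P w y)
        = P x z * mstep P (t+1) z y := by
      intro z _
      rw [← Finset.mul_sum]
      by_cases hz : P x z = 0
      · rw [hz, zero_mul, zero_mul]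
      · congr 1
        have hzx : ‖zToR z - zToR x‖ ≤ jmp := by
          by_contra hc
          exact hz (hjump x z (not_le.mp hc))
        rw [show mstep P (t+1) z y = ∑' w, mstep P t z w * P w y from rfl]
        refine (tsum_eq_sum fun w hw => ?_).symm
        rw [mstep_supp hjump t z w ?_, zero_mul]
        have hn := notmem_norm hw
        have := norm_sub_le_norm_sub_add_norm_sub (zToR w) (zToR z) (zToR x)
        push_cast at hn
        nlinarith
    rw [Finset.sum_congr rfl h3]
    refine (tsum_eq_sum fun z hz => by rw [hjump x z (notmem_norm hz), zero_mul]).symm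

end mstep
lemma second_deriv_line {f : EuclideanSpace ℝ (Fin d) → ℝ} (hf : ContDiff ℝ 2 f)
    (x₀ v : EuclideanSpace ℝ (Fin d)) (t : ℝ) :
    HasDerivAt (fun s : ℝ => fderiv ℝ f (x₀ + s • v) v)
      (iteratedFDeriv ℝ 2 f (x₀ + t • v) ![v, v]) t := by
  have hφ : HasDerivAt (fun s : ℝ => x₀ + s • v) v t := by
    simpa using ((hasDerivAt_id t).smul_const v).const_add x₀
  have hf' : ContDiff ℝ 1 (fderiv ℝ f) := by
    apply ContDiff.fderiv_right hf
    norm_num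
  have hA : HasFDerivAt (fderiv ℝ f) (fderiv ℝ (fderiv ℝ f) (x₀ + t • v)) (x₀ + t • v) :=
    (hf'.differentiable (by norm_num) (x₀ + t • v)).hasFDerivAt
  have h1 : HasDerivAt (fun s : ℝ => fderiv ℝ f (x₀ + s • v))
      (fderiv ℝ (fderiv ℝ f) (x₀ + t • v) v) t := hA.comp_hasDerivAt t hφ
  have h2 := h1.clm_apply (hasDerivAt_const t v)
  simp only [add_zero, map_zero] at h2
  rw [iteratedFDeriv_two_apply]
  simpa using h2

lemma first_deriv_line {f : EuclideanSpace ℝ (Fin d) → ℝ} (hf : ContDiff ℝ 2 f)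
    (x₀ v : EuclideanSpace ℝ (Fin d)) (t : ℝ) :
    HasDerivAt (fun s : ℝ => f (x₀ + s • v)) (fderiv ℝ f (x₀ + t • v) v) t := by
  have hφ : HasDerivAt (fun s : ℝ => x₀ + s • v) v t := by
    simpa using ((hasDerivAt_id t).smul_const v).const_add x₀
  exact ((hf.differentiable (by norm_num)).differentiableAt.hasFDerivAt).comp_hasDerivAt t hφ

lemma taylor_bound {f : EuclideanSpace ℝ (Fin d) → ℝ} (hf : ContDiff ℝ 2 f)
    {x₀ v : EuclideanSpace ℝ (Fin d)} {β jmp K : ℝ} (hβ0 : 0 < β) (hβ1 : β ≤ 1) (hK : 0 ≤ K)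
    (hj : 0 < jmp) (hv : ‖v‖ ≤ jmp)
    (hHol : ∀ y z : EuclideanSpace ℝ (Fin d), y ∈ Metric.closedBall x₀ jmp →
      z ∈ Metric.closedBall x₀ jmp →
      ‖iteratedFDeriv ℝ 2 f y - iteratedFDeriv ℝ 2 f z‖ ≤ K * ‖y - z‖ ^ β) :
    |f (x₀ + v) - f x₀ - fderiv ℝ f x₀ v - (1/2) * iteratedFDeriv ℝ 2 f x₀ ![v, v]|
      ≤ K * jmp ^ (2 + β) := by
  have hrpow : (0:ℝ) ≤ K * jmp ^ (2 + β) := by positivity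
  by_cases hv0 : v = 0
  · subst hv0
    have : iteratedFDeriv ℝ 2 f x₀ ![(0 : EuclideanSpace ℝ (Fin d)), 0] = 0 := by
      have := (iteratedFDeriv ℝ 2 f x₀).map_coord_zero (i := 0) (m := ![0,0]) (by simp)
      simpa using this
    simpa [this] using hrpow
  · -- main case
    set g : ℝ → ℝ := fun s => f (x₀ + s • v) with hg
    have hgC : ContDiff ℝ 2 g :=
      hf.comp (contDiff_const.add (contDiff_id.smul contDiff_const))
    have hvpos : 0 < ‖v‖ := norm_pos_iff.mpr hv0
    set D2 : ℝ → ℝ := fun t => iteratedFDeriv ℝ 2 f (x₀ + t • v) ![v, v] with hD2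
    set g1 : ℝ → ℝ := fun t => fderiv ℝ f (x₀ + t • v) v with hg1
    have hmem : ∀ s : ℝ, s ∈ Set.Icc (0:ℝ) 1 → x₀ + s • v ∈ Metric.closedBall x₀ jmp := by
      intro s hs
      rw [Metric.mem_closedBall, dist_eq_norm, add_sub_cancel_left, norm_smul]
      have : |s| ≤ 1 := abs_le.mpr ⟨by linarith [hs.1], hs.2⟩
      calc ‖s‖ * ‖v‖ ≤ 1 * ‖v‖ := by
            apply mul_le_mul_of_nonneg_right _ (norm_nonneg v)
            simpa using this
        _ ≤ jmp := by rw [one_mul]; exact hv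
    have hx₀mem : x₀ ∈ Metric.closedBall x₀ jmp := Metric.mem_closedBall_self hj.le
    -- Hölder bound on D2 differences
    have hD2bd : ∀ s ∈ Set.Icc (0:ℝ) 1, |D2 s - D2 0| ≤ K * ‖v‖ ^ β * ‖v‖ ^ (2:ℕ) := by
      intro s hs
      have heq : D2 s - D2 0 =
          (iteratedFDeriv ℝ 2 f (x₀ + s • v) - iteratedFDeriv ℝ 2 f x₀) ![v, v] := by
        simp [hD2, ContinuousMultilinearMap.sub_apply]
      have h1 : |D2 s - D2 0| ≤
          ‖iteratedFDeriv ℝ 2 f (x₀ + s • v) - iteratedFDeriv ℝ 2 f x₀‖ * (‖v‖ * ‖v‖) := by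
        rw [heq]
        have := (iteratedFDeriv ℝ 2 f (x₀ + s • v) - iteratedFDeriv ℝ 2 f x₀).le_opNorm ![v, v]
        simpa [Fin.prod_univ_two, Real.norm_eq_abs] using this
      have h2 : ‖iteratedFDeriv ℝ 2 f (x₀ + s • v) - iteratedFDeriv ℝ 2 f x₀‖ ≤
          K * ‖v‖ ^ β := by
        have h3 := hHol (x₀ + s • v) x₀ (hmem s hs) hx₀mem
        have h4 : ‖x₀ + s • v - x₀‖ = |s| * ‖v‖ := by
          rw [add_sub_cancel_left, norm_smul, Real.norm_eq_abs]
        rw [h4] at h3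
        refine h3.trans (mul_le_mul_of_nonneg_left ?_ hK)
        apply Real.rpow_le_rpow (by positivity) _ hβ0.le
        calc |s| * ‖v‖ ≤ 1 * ‖v‖ := by
              apply mul_le_mul_of_nonneg_right _ (norm_nonneg v)
              exact abs_le.mpr ⟨by linarith [hs.1], hs.2⟩
          _ = ‖v‖ := one_mul _
      calc |D2 s - D2 0| ≤ ‖iteratedFDeriv ℝ 2 f (x₀ + s • v) - iteratedFDeriv ℝ 2 f x₀‖
            * (‖v‖ * ‖v‖) := h1
        _ ≤ (K * ‖v‖ ^ β) * (‖v‖ * ‖v‖) := by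
            apply mul_le_mul_of_nonneg_right h2 (by positivity)
        _ = K * ‖v‖ ^ β * ‖v‖ ^ (2:ℕ) := by ring
    set C1 : ℝ := K * ‖v‖ ^ β * ‖v‖ ^ (2:ℕ) with hC1
    have hC1nn : 0 ≤ C1 := by positivity
    -- G := g1 - t * D2 0 ; bound |g1 t - g1 0 - t * D2 0| ≤ C1 * t
    have hGbd : ∀ t ∈ Set.Icc (0:ℝ) 1, |g1 t - g1 0 - t * D2 0| ≤ C1 * t := by
      have hG : ∀ s ∈ Set.Icc (0:ℝ) 1,
          HasDerivWithinAt (fun u => g1 u - u * D2 0) (D2 s - D2 0) (Set.Icc (0:ℝ) 1) s := by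
        intro s _
        exact ((second_deriv_line hf x₀ v s).sub
          (by simpa using (hasDerivAt_id s).mul_const (D2 0))).hasDerivWithinAt
      have := norm_image_sub_le_of_norm_deriv_le_segment' hG
        (fun s hs => by
          simpa [Real.norm_eq_abs] using hD2bd s (Set.mem_Icc_of_Ico hs))
      intro t ht
      have h5 := this t ht
      have e : g1 t - t * D2 0 - g1 0 = g1 t - g1 0 - t * D2 0 := by ring
      rw [← e]
      simpa [Real.norm_eq_abs, zero_mul] using h5
    -- F := g t - g 0 - t * g1 0 - t^2/2 * D2 0
    set F : ℝ → ℝ := fun t => g t - g 0 - t * g1 0 - t^2/2 * D2 0 with hF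
    have hFderiv : ∀ t : ℝ, HasDerivAt F (g1 t - g1 0 - t * D2 0) t := by
      intro t
      have h6 : HasDerivAt (fun u : ℝ => u^2/2 * D2 0) (t * D2 0) t := by
        have := ((hasDerivAt_pow 2 t).div_const 2).mul_const (D2 0)
        refine this.congr_deriv ?_
        norm_num
      have h7 : HasDerivAt (fun u : ℝ => u * g1 0) (g1 0) t := by
        simpa using (hasDerivAt_id t).mul_const (g1 0)
      exact (((first_deriv_line hf x₀ v t).sub_const (g 0)).sub h7).sub h6
    have hFbd : ‖F 1 - F 0‖ ≤ C1 :=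
      norm_image_sub_le_of_norm_deriv_le_segment_01'
        (fun t ht => (hFderiv t).hasDerivWithinAt)
        (fun t ht => by
          have := hGbd t (Set.mem_Icc_of_Ico ht)
          have ht1 : t ≤ 1 := le_of_lt ht.2
          have : |g1 t - g1 0 - t * D2 0| ≤ C1 := le_trans this (by nlinarith)
          simpa [Real.norm_eq_abs] using this)
    have hF1 : F 1 - F 0 = f (x₀ + v) - f x₀ - fderiv ℝ f x₀ v
        - (1/2) * iteratedFDeriv ℝ 2 f x₀ ![v, v] := by
      simp only [hF, hg, hg1, hD2, one_smul, zero_smul, add_zero, one_pow]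
      ring
    rw [← hF1]
    refine le_trans (by simpa [Real.norm_eq_abs] using hFbd) ?_
    -- C1 ≤ K * jmp ^ (2+β)
    have h8 : ‖v‖ ^ β * ‖v‖ ^ (2:ℕ) = ‖v‖ ^ (2 + β) := by
      rw [← Real.rpow_natCast ‖v‖ 2, ← Real.rpow_add hvpos, add_comm]
      norm_num
    rw [hC1, mul_assoc, h8]
    apply mul_le_mul_of_nonneg_left _ hK
    exact Real.rpow_le_rpow (norm_nonneg v) hv (by positivity)


lemma clm2_expand (A : EuclideanSpace ℝ (Fin d) →L[ℝ] (EuclideanSpace ℝ (Fin d) →L[ℝ] ℝ))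
    (v w : EuclideanSpace ℝ (Fin d)) :
    A v w = ∑ i, ∑ j, (v i * w j) *
      A (EuclideanSpace.single i (1:ℝ)) (EuclideanSpace.single j (1:ℝ)) := by
  conv_lhs => rw [euclid_sum_single v]
  rw [map_sum, ContinuousLinearMap.sum_apply]
  apply Finset.sum_congr rfl
  intro i _
  rw [map_smul, ContinuousLinearMap.smul_apply, smul_eq_mul]
  conv_lhs => rw [euclid_sum_single w]
  rw [map_sum, Finset.mul_sum]
  apply Finset.sum_congr rfl
  intro j _
  rw [map_smul, smul_eq_mul]
  ring

lemma quad_expand (f : EuclideanSpace ℝ (Fin d) → ℝ)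
    (x₀ v : EuclideanSpace ℝ (Fin d)) :
    iteratedFDeriv ℝ 2 f x₀ ![v, v] = ∑ i, ∑ j, (v i * v j) * hessianEntry f x₀ i j := by
  have hh : ∀ i j, hessianEntry f x₀ i j =
      fderiv ℝ (fderiv ℝ f) x₀ (EuclideanSpace.single i 1) (EuclideanSpace.single j 1) := by
    intro i j
    rw [hessianEntry, iteratedFDeriv_two_apply]
    simp
  rw [iteratedFDeriv_two_apply]
  simp only [Matrix.cons_val_zero, Matrix.cons_val_one, Matrix.head_cons]
  rw [clm2_expand]
  exact Finset.sum_congr rfl fun i _ => Finset.sum_congr rfl fun j _ => by rw [hh]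

def taylorRem {d : ℕ} (Vh : EuclideanSpace ℝ (Fin d) → ℝ) (x' y : Zd d) : ℝ :=
  Vh (zToR y) - Vh (zToR x') - fderiv ℝ Vh (zToR x') (zToR y - zToR x')
    - (1/2) * iteratedFDeriv ℝ 2 Vh (zToR x') ![zToR y - zToR x', zToR y - zToR x']

def Wt {d : ℕ} (P : Zd d → Zd d → ℝ) (r : Zd d → ℝ) (t : ℕ) (x : Zd d) : ℝ :=
  ∑' y, mstep P t x y * r y

lemma pow_add_le {a b : ℝ} (ha : 0 ≤ a) (hb : 0 ≤ b) (q : ℕ) :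
    (a + b) ^ q ≤ 2 ^ q * (a ^ q + b ^ q) := by
  have h1 : a + b ≤ 2 * max a b := by
    rcases le_total a b with h | h
    · rw [max_eq_right h]; linarith
    · rw [max_eq_left h]; linarith
  calc (a+b)^q ≤ (2 * max a b)^q := pow_le_pow_left₀ (by linarith) h1 q
    _ = 2^q * (max a b)^q := mul_pow 2 _ q
    _ ≤ 2^q * (a^q + b^q) := by
        apply mul_le_mul_of_nonneg_left _ (by positivity)
        rcases le_total a b with h | h
        · rw [max_eq_right h]; nlinarith [pow_nonneg ha q]
        · rw [max_eq_left h]; nlinarith [pow_nonneg hb q]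

section more
variable {P : Zd d → Zd d → ℝ} {jmp : ℝ}
variable (hP0 : ∀ x y, 0 ≤ P x y) (hPsum : ∀ x, HasSum (P x) 1)
  (hjump : ∀ x y, jmp < ‖zToR y - zToR x‖ → P x y = 0)

include hP0 hPsum hjump in
lemma mstep_sum_one (hj0 : 0 ≤ jmp) {t : ℕ} {x : Zd d} {s : Finset (Zd d)}
    (hs : ∀ y, ‖zToR y - zToR x‖ ≤ t * jmp → y ∈ s) :
    ∑ y ∈ s, mstep P t x y = 1 := by
  have h1 := mstep_eq_sum hjump hs 1
  simp only [Pi.one_apply, mul_one] at h1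
  rw [← h1, (mstep_hasSum hP0 hPsum hjump hj0 t x).tsum_eq]

include hjump in
lemma sigma_finsum {x' : Zd d} {c : ℝ} {g : Zd d → ℝ}
    (hσ : HasSum (fun y => P x' y * g y) c) :
    c = ∑ y ∈ latticeBall x' jmp, P x' y * g y := by
  rw [← hσ.tsum_eq, P_eq_sum hjump (fun y hy => mem_latticeBall hy) g]

include hjump in
lemma mu_finsum {x' : Zd d} {m : EuclideanSpace ℝ (Fin d)}
    (hμ : ∀ i, HasSum (fun y => P x' y * (zToR y - zToR x') i) (m i)) :
    m = ∑ y ∈ latticeBall x' jmp, P x' y • (zToR y - zToR x') := by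
  ext i
  have h1 : (∑ y ∈ latticeBall x' jmp, P x' y • (zToR y - zToR x')) i
      = ∑ y ∈ latticeBall x' jmp, P x' y * (zToR y - zToR x') i := by
    rw [WithLp.ofLp_sum, Finset.sum_apply i (latticeBall x' jmp) (fun y => (P x' y • (zToR y - zToR x')).ofLp)]
    exact Finset.sum_congr rfl fun y _ => by simp
  rw [h1]
  exact sigma_finsum hjump (hμ i)

include hP0 hPsum hjump in
lemma one_step {Vh : EuclideanSpace ℝ (Fin d) → ℝ}
    {x' : Zd d} {m : EuclideanSpace ℝ (Fin d)} {S : Matrix (Fin d) (Fin d) ℝ}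
    (hμx : ∀ i, HasSum (fun y => P x' y * (zToR y - zToR x') i) (m i))
    (hσx : ∀ i j, HasSum
      (fun y => P x' y * ((zToR y - zToR x') i * (zToR y - zToR x') j)) (S i j)) :
    ∑' y, P x' y * Vh (zToR y)
      = Vh (zToR x') + fderiv ℝ Vh (zToR x') m
        + (1/2) * (∑ i, ∑ j, S i j * hessianEntry Vh (zToR x') i j)
        + ∑' y, P x' y * taylorRem Vh x' y := by
  set s := latticeBall x' jmp with hsdef
  have hmem : ∀ y, ‖zToR y - zToR x'‖ ≤ jmp → y ∈ s := fun y hy => mem_latticeBall hy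
  rw [P_eq_sum hjump hmem (fun y => Vh (zToR y)), P_eq_sum hjump hmem (taylorRem Vh x')]
  have hpt : ∀ y ∈ s, P x' y * Vh (zToR y)
      = P x' y * Vh (zToR x')
        + P x' y * (fderiv ℝ Vh (zToR x') (zToR y - zToR x'))
        + P x' y * ((1/2) * ∑ i, ∑ j, ((zToR y - zToR x') i * (zToR y - zToR x') j)
            * hessianEntry Vh (zToR x') i j)
        + P x' y * taylorRem Vh x' y := by
    intro y _
    rw [← quad_expand Vh (zToR x') (zToR y - zToR x'), taylorRem]
    ring
  have hA : ∑ y ∈ s, P x' y * Vh (zToR x') = Vh (zToR x') := by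
    rw [← Finset.sum_mul, P_sum_one hP0 hPsum hjump hmem, one_mul]
  have hB : ∑ y ∈ s, P x' y * (fderiv ℝ Vh (zToR x') (zToR y - zToR x'))
      = fderiv ℝ Vh (zToR x') m := by
    rw [mu_finsum hjump hμx, map_sum]
    exact Finset.sum_congr rfl fun y _ => by rw [map_smul, smul_eq_mul]
  have hC : ∑ y ∈ s, P x' y * ((1/2) * ∑ i, ∑ j,
        ((zToR y - zToR x') i * (zToR y - zToR x') j) * hessianEntry Vh (zToR x') i j)
      = (1/2) * (∑ i, ∑ j, S i j * hessianEntry Vh (zToR x') i j) := by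
    have h2 : ∀ y ∈ s, P x' y * ((1/2) * ∑ i, ∑ j,
          ((zToR y - zToR x') i * (zToR y - zToR x') j) * hessianEntry Vh (zToR x') i j)
        = ∑ i, ∑ j, (1/2) * hessianEntry Vh (zToR x') i j
            * (P x' y * ((zToR y - zToR x') i * (zToR y - zToR x') j)) := by
      intro y _
      simp only [Finset.mul_sum]
      exact Finset.sum_congr rfl fun i _ => Finset.sum_congr rfl fun j _ => by ring
    rw [Finset.sum_congr rfl h2, Finset.sum_comm, Finset.mul_sum]
    apply Finset.sum_congr rfl
    intro i _
    rw [Finset.sum_comm, Finset.mul_sum]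
    apply Finset.sum_congr rfl
    intro j _
    rw [← Finset.mul_sum, ← sigma_finsum hjump (hσx i j)]
    ring
  rw [Finset.sum_congr rfl hpt, Finset.sum_add_distrib, Finset.sum_add_distrib,
    Finset.sum_add_distrib, hA, hB, hC]

include hP0 hPsum hjump in
lemma Wt_bound (hj0 : 0 ≤ jmp) {r : Zd d → ℝ} {Γ : ℝ} {q : ℕ} (hΓ : 0 < Γ)
    (hr : ∀ x, |r x| ≤ Γ * (1 + ‖zToR x‖ ^ q)) (t : ℕ) (x : Zd d) :
    |Wt P r t x| ≤ Γ * (1 + (‖zToR x‖ + t * jmp) ^ q) := by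
  set s := latticeBall x (t * jmp) with hsdef
  have hmem : ∀ y, ‖zToR y - zToR x‖ ≤ t*jmp → y ∈ s := fun y hy => mem_latticeBall hy
  rw [Wt, mstep_eq_sum hjump hmem r]
  have hbase : 0 ≤ ‖zToR x‖ + t * jmp :=
    add_nonneg (norm_nonneg _) (mul_nonneg t.cast_nonneg hj0)
  set C := Γ * (1 + (‖zToR x‖ + t * jmp) ^ q) with hC
  have hC0 : 0 ≤ C := mul_nonneg hΓ.le (by positivity)
  calc |∑ y ∈ s, mstep P t x y * r y| ≤ ∑ y ∈ s, |mstep P t x y * r y| :=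
        Finset.abs_sum_le_sum_abs _ _
    _ ≤ ∑ y ∈ s, mstep P t x y * C := by
        apply Finset.sum_le_sum
        intro y _
        rw [abs_mul, abs_of_nonneg (mstep_nonneg hP0 hjump t x y)]
        by_cases hy : mstep P t x y = 0
        · rw [hy, zero_mul, zero_mul]
        · apply mul_le_mul_of_nonneg_left _ (mstep_nonneg hP0 hjump t x y)
          have hyx : ‖zToR y - zToR x‖ ≤ t * jmp := by
            by_contra hc
            exact hy (mstep_supp hjump t x y (not_le.mp hc))
          have hny : ‖zToR y‖ ≤ ‖zToR x‖ + t * jmp := by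
            have h5 := norm_sub_norm_le (zToR y) (zToR x)
            linarith
          refine (hr y).trans ?_
          rw [hC]
          apply mul_le_mul_of_nonneg_left _ hΓ.le
          have h6 := pow_le_pow_left₀ (norm_nonneg (zToR y)) hny q
          linarith
    _ = C := by rw [← Finset.sum_mul, mstep_sum_one hP0 hPsum hjump hj0 hmem, one_mul]

include hP0 hPsum hjump in
lemma summable_aWt {α : ℝ} (hα0 : 0 < α) (hα1 : α < 1) (hj0 : 0 ≤ jmp)
    {r : Zd d → ℝ} {Γ : ℝ} {q : ℕ} (hΓ : 0 < Γ)
    (hr : ∀ x, |r x| ≤ Γ * (1 + ‖zToR x‖ ^ q)) (y : Zd d) :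
    Summable (fun t : ℕ => α ^ t * Wt P r t y) := by
  set a := ‖zToR y‖ with ha
  have ha0 : 0 ≤ a := norm_nonneg _
  have hmaj : Summable (fun t : ℕ =>
      (Γ * (1 + 2^q * a^q)) * α ^ t + (Γ * 2^q * jmp^q) * ((t:ℝ)^q * α ^ t)) := by
    apply Summable.add
    · exact (summable_geometric_of_lt_one hα0.le hα1).mul_left _
    · refine Summable.mul_left _ ?_
      have := summable_pow_mul_geometric_of_norm_lt_one (R := ℝ) q
        (r := α) (by rw [Real.norm_eq_abs, abs_of_pos hα0]; exact hα1)
      simpa using this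
  apply Summable.of_norm_bounded hmaj
  intro t
  rw [Real.norm_eq_abs, abs_mul, abs_of_pos (pow_pos hα0 t)]
  have hWb := Wt_bound hP0 hPsum hjump hj0 hΓ hr t y
  rw [← ha] at hWb
  have hbk : (1 + (a + t * jmp)^q) ≤ 1 + 2^q * a^q + 2^q * jmp^q * (t:ℝ)^q := by
    have h7 : (a + t * jmp)^q ≤ 2^q * (a^q + ((t:ℝ) * jmp)^q) :=
      pow_add_le ha0 (mul_nonneg t.cast_nonneg hj0) q
    have h8 : ((t:ℝ) * jmp)^q = (t:ℝ)^q * jmp^q := mul_pow _ _ _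
    calc 1 + (a + t*jmp)^q ≤ 1 + 2^q * (a^q + ((t:ℝ)*jmp)^q) := by linarith
      _ = 1 + 2^q*a^q + 2^q*jmp^q*(t:ℝ)^q := by rw [h8]; ring
  have h9 : |Wt P r t y| ≤ Γ * (1 + 2^q * a^q + 2^q * jmp^q * (t:ℝ)^q) :=
    hWb.trans (mul_le_mul_of_nonneg_left hbk hΓ.le)
  have h10 : (0:ℝ) < α ^ t := pow_pos hα0 t
  calc α^t * |Wt P r t y| ≤ α^t * (Γ * (1 + 2^q*a^q + 2^q*jmp^q*(t:ℝ)^q)) :=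
        mul_le_mul_of_nonneg_left h9 h10.le
    _ = Γ * (1 + 2^q * a^q) * α^t + Γ * 2^q * jmp^q * ((t:ℝ)^q * α^t) := by ring

include hP0 hPsum hjump in
lemma V_poly_bound {α : ℝ} (hα0 : 0 < α) (hα1 : α < 1) (hj0 : 0 ≤ jmp)
    {r : Zd d → ℝ} {Γ : ℝ} {q : ℕ} (hΓ : 0 < Γ)
    (hr : ∀ x, |r x| ≤ Γ * (1 + ‖zToR x‖ ^ q))
    {V : Zd d → ℝ} (hV : ∀ x, V x = ∑' t : ℕ, α ^ t * Wt P r t x) :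
    ∃ c1 c2 : ℝ, 0 ≤ c1 ∧ 0 ≤ c2 ∧ ∀ y, |V y| ≤ c1 + c2 * ‖zToR y‖ ^ q := by
  set Sg := ∑' t : ℕ, α ^ t with hSg
  set Sq := ∑' t : ℕ, (t:ℝ)^q * α ^ t with hSq
  have hsg : Summable (fun t : ℕ => α ^ t) := summable_geometric_of_lt_one hα0.le hα1
  have hsq : Summable (fun t : ℕ => (t:ℝ)^q * α ^ t) := by
    have := summable_pow_mul_geometric_of_norm_lt_one (R := ℝ) q
      (r := α) (by rw [Real.norm_eq_abs, abs_of_pos hα0]; exact hα1)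
    simpa using this
  have hSg0 : 0 ≤ Sg := tsum_nonneg fun t => (pow_pos hα0 t).le
  have hSq0 : 0 ≤ Sq := tsum_nonneg fun t => mul_nonneg (by positivity) (pow_pos hα0 t).le
  refine ⟨Γ * Sg + Γ * 2^q * jmp^q * Sq, Γ * 2^q * Sg, by positivity, by positivity, ?_⟩
  intro y
  set a := ‖zToR y‖ with ha
  have ha0 : 0 ≤ a := norm_nonneg _
  set u : ℕ → ℝ := fun t =>
    (Γ * (1 + 2^q * a^q)) * α ^ t + (Γ * 2^q * jmp^q) * ((t:ℝ)^q * α ^ t) with hu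
  have hub : ∀ t, ‖α ^ t * Wt P r t y‖ ≤ u t := by
    intro t
    rw [Real.norm_eq_abs, abs_mul, abs_of_pos (pow_pos hα0 t)]
    have hWb := Wt_bound hP0 hPsum hjump hj0 hΓ hr t y
    rw [← ha] at hWb
    have hbk : (1 + (a + t * jmp)^q) ≤ 1 + 2^q * a^q + 2^q * jmp^q * (t:ℝ)^q := by
      have h7 : (a + t * jmp)^q ≤ 2^q * (a^q + ((t:ℝ) * jmp)^q) :=
        pow_add_le ha0 (mul_nonneg t.cast_nonneg hj0) q
      have h8 : ((t:ℝ) * jmp)^q = (t:ℝ)^q * jmp^q := mul_pow _ _ _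
      calc 1 + (a + t*jmp)^q ≤ 1 + 2^q * (a^q + ((t:ℝ)*jmp)^q) := by linarith
        _ = 1 + 2^q*a^q + 2^q*jmp^q*(t:ℝ)^q := by rw [h8]; ring
    have h9 : |Wt P r t y| ≤ Γ * (1 + 2^q * a^q + 2^q * jmp^q * (t:ℝ)^q) :=
      hWb.trans (mul_le_mul_of_nonneg_left hbk hΓ.le)
    have h10 : (0:ℝ) < α ^ t := pow_pos hα0 t
    calc α^t * |Wt P r t y| ≤ α^t * (Γ * (1 + 2^q*a^q + 2^q*jmp^q*(t:ℝ)^q)) :=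
          mul_le_mul_of_nonneg_left h9 h10.le
      _ = Γ * (1 + 2^q * a^q) * α^t + Γ * 2^q * jmp^q * ((t:ℝ)^q * α^t) := by ring
  have husum : Summable u := by
    apply Summable.add
    · exact hsg.mul_left _
    · exact hsq.mul_left _
  have hfs : Summable (fun t : ℕ => α ^ t * Wt P r t y) :=
    summable_aWt hP0 hPsum hjump hα0 hα1 hj0 hΓ hr y
  have h11 : |V y| ≤ ∑' t, u t := by
    rw [hV y]
    refine le_trans ?_ (Summable.tsum_le_tsum hub hfs.abs husum)
    exact (norm_tsum_le_tsum_norm hfs.norm).trans_eq (by simp [Real.norm_eq_abs])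
  refine h11.trans ?_
  rw [hu, Summable.tsum_add (hsg.mul_left _) (hsq.mul_left _), tsum_mul_left, tsum_mul_left,
    ← hSg, ← hSq]
  nlinarith [hSg0, hSq0, pow_nonneg ha0 q]

include hP0 hPsum hjump in
lemma V_bellman {α : ℝ} (hα0 : 0 < α) (hα1 : α < 1) (hj0 : 0 ≤ jmp)
    {r : Zd d → ℝ} {Γ : ℝ} {q : ℕ} (hΓ : 0 < Γ)
    (hr : ∀ x, |r x| ≤ Γ * (1 + ‖zToR x‖ ^ q))
    {V : Zd d → ℝ} (hV : ∀ x, V x = ∑' t : ℕ, α ^ t * Wt P r t x) (x' : Zd d) :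
    V x' = r x' + α * ∑' z, P x' z * V z := by
  have hsum : ∀ y, Summable (fun t : ℕ => α ^ t * Wt P r t y) :=
    summable_aWt hP0 hPsum hjump hα0 hα1 hj0 hΓ hr
  set s := latticeBall x' jmp with hsdef
  have hmem : ∀ z, ‖zToR z - zToR x'‖ ≤ jmp → z ∈ s := fun z hz => mem_latticeBall hz
  have hW0 : Wt P r 0 x' = r x' := by
    rw [Wt, tsum_eq_single x' (fun z hz => by simp [mstep, hz])]
    simp [mstep]
  have hWs : ∀ t : ℕ, Wt P r (t+1) x' = ∑ z ∈ s, P x' z * Wt P r t z := by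
    intro t
    set S' := latticeBall x' (((t:ℝ)+1) * jmp) with hS'def
    have h1 : Wt P r (t+1) x' = ∑ y ∈ S', mstep P (t+1) x' y * r y := by
      rw [Wt]
      exact tsum_eq_sum fun y hy => by
        rw [mstep_supp hjump (t+1) x' y (by push_cast; exact notmem_norm hy), zero_mul]
    rw [h1]
    have h2 : ∀ y ∈ S', mstep P (t+1) x' y * r y
        = ∑ z ∈ s, P x' z * mstep P t z y * r y := by
      intro y _
      rw [mstep_fs hjump t x' y,
        tsum_eq_sum (s := s) fun z hz => by rw [hjump x' z (notmem_norm hz), zero_mul],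
        Finset.sum_mul]
    rw [Finset.sum_congr rfl h2, Finset.sum_comm]
    apply Finset.sum_congr rfl
    intro z _
    by_cases hz : P x' z = 0
    · simp [hz]
    · have hzx : ‖zToR z - zToR x'‖ ≤ jmp := by
        by_contra hc
        exact hz (hjump x' z (not_le.mp hc))
      have h3 : Wt P r t z = ∑ y ∈ S', mstep P t z y * r y := by
        rw [Wt]
        refine tsum_eq_sum fun y hy => ?_
        rw [mstep_supp hjump t z y ?_, zero_mul]
        have hn := notmem_norm hy
        have h4 := norm_sub_le_norm_sub_add_norm_sub (zToR y) (zToR z) (zToR x')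
        nlinarith
      rw [h3, Finset.mul_sum]
      exact Finset.sum_congr rfl fun y _ => by ring
  rw [hV x', Summable.tsum_eq_zero_add (hsum x'), pow_zero, one_mul, hW0]
  congr 1
  calc ∑' t:ℕ, α^(t+1) * Wt P r (t+1) x'
      = ∑' t:ℕ, ∑ z ∈ s, α * (P x' z * (α^t * Wt P r t z)) := by
        apply tsum_congr
        intro t
        rw [hWs t, Finset.mul_sum]
        exact Finset.sum_congr rfl fun z _ => by rw [pow_succ]; ring
    _ = ∑ z ∈ s, ∑' t:ℕ, α * (P x' z * (α^t * Wt P r t z)) :=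
        Summable.tsum_finsetSum fun z _ => ((hsum z).mul_left _).mul_left _
    _ = ∑ z ∈ s, α * (P x' z * V z) := by
        apply Finset.sum_congr rfl
        intro z _
        rw [tsum_mul_left, tsum_mul_left, ← hV z]
    _ = α * ∑ z ∈ s, P x' z * V z := by rw [Finset.mul_sum]
    _ = α * ∑' z, P x' z * V z := by rw [← P_eq_sum hjump hmem V]

end more

lemma hessHolder_bound {β : ℝ} (hβ0 : 0 < β) {Vh : EuclideanSpace ℝ (Fin d) → ℝ}
    {x₀ : EuclideanSpace ℝ (Fin d)} {jmp : ℝ}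
    (hfin : hessHolder β Vh (Metric.closedBall x₀ jmp) ≠ ⊤) :
    ∀ y z, y ∈ Metric.closedBall x₀ jmp → z ∈ Metric.closedBall x₀ jmp →
      ‖iteratedFDeriv ℝ 2 Vh y - iteratedFDeriv ℝ 2 Vh z‖
        ≤ (hessHolder β Vh (Metric.closedBall x₀ jmp)).toReal * ‖y - z‖ ^ β := by
  intro y z hy hz
  by_cases hyz : y = z
  · subst hyz
    simp [Real.zero_rpow hβ0.ne']
  · have hle : ENNReal.ofReal
        (‖iteratedFDeriv ℝ 2 Vh y - iteratedFDeriv ℝ 2 Vh z‖ / ‖y - z‖ ^ β)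
        ≤ hessHolder β Vh (Metric.closedBall x₀ jmp) := by
      rw [hessHolder]
      exact le_iSup_of_le ⟨y, hy⟩ (le_iSup_of_le ⟨z, hz⟩ (le_iSup_of_le hyz le_rfl))
    have h1 := ENNReal.toReal_mono hfin hle
    have hd0 : 0 ≤ ‖iteratedFDeriv ℝ 2 Vh y - iteratedFDeriv ℝ 2 Vh z‖ / ‖y - z‖ ^ β := by
      positivity
    rw [ENNReal.toReal_ofReal hd0] at h1
    have hpos : 0 < ‖y - z‖ ^ β :=
      Real.rpow_pos_of_pos (norm_pos_iff.mpr (sub_ne_zero.mpr hyz)) β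
    calc ‖iteratedFDeriv ℝ 2 Vh y - iteratedFDeriv ℝ 2 Vh z‖
        = (‖iteratedFDeriv ℝ 2 Vh y - iteratedFDeriv ℝ 2 Vh z‖ / ‖y - z‖ ^ β)
          * ‖y - z‖ ^ β := by field_simp
      _ ≤ _ := mul_le_mul_of_nonneg_right h1 hpos.le

end Tay

open Tay

theorem tayloring_performance_bound
    (d : ℕ) (hd : 1 ≤ d) (α β jmp : ℝ)
    (hα0 : 0 < α) (hα1 : α < 1) (hβ0 : 0 < β) (hβ1 : β ≤ 1) (hjmp : 1 ≤ jmp)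
    (P : Zd d → Zd d → ℝ)
    (hP0 : ∀ x y, 0 ≤ P x y) (hP1 : ∀ x y, P x y ≤ 1)
    (hPsum : ∀ x, HasSum (P x) 1)
    (hjump : ∀ x y, jmp < ‖zToR y - zToR x‖ → P x y = 0)
    (μ : Zd d → EuclideanSpace ℝ (Fin d))
    (σ2 : Zd d → Matrix (Fin d) (Fin d) ℝ)
    (hμ : ∀ x i, HasSum (fun y => P x y * (zToR y - zToR x) i) (μ x i))
    (hσ2 : ∀ x i j,
      HasSum (fun y => P x y * ((zToR y - zToR x) i * (zToR y - zToR x) j)) (σ2 x i j))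
    (r : Zd d → ℝ) (Γ : ℝ) (hΓ : 0 < Γ) (q : ℕ)
    (hr : ∀ x, |r x| ≤ Γ * (1 + ‖zToR x‖ ^ q))
    (V : Zd d → ℝ)
    (hV : ∀ x, V x = ∑' t : ℕ, α ^ t * ∑' y : Zd d, mstep P t x y * r y)
    (Vh : EuclideanSpace ℝ (Fin d) → ℝ)
    (hVhC2 : ContDiff ℝ 2 Vh)
    (hVhbd : ∀ x : EuclideanSpace ℝ (Fin d), |Vh x| ≤ Γ * (1 + ‖x‖ ^ q))
    (hTCP : ∀ x : Zd d,
      0 = r x + α * (fderiv ℝ Vh (zToR x) (μ x) +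
          (1 / 2) * ∑ i, ∑ j, σ2 x i j * hessianEntry Vh (zToR x) i j) -
        (1 - α) * Vh (zToR x))
    (x : Zd d) :
    ENNReal.ofReal |Vh (zToR x) - V x| ≤
      ENNReal.ofReal (jmp ^ (2 + β)) *
        ∑' t : ℕ, ENNReal.ofReal (α ^ t) *
          ∑' y : Zd d, ENNReal.ofReal (mstep P t x y) *
            hessHolder β Vh (Metric.closedBall (zToR y) jmp) := by
  classical
  have hj0 : (0:ℝ) ≤ jmp := le_trans zero_le_one hjmp
  have hjpos : (0:ℝ) < jmp := lt_of_lt_of_le one_pos hjmp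
  have hjb : (0:ℝ) < jmp ^ (2+β) := Real.rpow_pos_of_pos hjpos _
  set H : Zd d → ℝ≥0∞ := fun y => hessHolder β Vh (Metric.closedBall (zToR y) jmp) with hHdef
  set G : ℕ → ℝ≥0∞ := fun t => ∑' y : Zd d, ENNReal.ofReal (mstep P t x y) * H y with hGdef
  set Sig : ℝ≥0∞ := ∑' t : ℕ, ENNReal.ofReal (α ^ t) * G t with hSigdef
  by_cases htop : Sig = ⊤
  · rw [htop, ENNReal.mul_top (by simp only [ne_eq, ENNReal.ofReal_eq_zero, not_le]; exact hjb)]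
    exact le_top
  -- finiteness of Hölder constants at reachable points
  have hHfin : ∀ t y, mstep P t x y ≠ 0 → H y ≠ ⊤ := by
    intro t y hm hHy
    have h1 : ENNReal.ofReal (mstep P t x y) * H y ≤ G t := ENNReal.le_tsum y
    have hmpos : 0 < mstep P t x y :=
      lt_of_le_of_ne (mstep_nonneg hP0 hjump t x y) (Ne.symm hm)
    rw [hHy, ENNReal.mul_top (by simp only [ne_eq, ENNReal.ofReal_eq_zero, not_le]; exact hmpos)]
      at h1
    have hGt : G t = ⊤ := top_le_iff.mp h1
    have h2 : ENNReal.ofReal (α ^ t) * G t ≤ Sig := ENNReal.le_tsum t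
    rw [hGt, ENNReal.mul_top
      (by simp only [ne_eq, ENNReal.ofReal_eq_zero, not_le]; exact pow_pos hα0 t)] at h2
    exact htop (top_le_iff.mp h2)
  set e : Zd d → ℝ := fun y => Vh (zToR y) - V y with hedef
  have he' : ∀ y, e y = Vh (zToR y) - V y := fun _ => rfl
  set h : Zd d → ℝ := fun y => (H y).toReal with hhdef
  have hh0 : ∀ y, 0 ≤ h y := fun y => ENNReal.toReal_nonneg
  set A : ℕ → ℝ := fun T => ∑' y, mstep P T x y * |e y| with hAdef
  set Bq : ℕ → ℝ := fun T => ∑' y, mstep P T x y * h y with hBdef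
  have hA0nn : ∀ T, 0 ≤ A T := fun T =>
    tsum_nonneg fun y => mul_nonneg (mstep_nonneg hP0 hjump T x y) (abs_nonneg _)
  have hBq0 : ∀ T, 0 ≤ Bq T := fun T =>
    tsum_nonneg fun y => mul_nonneg (mstep_nonneg hP0 hjump T x y) (hh0 y)
  have hVW : ∀ x', V x' = ∑' t : ℕ, α ^ t * Wt P r t x' := hV
  -- pointwise recursion
  have hrecpt : ∀ y, H y ≠ ⊤ →
      |e y| ≤ α * (∑' z, P y z * |e z|) + α * jmp^(2+β) * h y := by
    intro y hfin
    have hbell := V_bellman hP0 hPsum hjump hα0 hα1 hj0 hΓ hr hVW y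
    have hos := one_step hP0 hPsum hjump (hμ y) (hσ2 y) (Vh := Vh)
    set s := latticeBall y jmp with hsdef
    have hmem : ∀ z, ‖zToR z - zToR y‖ ≤ jmp → z ∈ s := fun z hz => mem_latticeBall hz
    have h1 : ∑' z, P y z * Vh (zToR z) = ∑ z ∈ s, P y z * Vh (zToR z) :=
      P_eq_sum hjump hmem _
    have h2 : ∑' z, P y z * taylorRem Vh y z = ∑ z ∈ s, P y z * taylorRem Vh y z :=
      P_eq_sum hjump hmem _
    have h3 : ∑' z, P y z * V z = ∑ z ∈ s, P y z * V z := P_eq_sum hjump hmem V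
    rw [h1, h2] at hos
    have hVy : V y = r y + α * ∑ z ∈ s, P y z * V z := by rw [hbell, h3]
    have hsplit : ∑ z ∈ s, P y z * e z
        = ∑ z ∈ s, P y z * Vh (zToR z) - ∑ z ∈ s, P y z * V z := by
      rw [← Finset.sum_sub_distrib]
      exact Finset.sum_congr rfl fun z _ => by rw [he' z]; ring
    have key : e y = α * (∑ z ∈ s, P y z * e z)
        - α * (∑ z ∈ s, P y z * taylorRem Vh y z) := by
      rw [he' y, hsplit]
      linear_combination (-1 : ℝ) * hVy + hTCP y - α * hos
    -- remainder bound
    have hrem : ∀ z ∈ s, P y z * |taylorRem Vh y z| ≤ P y z * (h y * jmp^(2+β)) := by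
      intro z _
      by_cases hz : P y z = 0
      · rw [hz, zero_mul, zero_mul]
      · apply mul_le_mul_of_nonneg_left _ (hP0 y z)
        have hzy : ‖zToR z - zToR y‖ ≤ jmp := by
          by_contra hc
          exact hz (hjump y z (not_le.mp hc))
        have htb := taylor_bound hVhC2 hβ0 hβ1 (hh0 y) hjpos
          (v := zToR z - zToR y) (x₀ := zToR y) hzy
          (hessHolder_bound hβ0 hfin)
        rw [show zToR y + (zToR z - zToR y) = zToR z from by abel] at htb
        simpa [taylorRem] using htb
    have hS1 : |∑ z ∈ s, P y z * e z| ≤ ∑ z ∈ s, P y z * |e z| := by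
      refine (Finset.abs_sum_le_sum_abs _ _).trans ?_
      refine Finset.sum_le_sum fun z _ => ?_
      rw [abs_mul, abs_of_nonneg (hP0 y z)]
    have hS2 : |∑ z ∈ s, P y z * taylorRem Vh y z| ≤ h y * jmp^(2+β) := by
      refine (Finset.abs_sum_le_sum_abs _ _).trans ?_
      have h6 : ∑ z ∈ s, |P y z * taylorRem Vh y z| ≤ ∑ z ∈ s, P y z * (h y * jmp^(2+β)) := by
        refine Finset.sum_le_sum fun z hz => ?_
        rw [abs_mul, abs_of_nonneg (hP0 y z)]
        exact hrem z hz
      refine h6.trans ?_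
      rw [← Finset.sum_mul, P_sum_one hP0 hPsum hjump hmem, one_mul]
    have h7 : ∑' z, P y z * |e z| = ∑ z ∈ s, P y z * |e z| := P_eq_sum hjump hmem _
    rw [key, h7]
    calc |α * (∑ z ∈ s, P y z * e z) - α * (∑ z ∈ s, P y z * taylorRem Vh y z)|
        ≤ |α * (∑ z ∈ s, P y z * e z)| + |α * (∑ z ∈ s, P y z * taylorRem Vh y z)| :=
          abs_sub _ _
      _ = α * |∑ z ∈ s, P y z * e z| + α * |∑ z ∈ s, P y z * taylorRem Vh y z| := by
          rw [abs_mul, abs_mul, abs_of_pos hα0]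
      _ ≤ α * (∑ z ∈ s, P y z * |e z|) + α * (h y * jmp^(2+β)) := by
          have := mul_le_mul_of_nonneg_left hS1 hα0.le
          have := mul_le_mul_of_nonneg_left hS2 hα0.le
          linarith
      _ = α * (∑ z ∈ s, P y z * |e z|) + α * jmp^(2+β) * h y := by ring
  -- A recursion
  have hArec : ∀ T : ℕ, A T ≤ α * A (T+1) + α * jmp^(2+β) * Bq T := by
    intro T
    have hmemT : ∀ y, ‖zToR y - zToR x‖ ≤ (T:ℝ) * jmp → y ∈ latticeBall x ((T:ℝ) * jmp) :=
      fun y hy => mem_latticeBall hy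
    have hAT : A T = ∑ y ∈ latticeBall x ((T:ℝ) * jmp), mstep P T x y * |e y| :=
      mstep_eq_sum hjump hmemT _
    have hBT : Bq T = ∑ y ∈ latticeBall x ((T:ℝ) * jmp), mstep P T x y * h y :=
      mstep_eq_sum hjump hmemT _
    have hAT1 : A (T+1) = ∑ y ∈ latticeBall x ((T:ℝ) * jmp),
        mstep P T x y * ∑' z, P y z * |e z| := by
      have h1 : A (T+1) = ∑ w ∈ latticeBall x (((T:ℝ)+1) * jmp), mstep P (T+1) x w * |e w| :=
        tsum_eq_sum fun w hw => by
          rw [mstep_supp hjump (T+1) x w (by push_cast; exact notmem_norm hw), zero_mul]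
      rw [h1]
      have h2 : ∀ w ∈ latticeBall x (((T:ℝ)+1) * jmp), mstep P (T+1) x w * |e w|
          = ∑ y ∈ latticeBall x ((T:ℝ) * jmp), mstep P T x y * P y w * |e w| := by
        intro w _
        rw [show mstep P (T+1) x w = ∑' y, mstep P T x y * P y w from rfl,
          tsum_eq_sum (s := latticeBall x ((T:ℝ) * jmp)) fun y hy => by
            rw [mstep_supp hjump T x y (notmem_norm hy), zero_mul],
          Finset.sum_mul]
      rw [Finset.sum_congr rfl h2, Finset.sum_comm]
      apply Finset.sum_congr rfl
      intro y _
      by_cases hy : mstep P T x y = 0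
      · simp [hy]
      · have hyx : ‖zToR y - zToR x‖ ≤ (T:ℝ) * jmp := by
          by_contra hc
          exact hy (mstep_supp hjump T x y (not_le.mp hc))
        have h3 : ∑' z, P y z * |e z|
            = ∑ w ∈ latticeBall x (((T:ℝ)+1) * jmp), P y w * |e w| := by
          refine tsum_eq_sum fun w hw => ?_
          rw [hjump y w ?_, zero_mul]
          have hn := notmem_norm hw
          have h4 := norm_sub_le_norm_sub_add_norm_sub (zToR w) (zToR y) (zToR x)
          nlinarith
        rw [h3, Finset.mul_sum]
        exact Finset.sum_congr rfl fun w _ => by ring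
    rw [hAT, hAT1, hBT, Finset.mul_sum, Finset.mul_sum, ← Finset.sum_add_distrib]
    apply Finset.sum_le_sum
    intro y _
    by_cases hy : mstep P T x y = 0
    · simp [hy]
    · have hfiny := hHfin T y hy
      have hpt := hrecpt y hfiny
      calc mstep P T x y * |e y|
          ≤ mstep P T x y * (α * (∑' z, P y z * |e z|) + α * jmp^(2+β) * h y) :=
            mul_le_mul_of_nonneg_left hpt (mstep_nonneg hP0 hjump T x y)
        _ = α * (mstep P T x y * ∑' z, P y z * |e z|)
            + α * jmp^(2+β) * (mstep P T x y * h y) := by ring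
  -- iteration
  have hiter : ∀ T : ℕ, A 0 ≤ α^T * A T
      + jmp^(2+β) * ∑ t ∈ Finset.range T, α^(t+1) * Bq t := by
    intro T
    induction T with
    | zero => simp
    | succ T ih =>
      refine ih.trans ?_
      rw [Finset.sum_range_succ]
      have h1 : α^T * A T ≤ α^T * (α * A (T+1) + α * jmp^(2+β) * Bq T) :=
        mul_le_mul_of_nonneg_left (hArec T) (pow_nonneg hα0.le T)
      have h2 : α^T * (α * A (T+1) + α * jmp^(2+β) * Bq T)
          = α^(T+1) * A (T+1) + jmp^(2+β) * (α^(T+1) * Bq T) := by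
        rw [pow_succ]; ring
      linarith
  have hA0 : A 0 = |e x| := by
    have : A 0 = ∑' y, mstep P 0 x y * |e y| := rfl
    rw [this, tsum_eq_single x (fun y hy => by simp [mstep, hy])]
    simp [mstep]
  -- polynomial bound on A T
  obtain ⟨c1, c2, hc1, hc2, hVb⟩ :=
    V_poly_bound hP0 hPsum hjump hα0 hα1 hj0 hΓ hr hVW
  have heb : ∀ y, |e y| ≤ (c1 + Γ) + (c2 + Γ) * ‖zToR y‖^q := by
    intro y
    have h1 := hVb y
    have h2 := hVhbd (zToR y)
    have h3 : |e y| ≤ |Vh (zToR y)| + |V y| := by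
      rw [he' y]; exact abs_sub _ _
    nlinarith [pow_nonneg (norm_nonneg (zToR y)) q]
  have hATb : ∀ T : ℕ, A T ≤ (c1 + Γ) + (c2 + Γ) * (‖zToR x‖ + T * jmp)^q := by
    intro T
    have hmemT : ∀ y, ‖zToR y - zToR x‖ ≤ (T:ℝ) * jmp → y ∈ latticeBall x ((T:ℝ) * jmp) :=
      fun y hy => mem_latticeBall hy
    have hAT : A T = ∑ y ∈ latticeBall x ((T:ℝ) * jmp), mstep P T x y * |e y| :=
      mstep_eq_sum hjump hmemT _
    have hbase : 0 ≤ ‖zToR x‖ + T * jmp :=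
      add_nonneg (norm_nonneg _) (mul_nonneg T.cast_nonneg hj0)
    set C := (c1 + Γ) + (c2 + Γ) * (‖zToR x‖ + T * jmp)^q with hCdef
    have hC0 : 0 ≤ C := by positivity
    calc A T = ∑ y ∈ latticeBall x ((T:ℝ) * jmp), mstep P T x y * |e y| := hAT
      _ ≤ ∑ y ∈ latticeBall x ((T:ℝ) * jmp), mstep P T x y * C := by
          refine Finset.sum_le_sum fun y _ => ?_
          by_cases hy : mstep P T x y = 0
          · rw [hy, zero_mul, zero_mul]
          · apply mul_le_mul_of_nonneg_left _ (mstep_nonneg hP0 hjump T x y)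
            have hyx : ‖zToR y - zToR x‖ ≤ (T:ℝ) * jmp := by
              by_contra hc
              exact hy (mstep_supp hjump T x y (not_le.mp hc))
            have hny : ‖zToR y‖ ≤ ‖zToR x‖ + T * jmp := by
              have h5 := norm_sub_norm_le (zToR y) (zToR x)
              linarith
            have h6 := pow_le_pow_left₀ (norm_nonneg (zToR y)) hny q
            have h7 := heb y
            rw [hCdef]
            nlinarith
      _ = C := by rw [← Finset.sum_mul, mstep_sum_one hP0 hPsum hjump hj0 hmemT, one_mul]
  -- limit of α^T * A T
  have hlim : Filter.Tendsto (fun T : ℕ => α^T * A T) Filter.atTop (nhds 0) := by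
    set a := ‖zToR x‖ with hadef
    have ha0 : 0 ≤ a := norm_nonneg _
    set u : ℕ → ℝ := fun T =>
      ((c1 + Γ) + (c2 + Γ)*2^q*a^q) * α^T + ((c2 + Γ)*2^q*jmp^q) * ((T:ℝ)^q * α^T) with hudef
    have hu : Summable u := by
      apply Summable.add
      · exact (summable_geometric_of_lt_one hα0.le hα1).mul_left _
      · refine Summable.mul_left _ ?_
        have := summable_pow_mul_geometric_of_norm_lt_one (R := ℝ) q
          (r := α) (by rw [Real.norm_eq_abs, abs_of_pos hα0]; exact hα1)
        simpa using this
    have hu0 : Filter.Tendsto u Filter.atTop (nhds 0) := hu.tendsto_atTop_zero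
    refine squeeze_zero (fun T => mul_nonneg (pow_nonneg hα0.le T) (hA0nn T))
      (fun T => ?_) hu0
    have h7 : (a + (T:ℝ)*jmp)^q ≤ 2^q * (a^q + ((T:ℝ)*jmp)^q) :=
      pow_add_le ha0 (mul_nonneg T.cast_nonneg hj0) q
    have h8 : ((T:ℝ)*jmp)^q = (T:ℝ)^q * jmp^q := mul_pow _ _ _
    have hcg : (0:ℝ) ≤ c2 + Γ := by linarith
    have h9 : (c2 + Γ) * (a + (T:ℝ)*jmp)^q
        ≤ (c2 + Γ) * (2^q * a^q + 2^q * jmp^q * (T:ℝ)^q) := by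
      refine mul_le_mul_of_nonneg_left ?_ hcg
      calc (a + (T:ℝ)*jmp)^q ≤ 2^q * (a^q + ((T:ℝ)*jmp)^q) := h7
        _ = 2^q * a^q + 2^q * jmp^q * (T:ℝ)^q := by rw [h8]; ring
    have h10 := hATb T
    calc α^T * A T ≤ α^T * ((c1 + Γ) + (c2 + Γ) * (a + T*jmp)^q) :=
          mul_le_mul_of_nonneg_left h10 (pow_nonneg hα0.le T)
      _ ≤ α^T * ((c1 + Γ) + (c2 + Γ) * (2^q * a^q + 2^q * jmp^q * (T:ℝ)^q)) := by
          apply mul_le_mul_of_nonneg_left _ (pow_nonneg hα0.le T)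
          linarith
      _ = u T := by rw [hudef]; ring
  -- partial sums bounded by Sig
  have hofCT : ∀ T : ℕ,
      ENNReal.ofReal (∑ t ∈ Finset.range T, α^(t+1) * Bq t) ≤ Sig := by
    intro T
    rw [ENNReal.ofReal_sum_of_nonneg
      (fun t _ => mul_nonneg (pow_nonneg hα0.le _) (hBq0 t))]
    refine le_trans (Finset.sum_le_sum fun t _ => ?_) (ENNReal.sum_le_tsum (Finset.range T))
    rw [ENNReal.ofReal_mul (pow_nonneg hα0.le _)]
    refine mul_le_mul' (ENNReal.ofReal_le_ofReal
      (pow_le_pow_of_le_one hα0.le hα1.le (Nat.le_succ t))) ?_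
    have hmemt : ∀ y, ‖zToR y - zToR x‖ ≤ (t:ℝ) * jmp → y ∈ latticeBall x ((t:ℝ) * jmp) :=
      fun y hy => mem_latticeBall hy
    have hBt : Bq t = ∑ y ∈ latticeBall x ((t:ℝ) * jmp), mstep P t x y * h y :=
      mstep_eq_sum hjump hmemt _
    rw [hBt, ENNReal.ofReal_sum_of_nonneg
      (fun y _ => mul_nonneg (mstep_nonneg hP0 hjump t x y) (hh0 y))]
    refine le_trans (Finset.sum_le_sum fun y _ => ?_)
      (ENNReal.sum_le_tsum (latticeBall x ((t:ℝ) * jmp)))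
    rw [ENNReal.ofReal_mul (mstep_nonneg hP0 hjump t x y)]
    exact mul_le_mul' le_rfl ENNReal.ofReal_toReal_le
  -- main inequality for each T
  have hmain : ∀ T : ℕ, ENNReal.ofReal (A 0)
      ≤ ENNReal.ofReal (α^T * A T) + ENNReal.ofReal (jmp^(2+β)) * Sig := by
    intro T
    have hCT0 : 0 ≤ ∑ t ∈ Finset.range T, α^(t+1) * Bq t :=
      Finset.sum_nonneg fun t _ => mul_nonneg (pow_nonneg hα0.le _) (hBq0 t)
    calc ENNReal.ofReal (A 0)
        ≤ ENNReal.ofReal (α^T * A T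
            + jmp^(2+β) * ∑ t ∈ Finset.range T, α^(t+1) * Bq t) :=
          ENNReal.ofReal_le_ofReal (hiter T)
      _ = ENNReal.ofReal (α^T * A T)
          + ENNReal.ofReal (jmp^(2+β) * ∑ t ∈ Finset.range T, α^(t+1) * Bq t) :=
          ENNReal.ofReal_add (mul_nonneg (pow_nonneg hα0.le T) (hA0nn T))
            (mul_nonneg hjb.le hCT0)
      _ = ENNReal.ofReal (α^T * A T) + ENNReal.ofReal (jmp^(2+β))
          * ENNReal.ofReal (∑ t ∈ Finset.range T, α^(t+1) * Bq t) := by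
          rw [ENNReal.ofReal_mul hjb.le]
      _ ≤ ENNReal.ofReal (α^T * A T) + ENNReal.ofReal (jmp^(2+β)) * Sig := by
          exact add_le_add le_rfl (mul_le_mul' le_rfl (hofCT T))
  -- pass to the limit
  have hten : Filter.Tendsto
      (fun T : ℕ => ENNReal.ofReal (α^T * A T) + ENNReal.ofReal (jmp^(2+β)) * Sig)
      Filter.atTop (nhds (0 + ENNReal.ofReal (jmp^(2+β)) * Sig)) := by
    apply Filter.Tendsto.add _ tendsto_const_nhds
    have := ENNReal.tendsto_ofReal hlim
    simpa using this
  have hfinal : ENNReal.ofReal (A 0) ≤ 0 + ENNReal.ofReal (jmp^(2+β)) * Sig :=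
    ge_of_tendsto' hten hmain
  rw [zero_add] at hfinal
  have hex : |Vh (zToR x) - V x| = A 0 := by rw [hA0, he' x]
  rw [hex]
  exact hfinal
end
end

section
/- Initial Tayloring bound for optimization (Theorem 1, two-policy case): Let d ≥ 1, α ∈ (0,1), β ∈ (0,1], Γ > 0, q ∈ ℕ, and real numbers 𝔧₁, 𝔧₂ ≥ 1. For each x ∈ ℤ^d let 𝒰(x) be a nonempty countable set of actions, and for each u ∈ 𝒰(x) let P^u(x,·) be a probability distribution on ℤ^d whose drift μ_u(x) and diffusion matrix σ²_u(x) are given by absolutely convergent series, and let r(x,u) ∈ ℝ. Let U*, Û* : ℤ^d → (actions) be stationary policies with U*(x), Û*(x) ∈ 𝒰(x) for all x, and let Q_{U*}(x,y) := P^{U*(x)}(x,y) and Q_{Û*}(x,y) := P^{Û*(x)}(x,y) be the induced stochastic matrices; assume Q_{U*} has jumps bounded by 𝔧₁ and Q_{Û*} has jumps bounded by 𝔧₂. Assume: (a) |r(x,U*(x))|, |r(x,Û*(x))| ≤ Γ(1+‖x‖^q) for all x; (b) V* : ℤ^d → ℝ satisfies |V*(x)| ≤ Γ(1+‖x‖^q),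 for every x and u ∈ 𝒰(x) the series Σ_y P^u(x,y)V*(y) converges absolutely, the set {r(x,u) + α Σ_y P^u(x,y)V*(y) : u ∈ 𝒰(x)} is bounded above with supremum V*(x), and this supremum is attained at u = U*(x); (c) V̂ : ℝ^d → ℝ is twice continuously differentiable with |V̂(x)| ≤ Γ(1+‖x‖^q) for all x ∈ ℝ^d, and for every x ∈ ℤ^d the set {r(x,u) + α(μ_u(x)·DV̂(x) + (1/2)·trace(σ²_u(x)·D²V̂(x))) : u ∈ 𝒰(x)} is bounded above with supremum (1−α)V̂(x), attained at u = Û*(x); (d) V_{Û*}(x) := E_x^{Û*}[Σ_{t=0}^∞ α^t r(X_t, Û*(X_t))] converges absolutely, where E_x^{Û*} is the expectation for the Markov chain with transition matrix Q_{Û*} started at x, and similarly E_x^{U*} is for Q_{U*}. Then for every x ∈ ℤ^d, max(|V̂(x) − V*(x)|, |V_{Û*}(x) − V*(x)|) ≤ (max(𝔧₁,𝔧₂))^{2+β} · ( E_x^{Û*}[Σ_{t=0}^∞ α^t [D²V̂]_{β, B̄(X_t,𝔧₂)}] + E_x^{U*}[Σ_{t=0}^∞ α^t [D²V̂]_{β,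 B̄(X_t,𝔧₁)}] ), the right-hand side interpreted in [0,+∞]. -/
open scoped ENNReal BigOperators

noncomputable section

open Set Filter





lemma abs_coord_le_norm {d : ℕ} (w : EuclideanSpace ℝ (Fin d)) (i : Fin d) : |w i| ≤ ‖w‖ := by
  rw [EuclideanSpace.norm_eq, ← Real.sqrt_sq_eq_abs]
  apply Real.sqrt_le_sqrt
  have : |w i| ^ 2 = w i ^ 2 := sq_abs _
  calc w i ^ 2 ≤ ∑ k, w k ^ 2 :=
        Finset.single_le_sum (fun k _ => sq_nonneg (w k)) (Finset.mem_univ i)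
    _ = ∑ k, ‖w k‖ ^ 2 := by simp [Real.norm_eq_abs, sq_abs]

lemma zToR_sub_apply {d : ℕ} (x y : Zd d) (i : Fin d) :
    (zToR y - zToR x) i = (y i : ℝ) - (x i : ℝ) := by simp [zToR]

lemma finite_ball (d : ℕ) (x : Zd d) (R : ℝ) :
    {y : Zd d | ‖zToR y - zToR x‖ ≤ R}.Finite := by
  apply Set.Finite.subset (Set.finite_Icc (x - fun _ => ⌈R⌉) (x + fun _ => ⌈R⌉))
  intro y hy
  simp only [Set.mem_setOf_eq] at hy
  constructor <;> intro i <;>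
  · have h1 : |(zToR y - zToR x) i| ≤ R := le_trans (abs_coord_le_norm _ i) hy
    rw [zToR_sub_apply] at h1
    have h2 : |((y i - x i : ℤ) : ℝ)| ≤ (⌈R⌉ : ℝ) := by
      push_cast
      exact le_trans h1 (Int.le_ceil R)
    rw [← Int.cast_abs, Int.cast_le] at h2
    rw [abs_le] at h2
    simp only [Pi.sub_apply, Pi.add_apply]
    omega

def ballF {d : ℕ} (x : Zd d) (R : ℝ) : Finset (Zd d) := (finite_ball d x R).toFinset

lemma mem_ballF {d : ℕ} {x y : Zd d} {R : ℝ} :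
    y ∈ ballF x R ↔ ‖zToR y - zToR x‖ ≤ R := Set.Finite.mem_toFinset _

section taylor
variable {E : Type*} [NormedAddCommGroup E] [NormedSpace ℝ E]


lemma line_hasDerivAt (x v : E) (t : ℝ) : HasDerivAt (fun s : ℝ => x + s • v) v t := by
  simpa using ((hasDerivAt_id t).smul_const v).const_add x

lemma g1_hasDerivAt (f : E → ℝ) (hf : ContDiff ℝ 2 f) (x v : E) (t : ℝ) :
    HasDerivAt (fun s : ℝ => f (x + s • v)) (fderiv ℝ f (x + t • v) v) t :=
  ((hf.differentiable (by norm_num) _).hasFDerivAt).comp_hasDerivAt t (line_hasDerivAt x v t)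

lemma g2_hasDerivAt (f : E → ℝ) (hf : ContDiff ℝ 2 f) (x v : E) (t : ℝ) :
    HasDerivAt (fun s : ℝ => fderiv ℝ f (x + s • v) v)
      (fderiv ℝ (fderiv ℝ f) (x + t • v) v v) t := by
  have h1 : ContDiff ℝ 1 (fderiv ℝ f) := hf.fderiv_right (by norm_num)
  have h2 : HasFDerivAt (fderiv ℝ f) (fderiv ℝ (fderiv ℝ f) (x + t • v)) (x + t • v) :=
    (h1.differentiable one_ne_zero _).hasFDerivAt
  have h3 := h2.comp_hasDerivAt t (line_hasDerivAt x v t)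
  have h4 := ((ContinuousLinearMap.apply ℝ ℝ v).hasFDerivAt).comp_hasDerivAt t h3
  exact h4

lemma taylor_quad_bound (f : E → ℝ) (hf : ContDiff ℝ 2 f) (β : ℝ) (hβ0 : 0 < β)
    (x v : E) (j : ℝ) (hj : 1 ≤ j) (hv : ‖v‖ ≤ j) (h : ℝ) (hh : 0 ≤ h)
    (hH : ∀ a b : E, a ∈ Metric.closedBall x j → b ∈ Metric.closedBall x j →
      ‖iteratedFDeriv ℝ 2 f a - iteratedFDeriv ℝ 2 f b‖ ≤ h * ‖a - b‖ ^ β) :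
    |f (x + v) - f x - fderiv ℝ f x v - (1/2) * fderiv ℝ (fderiv ℝ f) x v v| ≤
      1/2 * h * j ^ (2+β) := by
  have hj0 : (0:ℝ) < j := lt_of_lt_of_le one_pos hj
  have hrpow : (0:ℝ) ≤ 1/2 * h * j ^ (2+β) := by
    have := Real.rpow_nonneg hj0.le (2+β)
    positivity
  rcases eq_or_ne v 0 with hv0 | hv0
  · simp [hv0]
    rw [show (2:ℝ)⁻¹ = 1/2 by norm_num]
    exact hrpow
  set g : ℝ → ℝ := fun s => f (x + s • v) with hg
  have huniq : UniqueDiffOn ℝ (Icc (0:ℝ) 1) := uniqueDiffOn_Icc one_pos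
  have hcont : ContDiffOn ℝ 1 g (Icc (0:ℝ) 1) := by
    have : ContDiff ℝ 1 g := by
      have hline : ContDiff ℝ 1 (fun s : ℝ => x + s • v) :=
        contDiff_const.add (contDiff_id.smul contDiff_const)
      exact (hf.of_le one_le_two).comp hline
    exact this.contDiffOn
  set d1 : ℝ → ℝ := fun s => fderiv ℝ f (x + s • v) v with hd1
  have hgderiv : ∀ t, deriv g t = d1 t := fun t => (g1_hasDerivAt f hf x v t).deriv
  have hd1diff : Differentiable ℝ d1 := fun t => (g2_hasDerivAt f hf x v t).differentiableAt
  have hiter1 : ∀ t ∈ Ioo (0:ℝ) 1, iteratedDerivWithin 1 g (Icc (0:ℝ) 1) t = d1 t := by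
    intro t ht
    rw [iteratedDerivWithin_one,
      derivWithin_of_mem_nhds (Icc_mem_nhds ht.1 ht.2)]
    exact hgderiv t
  have hf' : DifferentiableOn ℝ (iteratedDerivWithin 1 g (Icc (0:ℝ) 1)) (Ioo (0:ℝ) 1) := by
    apply DifferentiableOn.congr (hd1diff.differentiableOn) hiter1
  obtain ⟨c, hc, hTay⟩ := taylor_mean_remainder_lagrange (n := 1) (x₀ := 0) (x := 1) zero_ne_one
    (by rw [uIcc_of_le zero_le_one]; exact hcont)
    (by rw [uIcc_of_le zero_le_one, uIoo_of_le zero_le_one]; exact hf')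
  rw [uIoo_of_le zero_le_one] at hc
  rw [uIcc_of_le zero_le_one] at hTay
  have hiter1zero : iteratedDerivWithin 1 g (Icc (0:ℝ) 1) 0 = d1 0 := by
    rw [iteratedDerivWithin_one]
    exact ((g1_hasDerivAt f hf x v 0).hasDerivWithinAt).derivWithin
      (huniq _ (left_mem_Icc.2 one_pos.le))
  have hiter2 : iteratedDerivWithin 2 g (Icc (0:ℝ) 1) c
      = fderiv ℝ (fderiv ℝ f) (x + c • v) v v := by
    rw [iteratedDerivWithin_succ]
    have heq : iteratedDerivWithin 1 g (Icc (0:ℝ) 1) =ᶠ[nhds c] d1 := by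
      filter_upwards [Ioo_mem_nhds hc.1 hc.2] with t ht using hiter1 t ht
    rw [Filter.EventuallyEq.derivWithin_eq (heq.filter_mono nhdsWithin_le_nhds) (hiter1 c hc),
      derivWithin_of_mem_nhds (Icc_mem_nhds hc.1 hc.2)]
    exact (g2_hasDerivAt f hf x v c).deriv
  have htaylorEval : taylorWithinEval g 1 (Icc (0:ℝ) 1) 0 1 = g 0 + d1 0 := by
    simp [taylorWithinEval_succ, taylor_within_zero_eval, hiter1zero]
  rw [htaylorEval, hiter2] at hTay
  have hg1 : g 1 = f (x + v) := by simp [hg]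
  have hg0 : g 0 = f x := by simp [hg]
  have hd10 : d1 0 = fderiv ℝ f x v := by simp [hd1]
  rw [hg1, hg0, hd10] at hTay
  -- hTay : f (x+v) - (f x + fderiv f x v) = B_c v v * 1^2 / 2!
  have key : f (x + v) - f x - fderiv ℝ f x v - (1/2) * fderiv ℝ (fderiv ℝ f) x v v
      = (1/2) * (fderiv ℝ (fderiv ℝ f) (x + c • v) v v - fderiv ℝ (fderiv ℝ f) x v v) := by
    have : f (x + v) - (f x + fderiv ℝ f x v)
        = fderiv ℝ (fderiv ℝ f) (x + c • v) v v * 1 ^ 2 / 2 := by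
      simpa [Nat.factorial] using hTay
    linarith [this]
  rw [key]
  have hdiff : fderiv ℝ (fderiv ℝ f) (x + c • v) v v - fderiv ℝ (fderiv ℝ f) x v v
      = (iteratedFDeriv ℝ 2 f (x + c • v) - iteratedFDeriv ℝ 2 f x) ![v, v] := by
    rw [ContinuousMultilinearMap.sub_apply, iteratedFDeriv_two_apply, iteratedFDeriv_two_apply]
    simp
  have hmemc : x + c • v ∈ Metric.closedBall x j := by
    rw [Metric.mem_closedBall, dist_eq_norm]
    have : ‖x + c • v - x‖ = c * ‖v‖ := by
      rw [add_sub_cancel_left, norm_smul, Real.norm_eq_abs, abs_of_pos hc.1]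
    rw [this]
    calc c * ‖v‖ ≤ 1 * ‖v‖ := by
          apply mul_le_mul_of_nonneg_right hc.2.le (norm_nonneg v)
      _ ≤ j := by rw [one_mul]; exact hv
  have hmemx : x ∈ Metric.closedBall x j := Metric.mem_closedBall_self hj0.le
  have hnorm1 : ‖x + c • v - x‖ ≤ ‖v‖ := by
    rw [add_sub_cancel_left, norm_smul, Real.norm_eq_abs, abs_of_pos hc.1]
    nlinarith [norm_nonneg v, hc.2]
  have hbd : |(iteratedFDeriv ℝ 2 f (x + c • v) - iteratedFDeriv ℝ 2 f x) ![v, v]|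
      ≤ (h * ‖v‖ ^ β) * (‖v‖ * ‖v‖) := by
    have h1 := (iteratedFDeriv ℝ 2 f (x + c • v) - iteratedFDeriv ℝ 2 f x).le_opNorm ![v, v]
    have h2 : ∏ i, ‖(![v, v] : Fin 2 → E) i‖ = ‖v‖ * ‖v‖ := by
      simp [Fin.prod_univ_two]
    rw [h2] at h1
    refine le_trans (by simpa using h1) ?_
    apply mul_le_mul_of_nonneg_right _ (by positivity)
    refine le_trans (hH _ _ hmemc hmemx) ?_
    apply mul_le_mul_of_nonneg_left _ hh
    exact Real.rpow_le_rpow (norm_nonneg _) hnorm1 hβ0.le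
  rw [abs_mul, abs_of_pos (by norm_num : (0:ℝ) < 1/2), hdiff]
  have hfinal : (h * ‖v‖ ^ β) * (‖v‖ * ‖v‖) ≤ h * j ^ (2+β) := by
    have hvβ : ‖v‖ ^ β ≤ j ^ β := Real.rpow_le_rpow (norm_nonneg _) hv hβ0.le
    have hv2 : ‖v‖ * ‖v‖ ≤ j * j := by nlinarith [norm_nonneg v]
    have hjsplit : j ^ (2+β) = (j * j) * j ^ β := by
      rw [Real.rpow_add hj0]
      have : j ^ (2:ℝ) = j * j := by
        rw [show (2:ℝ) = ((2:ℕ):ℝ) by norm_num, Real.rpow_natCast]; ring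
      rw [this]
    rw [hjsplit]
    have hβj : (0:ℝ) ≤ j ^ β := Real.rpow_nonneg hj0.le β
    calc h * ‖v‖ ^ β * (‖v‖ * ‖v‖) ≤ h * j ^ β * (j * j) := by
          apply mul_le_mul (mul_le_mul_of_nonneg_left hvβ hh) hv2
            (mul_nonneg (norm_nonneg v) (norm_nonneg v)) (mul_nonneg hh hβj)
      _ = h * (j * j * j ^ β) := by ring
  linarith [hbd, hfinal, abs_nonneg ((iteratedFDeriv ℝ 2 f (x + c • v) - iteratedFDeriv ℝ 2 f x) ![v, v])]

end taylor

section chain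
variable {d : ℕ} {Q : Zd d → Zd d → ℝ} {j : ℝ}

lemma mstep_zero_of_far (hQj : ∀ x y, j < ‖zToR y - zToR x‖ → Q x y = 0) :
    ∀ (t : ℕ) (x y : Zd d), (t : ℝ) * j < ‖zToR y - zToR x‖ → mstep Q t x y = 0 := by
  intro t
  induction t with
  | zero =>
    intro x y hxy
    simp only [Nat.cast_zero, zero_mul] at hxy
    have : y ≠ x := by
      intro h; subst h; simp at hxy
    simp [mstep, this]
  | succ t ih =>
    intro x y hfar
    have hterm : ∀ z, mstep Q t x z * Q z y = 0 := by
      intro z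
      by_cases hz : ‖zToR z - zToR x‖ ≤ (t : ℝ) * j
      · have h1 : ‖zToR y - zToR x‖ ≤ ‖zToR y - zToR z‖ + ‖zToR z - zToR x‖ :=
          norm_sub_le_norm_sub_add_norm_sub _ _ _
        have h2 : j < ‖zToR y - zToR z‖ := by
          push_cast at hfar
          nlinarith
        rw [hQj z y h2, mul_zero]
      · push_neg at hz
        rw [ih x z hz, zero_mul]
    simp only [mstep]
    simp [hterm]

lemma mstep_nonneg (hQ0 : ∀ x y, 0 ≤ Q x y) :
    ∀ t (x y : Zd d), 0 ≤ mstep Q t x y := by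
  intro t
  induction t with
  | zero => intro x y; simp only [mstep]; split <;> norm_num
  | succ t ih =>
    intro x y
    exact tsum_nonneg fun z => mul_nonneg (ih x z) (hQ0 z y)

lemma mstep_mul_eq_zero (hQj : ∀ x y, j < ‖zToR y - zToR x‖ → Q x y = 0) (f : Zd d → ℝ) (t : ℕ) (x : Zd d) :
    ∀ y ∉ ballF x ((t : ℝ) * j), mstep Q t x y * f y = 0 := by
  intro y hy
  rw [mstep_zero_of_far hQj t x y (by rwa [mem_ballF, not_le] at hy), zero_mul]

lemma mstep_summable (hQj : ∀ x y, j < ‖zToR y - zToR x‖ → Q x y = 0) (f : Zd d → ℝ) (t : ℕ) (x : Zd d) :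
    Summable fun y => mstep Q t x y * f y :=
  summable_of_ne_finset_zero (mstep_mul_eq_zero hQj f t x)

lemma mstep_tsum_eq_sum (hQj : ∀ x y, j < ‖zToR y - zToR x‖ → Q x y = 0) (f : Zd d → ℝ) (t : ℕ) (x : Zd d) :
    ∑' y, mstep Q t x y * f y = ∑ y ∈ ballF x ((t : ℝ) * j), mstep Q t x y * f y :=
  tsum_eq_sum (mstep_mul_eq_zero hQj f t x)

lemma Q_tsum_eq_sum (hQj : ∀ x y, j < ‖zToR y - zToR x‖ → Q x y = 0) (hj0 : 0 ≤ j) (f : Zd d → ℝ) (x : Zd d) {s : Finset (Zd d)}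
    (hs : ballF x j ⊆ s) :
    ∑' y, Q x y * f y = ∑ y ∈ s, Q x y * f y := by
  apply tsum_eq_sum
  intro y hy
  have : y ∉ ballF x j := fun h => hy (hs h)
  rw [hQj x y (by rwa [mem_ballF, not_le] at this), zero_mul]

lemma Q_rowsum (hQj : ∀ x y, j < ‖zToR y - zToR x‖ → Q x y = 0)
    (hQ1 : ∀ x, HasSum (Q x) 1) (hj0 : 0 ≤ j) (x : Zd d) {s : Finset (Zd d)} (hs : ballF x j ⊆ s) :
    ∑ y ∈ s, Q x y = 1 := by
  rw [← (hQ1 x).tsum_eq]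
  symm
  apply tsum_eq_sum
  intro y hy
  have : y ∉ ballF x j := fun h => hy (hs h)
  exact hQj x y (by rwa [mem_ballF, not_le] at this)

lemma ballF_subset (hj0 : 0 ≤ j) (t : ℕ) (x : Zd d) {z : Zd d}
    (hz : z ∈ ballF x ((t : ℝ) * j)) :
    ballF z j ⊆ ballF x (((t + 1 : ℕ) : ℝ) * j) := by
  intro y hy
  have hz' := mem_ballF.1 hz
  have hy' := mem_ballF.1 hy
  rw [mem_ballF]
  have := norm_sub_le_norm_sub_add_norm_sub (zToR y) (zToR z) (zToR x)
  push_cast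
  push_cast at hz' hy' ⊢
  nlinarith

lemma mstep_rowsum (hQj : ∀ x y, j < ‖zToR y - zToR x‖ → Q x y = 0)
    (hQ1 : ∀ x, HasSum (Q x) 1) (hj0 : 0 ≤ j) :
    ∀ (t : ℕ) (x : Zd d) (s : Finset (Zd d)), ballF x ((t : ℝ) * j) ⊆ s →
      ∑ y ∈ s, mstep Q t x y = 1 := by
  intro t
  induction t with
  | zero =>
    intro x s hs
    have hx : x ∈ s := by
      apply hs; rw [mem_ballF]; simp
    simp only [mstep]
    rw [Finset.sum_ite_eq' s x (fun _ => (1:ℝ))]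
    simp [hx]
  | succ t ih =>
    intro x s hs
    have hrw : ∀ y, mstep Q (t+1) x y = ∑ z ∈ ballF x ((t:ℝ)*j), mstep Q t x z * Q z y := by
      intro y
      apply tsum_eq_sum
      intro z hz
      rw [mstep_zero_of_far hQj t x z (by rwa [mem_ballF, not_le] at hz), zero_mul]
    calc ∑ y ∈ s, mstep Q (t+1) x y
        = ∑ y ∈ s, ∑ z ∈ ballF x ((t:ℝ)*j), mstep Q t x z * Q z y := by
          exact Finset.sum_congr rfl fun y _ => hrw y
      _ = ∑ z ∈ ballF x ((t:ℝ)*j), ∑ y ∈ s, mstep Q t x z * Q z y := Finset.sum_comm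
      _ = ∑ z ∈ ballF x ((t:ℝ)*j), mstep Q t x z * ∑ y ∈ s, Q z y := by
          exact Finset.sum_congr rfl fun z _ => (Finset.mul_sum _ _ _).symm
      _ = ∑ z ∈ ballF x ((t:ℝ)*j), mstep Q t x z := by
          apply Finset.sum_congr rfl
          intro z hz
          by_cases hmz : mstep Q t x z = 0
          · simp [hmz]
          · have hzball : z ∈ ballF x ((t:ℝ)*j) := hz
            have hsub : ballF z j ⊆ s := by
              refine subset_trans (ballF_subset hj0 t x hzball) ?_
              refine subset_trans ?_ hs
              intro w hw
              rw [mem_ballF] at *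
              push_cast at *
              linarith [hw]
            rw [Q_rowsum hQj hQ1 hj0 z hsub, mul_one]
      _ = 1 := ih x _ (subset_refl _)
end chain

section chain2
variable {d : ℕ} {Q : Zd d → Zd d → ℝ} {j : ℝ}

lemma mstep_exp_succ (hQj : ∀ x y, j < ‖zToR y - zToR x‖ → Q x y = 0) (hj0 : 0 ≤ j)
    (f : Zd d → ℝ) (t : ℕ) (x : Zd d) :
    ∑' y, mstep Q (t+1) x y * f y = ∑' z, mstep Q t x z * (∑' y, Q z y * f y) := by
  rw [mstep_tsum_eq_sum hQj f (t+1) x, mstep_tsum_eq_sum hQj (fun z => ∑' y, Q z y * f y) t x]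
  calc ∑ y ∈ ballF x ((t+1 : ℕ) * j), mstep Q (t+1) x y * f y
      = ∑ y ∈ ballF x ((t+1 : ℕ) * j), ∑ z ∈ ballF x ((t:ℝ)*j), mstep Q t x z * Q z y * f y := by
        apply Finset.sum_congr rfl
        intro y _
        have : mstep Q (t+1) x y = ∑ z ∈ ballF x ((t:ℝ)*j), mstep Q t x z * Q z y := by
          apply tsum_eq_sum
          intro z hz
          rw [mstep_zero_of_far hQj t x z (by rwa [mem_ballF, not_le] at hz), zero_mul]
        rw [this, Finset.sum_mul]
    _ = ∑ z ∈ ballF x ((t:ℝ)*j), ∑ y ∈ ballF x ((t+1 : ℕ) * j), mstep Q t x z * Q z y * f y :=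
        Finset.sum_comm
    _ = ∑ z ∈ ballF x ((t:ℝ)*j), mstep Q t x z * ∑' y, Q z y * f y := by
        apply Finset.sum_congr rfl
        intro z hz
        rw [Q_tsum_eq_sum hQj hj0 f z (ballF_subset hj0 t x hz)]
        rw [Finset.mul_sum]
        apply Finset.sum_congr rfl
        intro y _
        ring

lemma mstep_exp_mono (hQj : ∀ x y, j < ‖zToR y - zToR x‖ → Q x y = 0)
    (hQ0 : ∀ x y, 0 ≤ Q x y) (f g : Zd d → ℝ) (t : ℕ) (x : Zd d)
    (h : ∀ z, mstep Q t x z ≠ 0 → f z ≤ g z) :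
    ∑' y, mstep Q t x y * f y ≤ ∑' y, mstep Q t x y * g y := by
  rw [mstep_tsum_eq_sum hQj f, mstep_tsum_eq_sum hQj g]
  apply Finset.sum_le_sum
  intro z _
  by_cases hz : mstep Q t x z = 0
  · simp [hz]
  · exact mul_le_mul_of_nonneg_left (h z hz) (mstep_nonneg hQ0 t x z)

lemma mstep_exp_abs (hQj : ∀ x y, j < ‖zToR y - zToR x‖ → Q x y = 0)
    (hQ0 : ∀ x y, 0 ≤ Q x y) (f : Zd d → ℝ) (t : ℕ) (x : Zd d) :
    |∑' y, mstep Q t x y * f y| ≤ ∑' y, mstep Q t x y * |f y| := by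
  rw [mstep_tsum_eq_sum hQj f, mstep_tsum_eq_sum hQj (fun y => |f y|)]
  refine le_trans (Finset.abs_sum_le_sum_abs _ _) ?_
  apply Finset.sum_le_sum
  intro z _
  rw [abs_mul, abs_of_nonneg (mstep_nonneg hQ0 t x z)]

lemma mstep_exp_const_bound (hQj : ∀ x y, j < ‖zToR y - zToR x‖ → Q x y = 0)
    (hQ0 : ∀ x y, 0 ≤ Q x y) (hQ1 : ∀ x, HasSum (Q x) 1) (hj0 : 0 ≤ j)
    (f : Zd d → ℝ) (t : ℕ) (x : Zd d) {C : ℝ}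
    (h : ∀ z, mstep Q t x z ≠ 0 → |f z| ≤ C) :
    |∑' y, mstep Q t x y * f y| ≤ C := by
  refine le_trans (mstep_exp_abs hQj hQ0 f t x) ?_
  have h2 : ∑' y, mstep Q t x y * |f y| ≤ ∑' y, mstep Q t x y * C :=
    mstep_exp_mono hQj hQ0 _ _ t x (fun z hz => h z hz)
  refine le_trans h2 ?_
  rw [mstep_tsum_eq_sum hQj (fun _ => C), ← Finset.sum_mul,
    mstep_rowsum hQj hQ1 hj0 t x _ (subset_refl _), one_mul]

lemma mstep_exp_linear (hQj : ∀ x y, j < ‖zToR y - zToR x‖ → Q x y = 0)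
    (a : ℝ) (f g : Zd d → ℝ) (t : ℕ) (x : Zd d) :
    ∑' y, mstep Q t x y * (a * f y + g y)
      = a * ∑' y, mstep Q t x y * f y + ∑' y, mstep Q t x y * g y := by
  rw [mstep_tsum_eq_sum hQj (fun y => a * f y + g y), mstep_tsum_eq_sum hQj f,
    mstep_tsum_eq_sum hQj g, Finset.mul_sum, ← Finset.sum_add_distrib]
  apply Finset.sum_congr rfl
  intro y _
  ring

lemma mstep_exp_zero (f : Zd d → ℝ) (x : Zd d) :
    ∑' y, mstep Q 0 x y * f y = f x := by
  rw [tsum_eq_single x]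
  · simp [mstep]
  · intro y hy
    simp [mstep, hy]

lemma mstep_iterate (hQj : ∀ x y, j < ‖zToR y - zToR x‖ → Q x y = 0)
    (hQ0 : ∀ x y, 0 ≤ Q x y) (hj0 : 0 ≤ j) {α : ℝ} (hα : 0 ≤ α) (D e : Zd d → ℝ)
    (hrec : ∀ z, D z ≤ α * (∑' y, Q z y * D y) + e z) (T : ℕ) (x : Zd d) :
    D x ≤ α^T * (∑' y, mstep Q T x y * D y)
      + ∑ t ∈ Finset.range T, α^t * ∑' y, mstep Q t x y * e y := by
  induction T with
  | zero => simp [mstep_exp_zero]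
  | succ T ih =>
    have hstep : ∑' y, mstep Q T x y * D y
        ≤ α * (∑' y, mstep Q (T+1) x y * D y) + ∑' y, mstep Q T x y * e y := by
      calc ∑' y, mstep Q T x y * D y
          ≤ ∑' y, mstep Q T x y * (α * (∑' w, Q y w * D w) + e y) :=
            mstep_exp_mono hQj hQ0 _ _ T x (fun z _ => hrec z)
        _ = α * ∑' y, mstep Q T x y * (∑' w, Q y w * D w) + ∑' y, mstep Q T x y * e y :=
            mstep_exp_linear hQj α _ _ T x
        _ = α * (∑' y, mstep Q (T+1) x y * D y) + ∑' y, mstep Q T x y * e y := by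
            rw [mstep_exp_succ hQj hj0 D T x]
    have hT : α^T * (∑' y, mstep Q T x y * D y)
        ≤ α^T * (α * (∑' y, mstep Q (T+1) x y * D y) + ∑' y, mstep Q T x y * e y) :=
      mul_le_mul_of_nonneg_left hstep (pow_nonneg hα T)
    rw [Finset.sum_range_succ]
    calc D x ≤ α^T * (∑' y, mstep Q T x y * D y)
          + ∑ t ∈ Finset.range T, α^t * ∑' y, mstep Q t x y * e y := ih
      _ ≤ α^T * (α * (∑' y, mstep Q (T+1) x y * D y) + ∑' y, mstep Q T x y * e y)
          + ∑ t ∈ Finset.range T, α^t * ∑' y, mstep Q t x y * e y := by linarith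
      _ = α^(T+1) * (∑' y, mstep Q (T+1) x y * D y)
          + (∑ t ∈ Finset.range T, α^t * ∑' y, mstep Q t x y * e y
            + α^T * ∑' y, mstep Q T x y * e y) := by ring
end chain2


lemma euclid_apply_sum {d : ℕ} {s : Finset (Zd d)} (g : Zd d → EuclideanSpace ℝ (Fin d))
    (k : Fin d) : (∑ y ∈ s, g y) k = ∑ y ∈ s, g y k := by
  have := map_sum (EuclideanSpace.proj (𝕜 := ℝ) k) g s
  simpa only [PiLp.proj_apply] using this

lemma euclid_apply_sum' {d : ℕ} (g : Fin d → EuclideanSpace ℝ (Fin d))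
    (k : Fin d) : (∑ i, g i) k = ∑ i, g i k := by
  have := map_sum (EuclideanSpace.proj (𝕜 := ℝ) k) g Finset.univ
  simpa only [PiLp.proj_apply] using this

lemma euclid_sum_single {d : ℕ} (v : EuclideanSpace ℝ (Fin d)) :
    ∑ i, v i • EuclideanSpace.single i (1:ℝ) = v := by
  ext k
  rw [euclid_apply_sum']
  simp [EuclideanSpace.single_apply]

lemma bilin_expand {d : ℕ}
    (B : EuclideanSpace ℝ (Fin d) →L[ℝ] (EuclideanSpace ℝ (Fin d) →L[ℝ] ℝ))
    (v w : EuclideanSpace ℝ (Fin d)) :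
    B v w = ∑ i, ∑ k, v i * w k *
      B (EuclideanSpace.single i (1:ℝ)) (EuclideanSpace.single k (1:ℝ)) := by
  have h0 : B v w = B (∑ i, v i • EuclideanSpace.single i (1:ℝ))
      (∑ k, w k • EuclideanSpace.single k (1:ℝ)) := by
    rw [euclid_sum_single, euclid_sum_single]
  have hBv : B (∑ i, v i • EuclideanSpace.single i (1:ℝ))
      = ∑ i, v i • B (EuclideanSpace.single i (1:ℝ)) := by
    rw [map_sum]
    exact Finset.sum_congr rfl fun i _ => by rw [map_smul]
  rw [h0, hBv, ContinuousLinearMap.sum_apply]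
  refine Finset.sum_congr rfl fun i _ => ?_
  rw [ContinuousLinearMap.smul_apply, map_sum, smul_eq_mul, Finset.mul_sum]
  refine Finset.sum_congr rfl fun k _ => ?_
  rw [map_smul, smul_eq_mul]
  ring

lemma hessianEntry_eq {d : ℕ} (f : EuclideanSpace ℝ (Fin d) → ℝ)
    (x : EuclideanSpace ℝ (Fin d)) (i k : Fin d) :
    hessianEntry f x i k = fderiv ℝ (fderiv ℝ f) x
      (EuclideanSpace.single i (1:ℝ)) (EuclideanSpace.single k (1:ℝ)) := by
  rw [hessianEntry, iteratedFDeriv_two_apply]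
  simp

lemma one_step_expansion {d : ℕ} (f : EuclideanSpace ℝ (Fin d) → ℝ) (hf : ContDiff ℝ 2 f)
    (β : ℝ) (hβ0 : 0 < β) (j : ℝ) (hj : 1 ≤ j)
    (x : Zd d) (p : Zd d → ℝ) (hp0 : ∀ y, 0 ≤ p y) (hp1 : HasSum p 1)
    (hpj : ∀ y, j < ‖zToR y - zToR x‖ → p y = 0)
    (μ0 : EuclideanSpace ℝ (Fin d)) (σ0 : Matrix (Fin d) (Fin d) ℝ)
    (hμ0 : ∀ i, HasSum (fun y => p y * (zToR y - zToR x) i) (μ0 i))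
    (hσ0 : ∀ i k, HasSum (fun y => p y * ((zToR y - zToR x) i * (zToR y - zToR x) k)) (σ0 i k))
    (h : ℝ) (hh : 0 ≤ h)
    (hH : ∀ a b, a ∈ Metric.closedBall (zToR x) j → b ∈ Metric.closedBall (zToR x) j →
      ‖iteratedFDeriv ℝ 2 f a - iteratedFDeriv ℝ 2 f b‖ ≤ h * ‖a - b‖ ^ β) :
    |(∑' y, p y * f (zToR y)) - f (zToR x)
      - (fderiv ℝ f (zToR x) μ0 + (1/2) * ∑ i, ∑ k, σ0 i k * hessianEntry f (zToR x) i k)|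
      ≤ 1/2 * h * j ^ (2+β) := by
  classical
  set F : Finset (Zd d) := ballF x j with hF
  have hout : ∀ y ∉ F, p y = 0 := by
    intro y hy
    exact hpj y (by rwa [hF, mem_ballF, not_le] at hy)
  set w : Zd d → EuclideanSpace ℝ (Fin d) := fun y => zToR y - zToR x with hw
  set B := fderiv ℝ (fderiv ℝ f) (zToR x) with hB
  -- tsum to finset sum
  have hsum_f : ∑' y, p y * f (zToR y) = ∑ y ∈ F, p y * f (zToR y) :=
    tsum_eq_sum (fun y hy => by rw [hout y hy, zero_mul])
  have hsum1 : ∑ y ∈ F, p y = 1 := by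
    rw [← hp1.tsum_eq]
    exact (tsum_eq_sum (fun y hy => hout y hy)).symm
  -- drift as a finite sum of vectors
  have hμF : μ0 = ∑ y ∈ F, p y • w y := by
    ext i
    rw [euclid_apply_sum]
    have h1 : μ0 i = ∑ y ∈ F, p y * w y i := by
      rw [← (hμ0 i).tsum_eq]
      exact tsum_eq_sum (fun y hy => by rw [hout y hy, zero_mul])
    rw [h1]
    exact Finset.sum_congr rfl fun y _ => by rw [PiLp.smul_apply, smul_eq_mul]
  have hσF : ∀ i k, σ0 i k = ∑ y ∈ F, p y * (w y i * w y k) := by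
    intro i k
    rw [← (hσ0 i k).tsum_eq]
    exact tsum_eq_sum (fun y hy => by rw [hout y hy, zero_mul])
  -- Taylor error per point
  have htay : ∀ y ∈ F, |f (zToR y) - f (zToR x) - fderiv ℝ f (zToR x) (w y)
      - (1/2) * B (w y) (w y)| ≤ 1/2 * h * j ^ (2+β) := by
    intro y hyF
    have hvj : ‖w y‖ ≤ j := by rw [hw]; exact mem_ballF.1 hyF
    have := taylor_quad_bound f hf β hβ0 (zToR x) (w y) j hj hvj h hh hH
    rwa [show zToR x + w y = zToR y by rw [hw, add_comm, sub_add_cancel]] at this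
  set ee : Zd d → ℝ := fun y => f (zToR y) - f (zToR x) - fderiv ℝ f (zToR x) (w y)
    - (1/2) * B (w y) (w y) with hee
  -- expand the sum
  have hexp : ∑ y ∈ F, p y * f (zToR y)
      = f (zToR x) + fderiv ℝ f (zToR x) μ0
        + (1/2) * ∑ i, ∑ k, σ0 i k * hessianEntry f (zToR x) i k
        + ∑ y ∈ F, p y * ee y := by
    have hDf : fderiv ℝ f (zToR x) μ0 = ∑ y ∈ F, p y * fderiv ℝ f (zToR x) (w y) := by
      rw [hμF, map_sum]
      exact Finset.sum_congr rfl fun y _ => by rw [map_smul, smul_eq_mul]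
    have hQuad : ∑ i, ∑ k, σ0 i k * hessianEntry f (zToR x) i k
        = ∑ y ∈ F, p y * B (w y) (w y) := by
      calc ∑ i, ∑ k, σ0 i k * hessianEntry f (zToR x) i k
          = ∑ i, ∑ k, ∑ y ∈ F, p y * (w y i * w y k) * hessianEntry f (zToR x) i k := by
            refine Finset.sum_congr rfl fun i _ => Finset.sum_congr rfl fun k _ => ?_
            rw [hσF i k, Finset.sum_mul]
        _ = ∑ i, ∑ y ∈ F, ∑ k, p y * (w y i * w y k) * hessianEntry f (zToR x) i k :=
            Finset.sum_congr rfl fun i _ => Finset.sum_comm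
        _ = ∑ y ∈ F, ∑ i, ∑ k, p y * (w y i * w y k) * hessianEntry f (zToR x) i k :=
            Finset.sum_comm
        _ = ∑ y ∈ F, p y * B (w y) (w y) := by
            refine Finset.sum_congr rfl fun y _ => ?_
            rw [bilin_expand B (w y) (w y), Finset.mul_sum]
            refine Finset.sum_congr rfl fun i _ => ?_
            rw [Finset.mul_sum]
            refine Finset.sum_congr rfl fun k _ => ?_
            rw [hessianEntry_eq]
            ring
    have hsplit : ∑ y ∈ F, p y * ee y
        = ∑ y ∈ F, p y * f (zToR y) - (∑ y ∈ F, p y) * f (zToR x)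
          - ∑ y ∈ F, p y * fderiv ℝ f (zToR x) (w y)
          - (1/2) * ∑ y ∈ F, p y * B (w y) (w y) := by
      rw [Finset.sum_mul, Finset.mul_sum, ← Finset.sum_sub_distrib, ← Finset.sum_sub_distrib,
        ← Finset.sum_sub_distrib]
      exact Finset.sum_congr rfl fun y _ => by rw [hee]; ring
    rw [hsplit, hsum1, hDf, hQuad]
    ring
  rw [hsum_f, hexp]
  have hclean : f (zToR x) + fderiv ℝ f (zToR x) μ0
      + (1/2) * ∑ i, ∑ k, σ0 i k * hessianEntry f (zToR x) i k
      + ∑ y ∈ F, p y * ee y - f (zToR x)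
      - (fderiv ℝ f (zToR x) μ0 + (1/2) * ∑ i, ∑ k, σ0 i k * hessianEntry f (zToR x) i k)
      = ∑ y ∈ F, p y * ee y := by ring
  rw [hclean]
  refine le_trans (Finset.abs_sum_le_sum_abs _ _) ?_
  calc ∑ y ∈ F, |p y * ee y| ≤ ∑ y ∈ F, p y * (1/2 * h * j ^ (2+β)) := by
        refine Finset.sum_le_sum fun y hy => ?_
        rw [abs_mul, abs_of_nonneg (hp0 y)]
        exact mul_le_mul_of_nonneg_left (htay y hy) (hp0 y)
    _ = 1/2 * h * j ^ (2+β) := by rw [← Finset.sum_mul, hsum1, one_mul]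

section chain3
variable {d : ℕ} {Q : Zd d → Zd d → ℝ} {j : ℝ}

lemma mstep_exp_const_mul (hQj : ∀ x y, j < ‖zToR y - zToR x‖ → Q x y = 0)
    (a : ℝ) (f : Zd d → ℝ) (t : ℕ) (x : Zd d) :
    ∑' y, mstep Q t x y * (a * f y) = a * ∑' y, mstep Q t x y * f y := by
  rw [mstep_tsum_eq_sum hQj (fun y => a * f y), mstep_tsum_eq_sum hQj f, Finset.mul_sum]
  exact Finset.sum_congr rfl fun y _ => by ring

lemma mstep_iterate_eq (hQj : ∀ x y, j < ‖zToR y - zToR x‖ → Q x y = 0)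
    (hj0 : 0 ≤ j) (α : ℝ) (D e : Zd d → ℝ)
    (hrec : ∀ z, D z = α * (∑' y, Q z y * D y) + e z) (T : ℕ) (x : Zd d) :
    D x = α^T * (∑' y, mstep Q T x y * D y)
      + ∑ t ∈ Finset.range T, α^t * ∑' y, mstep Q t x y * e y := by
  induction T with
  | zero => simp [mstep_exp_zero]
  | succ T ih =>
    have hstep : ∑' y, mstep Q T x y * D y
        = α * (∑' y, mstep Q (T+1) x y * D y) + ∑' y, mstep Q T x y * e y := by
      calc ∑' y, mstep Q T x y * D y
          = ∑' y, mstep Q T x y * (α * (∑' w, Q y w * D w) + e y) :=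
            tsum_congr fun y => by rw [← hrec y]
        _ = α * ∑' y, mstep Q T x y * (∑' w, Q y w * D w) + ∑' y, mstep Q T x y * e y :=
            mstep_exp_linear hQj α _ _ T x
        _ = α * (∑' y, mstep Q (T+1) x y * D y) + ∑' y, mstep Q T x y * e y := by
            rw [mstep_exp_succ hQj hj0 D T x]
    rw [Finset.sum_range_succ]
    calc D x = α^T * (∑' y, mstep Q T x y * D y)
          + ∑ t ∈ Finset.range T, α^t * ∑' y, mstep Q t x y * e y := ih
      _ = α^T * (α * (∑' y, mstep Q (T+1) x y * D y) + ∑' y, mstep Q T x y * e y)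
          + ∑ t ∈ Finset.range T, α^t * ∑' y, mstep Q t x y * e y := by rw [hstep]
      _ = α^(T+1) * (∑' y, mstep Q (T+1) x y * D y)
          + (∑ t ∈ Finset.range T, α^t * ∑' y, mstep Q t x y * e y
            + α^T * ∑' y, mstep Q T x y * e y) := by ring

lemma tendsto_vanish (hQj : ∀ x y, j < ‖zToR y - zToR x‖ → Q x y = 0)
    (hQ0 : ∀ x y, 0 ≤ Q x y) (hQ1 : ∀ x, HasSum (Q x) 1) (hj : 1 ≤ j)
    {α : ℝ} (hα0 : 0 < α) (hα1 : α < 1) (g : Zd d → ℝ) {Γ2 : ℝ} (hΓ2 : 0 ≤ Γ2) (q : ℕ)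
    (hg : ∀ z, |g z| ≤ Γ2 * (1 + ‖zToR z‖^q)) (x : Zd d) :
    Filter.Tendsto (fun T : ℕ => α^T * ∑' y, mstep Q T x y * g y) Filter.atTop (nhds 0) := by
  have hj0 : (0:ℝ) ≤ j := le_trans zero_le_one hj
  set c := ‖zToR x‖ with hc
  have hc0 : 0 ≤ c := norm_nonneg _
  have hbd : ∀ T : ℕ, |α^T * ∑' y, mstep Q T x y * g y|
      ≤ Γ2 * α^T + (Γ2 * (c+j)^q) * ((T+1:ℝ)^q * α^T) := by
    intro T
    have h1 : |∑' y, mstep Q T x y * g y| ≤ Γ2 * (1 + (c + T*j)^q) := by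
      apply mstep_exp_const_bound hQj hQ0 hQ1 hj0
      intro z hz
      have hzx : ‖zToR z - zToR x‖ ≤ T * j := by
        by_contra hcon
        push_neg at hcon
        exact hz (mstep_zero_of_far hQj T x z hcon)
      have hzn : ‖zToR z‖ ≤ c + T*j := by
        have h3 := norm_sub_norm_le (zToR z) (zToR x)
        rw [hc]
        linarith
      calc |g z| ≤ Γ2 * (1 + ‖zToR z‖^q) := hg z
        _ ≤ Γ2 * (1 + (c + T*j)^q) := by
            have h4 := pow_le_pow_left₀ (norm_nonneg (zToR z)) hzn q
            nlinarith
    have h2 : (c + (T:ℝ)*j)^q ≤ (c+j)^q * (T+1:ℝ)^q := by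
      rw [← mul_pow]
      apply pow_le_pow_left₀ (by positivity)
      have hT0 : (0:ℝ) ≤ (T:ℝ) := Nat.cast_nonneg T
      nlinarith
    have hαT : (0:ℝ) < α^T := pow_pos hα0 T
    rw [abs_mul, abs_pow, abs_of_pos hα0]
    have k1 : α ^ T * |∑' y, mstep Q T x y * g y| ≤ α ^ T * (Γ2 * (1 + (c + ↑T * j) ^ q)) :=
      mul_le_mul_of_nonneg_left h1 hαT.le
    have k2 : (Γ2 * α ^ T) * (c + ↑T * j) ^ q ≤ (Γ2 * α ^ T) * ((c + j) ^ q * (↑T + 1) ^ q) :=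
      mul_le_mul_of_nonneg_left h2 (by positivity)
    nlinarith [k1, k2]
  apply squeeze_zero_norm hbd
  have t1 : Filter.Tendsto (fun T : ℕ => Γ2 * α^T) Filter.atTop (nhds 0) := by
    have := (tendsto_pow_atTop_nhds_zero_of_lt_one hα0.le hα1).const_mul Γ2
    simpa using this
  have t2 : Filter.Tendsto (fun T : ℕ => (T+1:ℝ)^q * α^T) Filter.atTop (nhds 0) := by
    have base := tendsto_pow_const_mul_const_pow_of_lt_one q hα0.le hα1
    have shift := base.comp (Filter.tendsto_add_atTop_nat 1)
    have heq : (fun T : ℕ => (T+1:ℝ)^q * α^T)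
        = fun T : ℕ => (1/α) * ((((T+1:ℕ)):ℝ)^q * α^(T+1)) := by
      funext T
      push_cast
      field_simp
      ring
    rw [heq]
    have := shift.const_mul (1/α)
    simpa using this
  have := t1.add (t2.const_mul (Γ2 * (c+j)^q))
  simpa [mul_comm] using this
end chain3


lemma holder_of_ne_top {d : ℕ} {β : ℝ} (hβ0 : 0 < β) {f : EuclideanSpace ℝ (Fin d) → ℝ}
    {Ω : Set (EuclideanSpace ℝ (Fin d))} (hfin : hessHolder β f Ω ≠ ⊤) :
    ∀ a b, a ∈ Ω → b ∈ Ω →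
      ‖iteratedFDeriv ℝ 2 f a - iteratedFDeriv ℝ 2 f b‖
        ≤ (hessHolder β f Ω).toReal * ‖a - b‖ ^ β := by
  intro a b ha hb
  rcases eq_or_ne a b with rfl | hab
  · simp [Real.zero_rpow hβ0.ne']
  · have hle : ENNReal.ofReal (‖iteratedFDeriv ℝ 2 f a - iteratedFDeriv ℝ 2 f b‖ / ‖a - b‖ ^ β)
        ≤ hessHolder β f Ω := by
      rw [hessHolder]
      refine le_iSup_of_le ⟨a, ha⟩ ?_
      refine le_iSup_of_le ⟨b, hb⟩ ?_
      exact le_iSup_of_le hab le_rfl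
    have hpos : 0 < ‖a - b‖ ^ β :=
      Real.rpow_pos_of_pos (by rwa [norm_pos_iff, sub_ne_zero]) β
    have h2 : ‖iteratedFDeriv ℝ 2 f a - iteratedFDeriv ℝ 2 f b‖ / ‖a - b‖ ^ β
        ≤ (hessHolder β f Ω).toReal := by
      have h3 := ENNReal.toReal_mono hfin hle
      rwa [ENNReal.toReal_ofReal (by positivity)] at h3
    calc ‖iteratedFDeriv ℝ 2 f a - iteratedFDeriv ℝ 2 f b‖
        = (‖iteratedFDeriv ℝ 2 f a - iteratedFDeriv ℝ 2 f b‖ / ‖a - b‖ ^ β) * ‖a - b‖ ^ β := by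
          field_simp
      _ ≤ (hessHolder β f Ω).toReal * ‖a - b‖ ^ β :=
          mul_le_mul_of_nonneg_right h2 hpos.le

lemma finite_on_support {d : ℕ} {Q : Zd d → Zd d → ℝ} {α : ℝ} (hα0 : 0 < α)
    (H : Zd d → ℝ≥0∞) (x : Zd d)
    (hfin : (∑' t : ℕ, ENNReal.ofReal (α ^ t)
      * ∑' y, ENNReal.ofReal (mstep Q t x y) * H y) ≠ ⊤)
    (hQ0 : ∀ x y, 0 ≤ Q x y)
    (t : ℕ) (z : Zd d) (hz : mstep Q t x z ≠ 0) : H z ≠ ⊤ := by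
  intro htop
  apply hfin
  rw [eq_top_iff]
  have hmz : 0 < mstep Q t x z := lt_of_le_of_ne (mstep_nonneg hQ0 t x z) (Ne.symm hz)
  have hinner : (⊤ : ℝ≥0∞) ≤ ∑' y, ENNReal.ofReal (mstep Q t x y) * H y := by
    refine le_trans ?_ (ENNReal.le_tsum z)
    rw [htop, ENNReal.mul_top (by simp [ENNReal.ofReal_eq_zero, not_le, hmz])]
  refine le_trans ?_ (ENNReal.le_tsum t)
  rw [top_le_iff.1 hinner, ENNReal.mul_top (by simp [ENNReal.ofReal_eq_zero, not_le, pow_pos hα0 t])]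

lemma partial_le_toReal {d : ℕ} {Q : Zd d → Zd d → ℝ} {j α : ℝ}
    (hQj : ∀ x y, j < ‖zToR y - zToR x‖ → Q x y = 0)
    (hQ0 : ∀ x y, 0 ≤ Q x y) (hα0 : 0 ≤ α)
    (H : Zd d → ℝ≥0∞) (x : Zd d)
    (hfin : (∑' t : ℕ, ENNReal.ofReal (α ^ t)
      * ∑' y, ENNReal.ofReal (mstep Q t x y) * H y) ≠ ⊤)
    (T : ℕ) :
    ∑ t ∈ Finset.range T, α^t * ∑' y, mstep Q t x y * (H y).toReal
      ≤ (∑' t : ℕ, ENNReal.ofReal (α ^ t)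
          * ∑' y, ENNReal.ofReal (mstep Q t x y) * H y).toReal := by
  have hnn : ∀ t : ℕ, 0 ≤ α^t * ∑' y, mstep Q t x y * (H y).toReal := by
    intro t
    apply mul_nonneg (pow_nonneg hα0 t)
    exact tsum_nonneg fun y => mul_nonneg (mstep_nonneg hQ0 t x y) ENNReal.toReal_nonneg
  have key : ENNReal.ofReal (∑ t ∈ Finset.range T, α^t * ∑' y, mstep Q t x y * (H y).toReal)
      ≤ ∑' t : ℕ, ENNReal.ofReal (α ^ t) * ∑' y, ENNReal.ofReal (mstep Q t x y) * H y := by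
    rw [ENNReal.ofReal_sum_of_nonneg (fun t _ => hnn t)]
    refine le_trans (Finset.sum_le_sum (fun t _ => ?_)) (ENNReal.sum_le_tsum _)
    rw [ENNReal.ofReal_mul (pow_nonneg hα0 t)]
    refine mul_le_mul_right ?_ _
    rw [mstep_tsum_eq_sum hQj (fun y => (H y).toReal) t x,
      ENNReal.ofReal_sum_of_nonneg
        (fun y _ => mul_nonneg (mstep_nonneg hQ0 t x y) ENNReal.toReal_nonneg)]
    refine le_trans (Finset.sum_le_sum (fun y _ => ?_)) (ENNReal.sum_le_tsum _)
    rw [ENNReal.ofReal_mul (mstep_nonneg hQ0 t x y)]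
    exact mul_le_mul_right ENNReal.ofReal_toReal_le _
  have h4 := ENNReal.toReal_mono hfin key
  rwa [ENNReal.toReal_ofReal (Finset.sum_nonneg fun t _ => hnn t)] at h4

lemma error_sum_partial {d : ℕ} {Q : Zd d → Zd d → ℝ} {j α : ℝ}
    (hQj : ∀ x y, j < ‖zToR y - zToR x‖ → Q x y = 0)
    (hQ0 : ∀ x y, 0 ≤ Q x y) (hα0 : 0 ≤ α)
    (e : Zd d → ℝ) (H : Zd d → ℝ≥0∞) (x : Zd d) {cst : ℝ} (hcst : 0 ≤ cst)
    (he : ∀ (t : ℕ) z, mstep Q t x z ≠ 0 → e z ≤ cst * (H z).toReal)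
    (T : ℕ) :
    ∑ t ∈ Finset.range T, α^t * ∑' y, mstep Q t x y * e y
      ≤ cst * ∑ t ∈ Finset.range T, α^t * ∑' y, mstep Q t x y * (H y).toReal := by
  rw [Finset.mul_sum]
  refine Finset.sum_le_sum fun t _ => ?_
  have h1 : ∑' y, mstep Q t x y * e y ≤ ∑' y, mstep Q t x y * (cst * (H y).toReal) :=
    mstep_exp_mono hQj hQ0 _ _ t x (fun z hz => he t z hz)
  rw [mstep_exp_const_mul hQj cst (fun y => (H y).toReal) t x] at h1
  calc α^t * ∑' y, mstep Q t x y * e y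
      ≤ α^t * (cst * ∑' y, mstep Q t x y * (H y).toReal) :=
        mul_le_mul_of_nonneg_left h1 (pow_nonneg hα0 t)
    _ = cst * (α^t * ∑' y, mstep Q t x y * (H y).toReal) := by ring


set_option maxHeartbeats 2000000 in
theorem initial_tayloring_bound_optimization
    (d : ℕ) (hd : 1 ≤ d) (α β j₁ j₂ Γ : ℝ) (q : ℕ)
    (hα0 : 0 < α) (hα1 : α < 1) (hβ0 : 0 < β) (hβ1 : β ≤ 1)
    (hj₁ : 1 ≤ j₁) (hj₂ : 1 ≤ j₂) (hΓ : 0 < Γ)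
    (A : Type) [Countable A]
    (𝒰 : Zd d → Set A) (h𝒰 : ∀ x, (𝒰 x).Nonempty)
    (P : A → Zd d → Zd d → ℝ)
    (hP0 : ∀ x, ∀ u ∈ 𝒰 x, ∀ y, 0 ≤ P u x y)
    (hPsum : ∀ x, ∀ u ∈ 𝒰 x, HasSum (P u x) 1)
    (μ : A → Zd d → EuclideanSpace ℝ (Fin d))
    (σ2 : A → Zd d → Matrix (Fin d) (Fin d) ℝ)
    (hμ : ∀ x, ∀ u ∈ 𝒰 x, ∀ i,
      HasSum (fun y => P u x y * (zToR y - zToR x) i) (μ u x i))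
    (hσ2 : ∀ x, ∀ u ∈ 𝒰 x, ∀ i j,
      HasSum (fun y => P u x y * ((zToR y - zToR x) i * (zToR y - zToR x) j)) (σ2 u x i j))
    (r : Zd d → A → ℝ)
    (Us Uh : Zd d → A)
    (hUs𝒰 : ∀ x, Us x ∈ 𝒰 x) (hUh𝒰 : ∀ x, Uh x ∈ 𝒰 x)
    (hjumpUs : ∀ x y, j₁ < ‖zToR y - zToR x‖ → P (Us x) x y = 0)
    (hjumpUh : ∀ x y, j₂ < ‖zToR y - zToR x‖ → P (Uh x) x y = 0)
    (hrUs : ∀ x, |r x (Us x)| ≤ Γ * (1 + ‖zToR x‖ ^ q))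
    (hrUh : ∀ x, |r x (Uh x)| ≤ Γ * (1 + ‖zToR x‖ ^ q))
    -- (b) the Bellman equation for `Vs` with maximizer `Us`
    (Vs : Zd d → ℝ)
    (hVsbd : ∀ x, |Vs x| ≤ Γ * (1 + ‖zToR x‖ ^ q))
    (hVsabs : ∀ x, ∀ u ∈ 𝒰 x, Summable (fun y => P u x y * |Vs y|))
    (hBellmanLUB : ∀ x,
      IsLUB {v : ℝ | ∃ u ∈ 𝒰 x, v = r x u + α * ∑' y : Zd d, P u x y * Vs y} (Vs x))
    (hBellmanAtt : ∀ x, Vs x = r x (Us x) + α * ∑' y : Zd d, P (Us x) x y * Vs y)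
    -- (c) the Taylored equation for `Vh` with maximizer `Uh`
    (Vh : EuclideanSpace ℝ (Fin d) → ℝ)
    (hVhC2 : ContDiff ℝ 2 Vh)
    (hVhbd : ∀ z : EuclideanSpace ℝ (Fin d), |Vh z| ≤ Γ * (1 + ‖z‖ ^ q))
    (hTCPLUB : ∀ x : Zd d,
      IsLUB {v : ℝ | ∃ u ∈ 𝒰 x, v = r x u + α * (fderiv ℝ Vh (zToR x) (μ u x) +
          (1 / 2) * ∑ i, ∑ j, σ2 u x i j * hessianEntry Vh (zToR x) i j)}
        ((1 - α) * Vh (zToR x)))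
    (hTCPAtt : ∀ x : Zd d,
      (1 - α) * Vh (zToR x) = r x (Uh x) + α * (fderiv ℝ Vh (zToR x) (μ (Uh x) x) +
        (1 / 2) * ∑ i, ∑ j, σ2 (Uh x) x i j * hessianEntry Vh (zToR x) i j))
    -- induced stochastic matrices of the two stationary policies
    (QUs QUh : Zd d → Zd d → ℝ)
    (hQUs : ∀ x y, QUs x y = P (Us x) x y)
    (hQUh : ∀ x y, QUh x y = P (Uh x) x y)
    -- (d) the value of the policy `Uh`, absolutely convergent
    (VUh : Zd d → ℝ)
    (hVUhabs : ∀ x, ∀ t : ℕ, Summable (fun y : Zd d => mstep QUh t x y * |r y (Uh y)|))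
    (hVUhabs' : ∀ x,
      Summable (fun t : ℕ => α ^ t * ∑' y : Zd d, mstep QUh t x y * |r y (Uh y)|))
    (hVUh : ∀ x, VUh x = ∑' t : ℕ, α ^ t * ∑' y : Zd d, mstep QUh t x y * r y (Uh y))
    (x : Zd d) :
    max (ENNReal.ofReal |Vh (zToR x) - Vs x|) (ENNReal.ofReal |VUh x - Vs x|) ≤
      ENNReal.ofReal (max j₁ j₂ ^ (2 + β)) *
        ((∑' t : ℕ, ENNReal.ofReal (α ^ t) *
            ∑' y : Zd d, ENNReal.ofReal (mstep QUh t x y) *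
              hessHolder β Vh (Metric.closedBall (zToR y) j₂)) +
          ∑' t : ℕ, ENNReal.ofReal (α ^ t) *
            ∑' y : Zd d, ENNReal.ofReal (mstep QUs t x y) *
              hessHolder β Vh (Metric.closedBall (zToR y) j₁)) := by
  classical
  have hj₂0 : (0:ℝ) ≤ j₂ := le_trans zero_le_one hj₂
  have hj₁0 : (0:ℝ) ≤ j₁ := le_trans zero_le_one hj₁
  have hβ2 : (0:ℝ) ≤ 2 + β := by linarith
  -- chain facts for the two induced matrices
  have hQhe : ∀ z, QUh z = P (Uh z) z := fun z => funext fun y => hQUh z y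
  have hQh0 : ∀ z y, 0 ≤ QUh z y := fun z y => by rw [hQUh]; exact hP0 z (Uh z) (hUh𝒰 z) y
  have hQh1 : ∀ z, HasSum (QUh z) 1 := fun z => by rw [hQhe z]; exact hPsum z (Uh z) (hUh𝒰 z)
  have hQhj : ∀ z y, j₂ < ‖zToR y - zToR z‖ → QUh z y = 0 := fun z y h => by
    rw [hQUh]; exact hjumpUh z y h
  have hQse : ∀ z, QUs z = P (Us z) z := fun z => funext fun y => hQUs z y
  have hQs0 : ∀ z y, 0 ≤ QUs z y := fun z y => by rw [hQUs]; exact hP0 z (Us z) (hUs𝒰 z) y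
  have hQs1 : ∀ z, HasSum (QUs z) 1 := fun z => by rw [hQse z]; exact hPsum z (Us z) (hUs𝒰 z)
  have hQsj : ∀ z y, j₁ < ‖zToR y - zToR z‖ → QUs z y = 0 := fun z y h => by
    rw [hQUs]; exact hjumpUs z y h
  have hMpos : (0:ℝ) < max j₁ j₂ ^ (2 + β) :=
    Real.rpow_pos_of_pos (lt_of_lt_of_le one_pos (le_trans hj₁ (le_max_left _ _))) _
  by_cases htop :
    (∑' t : ℕ, ENNReal.ofReal (α ^ t) *
        ∑' y : Zd d, ENNReal.ofReal (mstep QUh t x y) *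
          hessHolder β Vh (Metric.closedBall (zToR y) j₂)) = ⊤ ∨
    (∑' t : ℕ, ENNReal.ofReal (α ^ t) *
        ∑' y : Zd d, ENNReal.ofReal (mstep QUs t x y) *
          hessHolder β Vh (Metric.closedBall (zToR y) j₁)) = ⊤
  · have hsum : (∑' t : ℕ, ENNReal.ofReal (α ^ t) *
        ∑' y : Zd d, ENNReal.ofReal (mstep QUh t x y) *
          hessHolder β Vh (Metric.closedBall (zToR y) j₂)) +
      (∑' t : ℕ, ENNReal.ofReal (α ^ t) *
        ∑' y : Zd d, ENNReal.ofReal (mstep QUs t x y) *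
          hessHolder β Vh (Metric.closedBall (zToR y) j₁)) = ⊤ := by
      rcases htop with h | h <;> simp [h]
    rw [hsum, ENNReal.mul_top (by simp [ENNReal.ofReal_eq_zero, not_le, hMpos])]
    exact le_top
  push_neg at htop
  obtain ⟨hS2ne, hS1ne⟩ := htop
  set s2 : ℝ := (∑' t : ℕ, ENNReal.ofReal (α ^ t) *
      ∑' y : Zd d, ENNReal.ofReal (mstep QUh t x y) *
        hessHolder β Vh (Metric.closedBall (zToR y) j₂)).toReal with hs2def
  set s1 : ℝ := (∑' t : ℕ, ENNReal.ofReal (α ^ t) *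
      ∑' y : Zd d, ENNReal.ofReal (mstep QUs t x y) *
        hessHolder β Vh (Metric.closedBall (zToR y) j₁)).toReal with hs1def
  have hs2nn : 0 ≤ s2 := ENNReal.toReal_nonneg
  have hs1nn : 0 ≤ s1 := ENNReal.toReal_nonneg
  -- Taylor defects of the two policies
  set dfh : Zd d → ℝ := fun z => (∑' y, QUh z y * Vh (zToR y)) - Vh (zToR z)
    - (fderiv ℝ Vh (zToR z) (μ (Uh z) z) +
        1 / 2 * ∑ i, ∑ k, σ2 (Uh z) z i k * hessianEntry Vh (zToR z) i k) with hdfh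
  set dfs : Zd d → ℝ := fun z => (∑' y, QUs z y * Vh (zToR y)) - Vh (zToR z)
    - (fderiv ℝ Vh (zToR z) (μ (Us z) z) +
        1 / 2 * ∑ i, ∑ k, σ2 (Us z) z i k * hessianEntry Vh (zToR z) i k) with hdfs
  have hdfhbd : ∀ z, hessHolder β Vh (Metric.closedBall (zToR z) j₂) ≠ ⊤ →
      |dfh z| ≤ 1/2 * (hessHolder β Vh (Metric.closedBall (zToR z) j₂)).toReal * j₂ ^ (2+β) := by
    intro z hz
    simp only [hdfh]
    refine one_step_expansion Vh hVhC2 β hβ0 j₂ hj₂ z (QUh z) (hQh0 z) (hQh1 z)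
      (fun y h => hQhj z y h) (μ (Uh z) z) (σ2 (Uh z) z) ?_ ?_ _ ENNReal.toReal_nonneg
      (holder_of_ne_top hβ0 hz)
    · intro i; rw [hQhe z]; exact hμ z (Uh z) (hUh𝒰 z) i
    · intro i k; rw [hQhe z]; exact hσ2 z (Uh z) (hUh𝒰 z) i k
  have hdfsbd : ∀ z, hessHolder β Vh (Metric.closedBall (zToR z) j₁) ≠ ⊤ →
      |dfs z| ≤ 1/2 * (hessHolder β Vh (Metric.closedBall (zToR z) j₁)).toReal * j₁ ^ (2+β) := by
    intro z hz
    simp only [hdfs]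
    refine one_step_expansion Vh hVhC2 β hβ0 j₁ hj₁ z (QUs z) (hQs0 z) (hQs1 z)
      (fun y h => hQsj z y h) (μ (Us z) z) (σ2 (Us z) z) ?_ ?_ _ ENNReal.toReal_nonneg
      (holder_of_ne_top hβ0 hz)
    · intro i; rw [hQse z]; exact hμ z (Us z) (hUs𝒰 z) i
    · intro i k; rw [hQse z]; exact hσ2 z (Us z) (hUs𝒰 z) i k
  -- Bellman / Taylored equation relations
  have hVsUh : ∀ z, r z (Uh z) + α * ∑' y, QUh z y * Vs y ≤ Vs z := by
    intro z
    have hmem := (hBellmanLUB z).1 ⟨Uh z, hUh𝒰 z, rfl⟩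
    rw [hQhe z]
    exact hmem
  have hVh_eq : ∀ z, Vh (zToR z) = r z (Uh z) + α * (∑' y, QUh z y * Vh (zToR y)) - α * dfh z := by
    intro z
    have h1 := hTCPAtt z
    simp only [hdfh]
    linear_combination h1
  have hVsUs_eq : ∀ z, Vs z = r z (Us z) + α * ∑' y, QUs z y * Vs y := by
    intro z; rw [hQse z]; exact hBellmanAtt z
  have hVhUs_ge : ∀ z, r z (Us z) + α * (∑' y, QUs z y * Vh (zToR y)) - α * dfs z ≤ Vh (zToR z) := by
    intro z
    have h1 := (hTCPLUB z).1 ⟨Us z, hUs𝒰 z, rfl⟩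
    simp only [hdfs]
    nlinarith [h1]
  -- recursions for the differences
  have hrecUh : ∀ z, (Vh (zToR z) - Vs z)
      ≤ α * (∑' y, QUh z y * (Vh (zToR y) - Vs y)) + α * |dfh z| := by
    intro z
    have hsub : ∑' y, QUh z y * (Vh (zToR y) - Vs y)
        = (∑' y, QUh z y * Vh (zToR y)) - ∑' y, QUh z y * Vs y := by
      rw [Q_tsum_eq_sum hQhj hj₂0 (fun y => Vh (zToR y) - Vs y) z (subset_refl _),
        Q_tsum_eq_sum hQhj hj₂0 (fun y => Vh (zToR y)) z (subset_refl _),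
        Q_tsum_eq_sum hQhj hj₂0 Vs z (subset_refl _), ← Finset.sum_sub_distrib]
      exact Finset.sum_congr rfl fun y _ => by ring
    rw [hsub, mul_sub]
    have h1 := hVh_eq z
    have h2 := hVsUh z
    have h3 : α * (-dfh z) ≤ α * |dfh z| := mul_le_mul_of_nonneg_left (neg_le_abs _) hα0.le
    rw [mul_neg] at h3
    linarith
  have hrecUs : ∀ z, (Vs z - Vh (zToR z))
      ≤ α * (∑' y, QUs z y * (Vs y - Vh (zToR y))) + α * |dfs z| := by
    intro z
    have hsub : ∑' y, QUs z y * (Vs y - Vh (zToR y))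
        = (∑' y, QUs z y * Vs y) - ∑' y, QUs z y * Vh (zToR y) := by
      rw [Q_tsum_eq_sum hQsj hj₁0 (fun y => Vs y - Vh (zToR y)) z (subset_refl _),
        Q_tsum_eq_sum hQsj hj₁0 (fun y => Vh (zToR y)) z (subset_refl _),
        Q_tsum_eq_sum hQsj hj₁0 Vs z (subset_refl _), ← Finset.sum_sub_distrib]
      exact Finset.sum_congr rfl fun y _ => by ring
    rw [hsub, mul_sub]
    have h1 := hVhUs_ge z
    have h2 := hVsUs_eq z
    have h3 : α * dfs z ≤ α * |dfs z| := mul_le_mul_of_nonneg_left (le_abs_self _) hα0.le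
    linarith
  -- error-sum bounds
  set cst2 : ℝ := α * (1/2 * j₂ ^ (2+β)) with hcst2
  set cst1 : ℝ := α * (1/2 * j₁ ^ (2+β)) with hcst1
  have hj2rnn : (0:ℝ) ≤ j₂ ^ (2+β) := Real.rpow_nonneg hj₂0 _
  have hj1rnn : (0:ℝ) ≤ j₁ ^ (2+β) := Real.rpow_nonneg hj₁0 _
  have hcst2nn : 0 ≤ cst2 := by rw [hcst2]; positivity
  have hcst1nn : 0 ≤ cst1 := by rw [hcst1]; positivity
  have hfin2 : ∀ (t : ℕ) z, mstep QUh t x z ≠ 0 →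
      hessHolder β Vh (Metric.closedBall (zToR z) j₂) ≠ ⊤ := by
    intro t z hz
    exact finite_on_support hα0
      (fun y => hessHolder β Vh (Metric.closedBall (zToR y) j₂)) x hS2ne hQh0 t z hz
  have hfin1 : ∀ (t : ℕ) z, mstep QUs t x z ≠ 0 →
      hessHolder β Vh (Metric.closedBall (zToR z) j₁) ≠ ⊤ := by
    intro t z hz
    exact finite_on_support hα0
      (fun y => hessHolder β Vh (Metric.closedBall (zToR y) j₁)) x hS1ne hQs0 t z hz
  have hpart2 : ∀ T, ∑ t ∈ Finset.range T, α^t * ∑' y, mstep QUh t x y *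
      (hessHolder β Vh (Metric.closedBall (zToR y) j₂)).toReal ≤ s2 := by
    intro T
    have hb := partial_le_toReal hQhj hQh0 hα0.le
      (fun y => hessHolder β Vh (Metric.closedBall (zToR y) j₂)) x hS2ne T
    rw [← hs2def] at hb
    exact hb
  have hpart1 : ∀ T, ∑ t ∈ Finset.range T, α^t * ∑' y, mstep QUs t x y *
      (hessHolder β Vh (Metric.closedBall (zToR y) j₁)).toReal ≤ s1 := by
    intro T
    have hb := partial_le_toReal hQsj hQs0 hα0.le
      (fun y => hessHolder β Vh (Metric.closedBall (zToR y) j₁)) x hS1ne T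
    rw [← hs1def] at hb
    exact hb
  have herr2 : ∀ T, ∑ t ∈ Finset.range T, α^t * ∑' y, mstep QUh t x y * (α * |dfh y|)
      ≤ cst2 * s2 := by
    intro T
    have ha := error_sum_partial hQhj hQh0 hα0.le (fun z => α * |dfh z|)
      (fun y => hessHolder β Vh (Metric.closedBall (zToR y) j₂)) x hcst2nn
      (fun t z hz => by
        have h1 := hdfhbd z (hfin2 t z hz)
        have h2 : α * |dfh z| ≤ α * (1/2 *
            (hessHolder β Vh (Metric.closedBall (zToR z) j₂)).toReal * j₂ ^ (2+β)) :=
          mul_le_mul_of_nonneg_left h1 hα0.le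
        rw [hcst2]
        nlinarith [h2]) T
    refine le_trans ha ?_
    exact mul_le_mul_of_nonneg_left (hpart2 T) hcst2nn
  have herr1 : ∀ T, ∑ t ∈ Finset.range T, α^t * ∑' y, mstep QUs t x y * (α * |dfs y|)
      ≤ cst1 * s1 := by
    intro T
    have ha := error_sum_partial hQsj hQs0 hα0.le (fun z => α * |dfs z|)
      (fun y => hessHolder β Vh (Metric.closedBall (zToR y) j₁)) x hcst1nn
      (fun t z hz => by
        have h1 := hdfsbd z (hfin1 t z hz)
        have h2 : α * |dfs z| ≤ α * (1/2 *
            (hessHolder β Vh (Metric.closedBall (zToR z) j₁)).toReal * j₁ ^ (2+β)) :=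
          mul_le_mul_of_nonneg_left h1 hα0.le
        rw [hcst1]
        nlinarith [h2]) T
    refine le_trans ha ?_
    exact mul_le_mul_of_nonneg_left (hpart1 T) hcst1nn
  -- vanishing terms
  have hDbd : ∀ z, |Vh (zToR z) - Vs z| ≤ (2*Γ) * (1 + ‖zToR z‖ ^ q) := by
    intro z
    have h1 := hVhbd (zToR z)
    have h2 := hVsbd z
    have h3 : |Vh (zToR z) - Vs z| ≤ |Vh (zToR z)| + |Vs z| := abs_sub _ _
    nlinarith [h3]
  have hDbd' : ∀ z, |Vs z - Vh (zToR z)| ≤ (2*Γ) * (1 + ‖zToR z‖ ^ q) := by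
    intro z
    rw [abs_sub_comm]
    exact hDbd z
  have h2Γ : (0:ℝ) ≤ 2*Γ := by linarith
  have hvan2 := tendsto_vanish hQhj hQh0 hQh1 hj₂ hα0 hα1
    (fun z => Vh (zToR z) - Vs z) h2Γ q hDbd x
  have hvan1 := tendsto_vanish hQsj hQs0 hQs1 hj₁ hα0 hα1
    (fun z => Vs z - Vh (zToR z)) h2Γ q hDbd' x
  -- bound on Vh - Vs
  have hDx : Vh (zToR x) - Vs x ≤ cst2 * s2 := by
    have hlim : Filter.Tendsto (fun T : ℕ => α^T *
        (∑' y, mstep QUh T x y * (Vh (zToR y) - Vs y)) + cst2 * s2)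
        Filter.atTop (nhds (cst2 * s2)) := by
      have := hvan2.add (tendsto_const_nhds : Filter.Tendsto (fun _ : ℕ => cst2 * s2) Filter.atTop (nhds (cst2 * s2)))
      rwa [zero_add] at this
    refine ge_of_tendsto hlim (Filter.Eventually.of_forall fun T => ?_)
    have h1 := mstep_iterate hQhj hQh0 hj₂0 hα0.le (fun z => Vh (zToR z) - Vs z)
      (fun z => α * |dfh z|) hrecUh T x
    have h2 := herr2 T
    linarith
  have hDx' : Vs x - Vh (zToR x) ≤ cst1 * s1 := by
    have hlim : Filter.Tendsto (fun T : ℕ => α^T *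
        (∑' y, mstep QUs T x y * (Vs y - Vh (zToR y))) + cst1 * s1)
        Filter.atTop (nhds (cst1 * s1)) := by
      have := hvan1.add (tendsto_const_nhds : Filter.Tendsto (fun _ : ℕ => cst1 * s1) Filter.atTop (nhds (cst1 * s1)))
      rwa [zero_add] at this
    refine ge_of_tendsto hlim (Filter.Eventually.of_forall fun T => ?_)
    have h1 := mstep_iterate hQsj hQs0 hj₁0 hα0.le (fun z => Vs z - Vh (zToR z))
      (fun z => α * |dfs z|) hrecUs T x
    have h2 := herr1 T
    linarith
  -- bound on VUh - Vh via the equality iteration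
  have hsummr : Summable (fun t : ℕ => α^t * ∑' y, mstep QUh t x y * r y (Uh y)) := by
    apply Summable.of_abs
    refine Summable.of_nonneg_of_le (fun t => abs_nonneg _) (fun t => ?_) (hVUhabs' x)
    rw [abs_mul, abs_pow, abs_of_pos hα0]
    exact mul_le_mul_of_nonneg_left (mstep_exp_abs hQhj hQh0 _ t x) (pow_nonneg hα0.le t)
  have hAlim : Filter.Tendsto
      (fun T : ℕ => ∑ t ∈ Finset.range T, α^t * ∑' y, mstep QUh t x y * r y (Uh y))
      Filter.atTop (nhds (VUh x)) := by
    rw [hVUh x]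
    exact hsummr.hasSum.tendsto_sum_nat
  have heq2 : ∀ z, Vh (zToR z) = α * (∑' y, QUh z y * Vh (zToR y))
      + ((-α) * dfh z + r z (Uh z)) := by
    intro z
    have := hVh_eq z
    linarith
  have hIT := mstep_iterate_eq hQhj hj₂0 α (fun z => Vh (zToR z))
    (fun z => (-α) * dfh z + r z (Uh z)) heq2
  have hformula : ∀ T : ℕ, α * (∑ t ∈ Finset.range T, α^t * ∑' y, mstep QUh t x y * dfh y)
      = α^T * (∑' y, mstep QUh T x y * Vh (zToR y))
        + (∑ t ∈ Finset.range T, α^t * ∑' y, mstep QUh t x y * r y (Uh y)) - Vh (zToR x) := by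
    intro T
    have h1 := hIT T x
    have h2 : ∑ t ∈ Finset.range T, α^t *
        ∑' y, mstep QUh t x y * ((-α) * dfh y + r y (Uh y))
        = (∑ t ∈ Finset.range T, α^t * ∑' y, mstep QUh t x y * r y (Uh y))
          - α * ∑ t ∈ Finset.range T, α^t * ∑' y, mstep QUh t x y * dfh y := by
      rw [Finset.mul_sum, ← Finset.sum_sub_distrib]
      refine Finset.sum_congr rfl fun t _ => ?_
      rw [mstep_exp_linear hQhj (-α) dfh (fun y => r y (Uh y)) t x]
      ring
    rw [h2] at h1
    linarith
  have hvanVh := tendsto_vanish hQhj hQh0 hQh1 hj₂ hα0 hα1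
    (fun z => Vh (zToR z)) hΓ.le q (fun z => hVhbd (zToR z)) x
  have hBlim : Filter.Tendsto
      (fun T : ℕ => α * ∑ t ∈ Finset.range T, α^t * ∑' y, mstep QUh t x y * dfh y)
      Filter.atTop (nhds (VUh x - Vh (zToR x))) := by
    have h1 := (hvanVh.add hAlim).sub_const (Vh (zToR x))
    rw [zero_add] at h1
    exact h1.congr (fun T => (hformula T).symm)
  have hBbd : ∀ T : ℕ, |α * ∑ t ∈ Finset.range T, α^t * ∑' y, mstep QUh t x y * dfh y|
      ≤ cst2 * s2 := by
    intro T
    rw [abs_mul, abs_of_pos hα0]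
    have e1 : |∑ t ∈ Finset.range T, α^t * ∑' y, mstep QUh t x y * dfh y|
        ≤ ∑ t ∈ Finset.range T, α^t * ∑' y, mstep QUh t x y * |dfh y| := by
      refine le_trans (Finset.abs_sum_le_sum_abs _ _) (Finset.sum_le_sum fun t _ => ?_)
      rw [abs_mul, abs_pow, abs_of_pos hα0]
      exact mul_le_mul_of_nonneg_left (mstep_exp_abs hQhj hQh0 dfh t x) (pow_nonneg hα0.le t)
    have e2 : ∑ t ∈ Finset.range T, α^t * ∑' y, mstep QUh t x y * |dfh y|
        ≤ (1/2 * j₂ ^ (2+β)) * ∑ t ∈ Finset.range T, α^t * ∑' y, mstep QUh t x y *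
            (hessHolder β Vh (Metric.closedBall (zToR y) j₂)).toReal := by
      refine error_sum_partial hQhj hQh0 hα0.le (fun z => |dfh z|)
        (fun y => hessHolder β Vh (Metric.closedBall (zToR y) j₂)) x (by positivity)
        (fun t z hz => ?_) T
      have h1 := hdfhbd z (hfin2 t z hz)
      nlinarith [h1]
    have e3 := hpart2 T
    have e4 : (1/2 * j₂ ^ (2+β)) * ∑ t ∈ Finset.range T, α^t * ∑' y, mstep QUh t x y *
          (hessHolder β Vh (Metric.closedBall (zToR y) j₂)).toReal
        ≤ (1/2 * j₂ ^ (2+β)) * s2 :=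
      mul_le_mul_of_nonneg_left e3 (by positivity)
    have e5 : α * ∑ t ∈ Finset.range T, α^t * ∑' y, mstep QUh t x y * |dfh y|
        ≤ α * ((1/2 * j₂ ^ (2+β)) * s2) :=
      mul_le_mul_of_nonneg_left (by linarith) hα0.le
    calc α * |∑ t ∈ Finset.range T, α^t * ∑' y, mstep QUh t x y * dfh y|
        ≤ α * ∑ t ∈ Finset.range T, α^t * ∑' y, mstep QUh t x y * |dfh y| :=
          mul_le_mul_of_nonneg_left e1 hα0.le
      _ ≤ α * ((1/2 * j₂ ^ (2+β)) * s2) := e5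
      _ = cst2 * s2 := by rw [hcst2]; ring
  have hVUhVh : |VUh x - Vh (zToR x)| ≤ cst2 * s2 :=
    le_of_tendsto hBlim.abs (Filter.Eventually.of_forall hBbd)
  -- combine the three real bounds
  set K : ℝ := max j₁ j₂ ^ (2+β) with hK
  have hc2K : cst2 ≤ 1/2 * K := by
    have h2M : j₂ ^ (2+β) ≤ K := by
      rw [hK]; exact Real.rpow_le_rpow hj₂0 (le_max_right _ _) hβ2
    rw [hcst2]
    nlinarith [hj2rnn]
  have hc1K : cst1 ≤ 1/2 * K := by
    have h1M : j₁ ^ (2+β) ≤ K := by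
      rw [hK]; exact Real.rpow_le_rpow hj₁0 (le_max_left _ _) hβ2
    rw [hcst1]
    nlinarith [hj1rnn]
  have q2 : cst2 * s2 ≤ 1/2 * K * s2 := mul_le_mul_of_nonneg_right hc2K hs2nn
  have q1 : cst1 * s1 ≤ 1/2 * K * s1 := mul_le_mul_of_nonneg_right hc1K hs1nn
  have p2 : 0 ≤ cst2 * s2 := mul_nonneg hcst2nn hs2nn
  have p1 : 0 ≤ cst1 * s1 := mul_nonneg hcst1nn hs1nn
  have pK2 : 0 ≤ K * s2 := mul_nonneg hMpos.le hs2nn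
  have pK1 : 0 ≤ K * s1 := mul_nonneg hMpos.le hs1nn
  have habs0 : |Vh (zToR x) - Vs x| ≤ cst2 * s2 + cst1 * s1 := by
    rw [abs_le]
    constructor <;> linarith
  have hreal1 : |Vh (zToR x) - Vs x| ≤ K * (s2 + s1) := by
    have : K * (s2 + s1) = K * s2 + K * s1 := by ring
    linarith
  have hreal2 : |VUh x - Vs x| ≤ K * (s2 + s1) := by
    have htri : |VUh x - Vs x| ≤ |VUh x - Vh (zToR x)| + |Vh (zToR x) - Vs x| :=
      abs_sub_le _ _ _
    have : K * (s2 + s1) = K * s2 + K * s1 := by ring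
    linarith
  -- pass to ℝ≥0∞
  have hKK : ENNReal.ofReal (K * (s2 + s1))
      = ENNReal.ofReal K *
        ((∑' t : ℕ, ENNReal.ofReal (α ^ t) *
            ∑' y : Zd d, ENNReal.ofReal (mstep QUh t x y) *
              hessHolder β Vh (Metric.closedBall (zToR y) j₂)) +
          ∑' t : ℕ, ENNReal.ofReal (α ^ t) *
            ∑' y : Zd d, ENNReal.ofReal (mstep QUs t x y) *
              hessHolder β Vh (Metric.closedBall (zToR y) j₁)) := by
    rw [ENNReal.ofReal_mul hMpos.le, ENNReal.ofReal_add hs2nn hs1nn, hs2def, hs1def,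
      ENNReal.ofReal_toReal hS2ne, ENNReal.ofReal_toReal hS1ne]
  apply max_le
  · rw [← hKK]
    exact ENNReal.ofReal_le_ofReal hreal1
  · rw [← hKK]
    exact ENNReal.ofReal_le_ofReal hreal2
end
end

section
/- Uniform Tayloring optimality-gap bound: Let d ≥ 1, α ∈ (0,1), β ∈ (0,1], 𝔧 ≥ 1 a real number, and C ≥ 0. Let 𝒰 be a nonempty set, let r : ℤ^d × 𝒰 → ℝ be bounded, and for each u ∈ 𝒰 let P^u be a stochastic matrix on ℤ^d with jumps bounded by 𝔧, with drift μ_u and diffusion matrix σ²_u. Let V* : ℤ^d → ℝ be bounded and satisfy the Bellman equation V*(x) = sup_{u∈𝒰} { r(x,u) + α Σ_y P^u(x,y) V*(y) } for all x ∈ ℤ^d. Let V̂ : ℝ^d → ℝ be twice continuously differentiable and bounded, with global Hölder bound [D²V̂]_{β,ℝ^d} ≤ C, satisfying the Taylored equation 0 = sup_{u∈𝒰} { r(x,u) + α( μ_u(x)·DV̂(x) + (1/2)·trace(σ²_u(x)·D²V̂(x)) ) } − (1−α)·V̂(x) for every x ∈ ℤ^d. Then sup_{x∈ℤ^d} |V̂(x)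 − V*(x)| ≤ 𝔧^{2+β} C / (1−α). -/
open scoped ENNReal BigOperators

noncomputable section

/-! ### Auxiliary lemmas -/

section Aux
variable {d : ℕ}

lemma euclid_decomp (x : EuclideanSpace ℝ (Fin d)) :
    x = ∑ i, x i • EuclideanSpace.single i (1:ℝ) := by
  ext j
  rw [WithLp.ofLp_sum, Finset.sum_apply]
  simp [EuclideanSpace.single_apply]

lemma update_fin2_zero (a b c : EuclideanSpace ℝ (Fin d)) :
    Function.update ![a, b] 0 c = ![c, b] := by
  funext i; fin_cases i <;> simp [Function.update]

lemma update_fin2_one (a b c : EuclideanSpace ℝ (Fin d)) :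
    Function.update ![a, b] 1 c = ![a, c] := by
  funext i; fin_cases i <;> simp [Function.update]

lemma clm_expand (L : EuclideanSpace ℝ (Fin d) →L[ℝ] ℝ) (w : EuclideanSpace ℝ (Fin d)) :
    L w = ∑ i, w i * L (EuclideanSpace.single i 1) := by
  conv_lhs => rw [euclid_decomp w]
  rw [map_sum]
  simp [smul_eq_mul]

lemma multilin_expand (f : ContinuousMultilinearMap ℝ (fun _ : Fin 2 => EuclideanSpace ℝ (Fin d)) ℝ)
    (v w : EuclideanSpace ℝ (Fin d)) :
    f ![v, w] = ∑ i, ∑ j, v i * w j *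
      f ![EuclideanSpace.single i 1, EuclideanSpace.single j 1] := by
  have key1 : ∀ z : EuclideanSpace ℝ (Fin d), f ![z, w]
      = ∑ i, z i * f ![EuclideanSpace.single i 1, w] := by
    intro z
    have h0 : f ![z, w] = (f.toContinuousLinearMap ![z, w] 0) z := by
      rw [ContinuousMultilinearMap.toContinuousLinearMap_apply, update_fin2_zero]
    rw [h0]
    conv_lhs => rw [euclid_decomp z]
    rw [map_sum]
    refine Finset.sum_congr rfl fun i _ => ?_
    rw [map_smul, ContinuousMultilinearMap.toContinuousLinearMap_apply, update_fin2_zero,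
      smul_eq_mul]
  rw [key1 v]
  refine Finset.sum_congr rfl fun i _ => ?_
  have h0 : f ![EuclideanSpace.single i 1, w]
      = (f.toContinuousLinearMap ![EuclideanSpace.single i (1:ℝ), w] 1) w := by
    rw [ContinuousMultilinearMap.toContinuousLinearMap_apply, update_fin2_one]
  rw [h0]
  conv_lhs => rw [euclid_decomp w]
  rw [map_sum, Finset.mul_sum]
  refine Finset.sum_congr rfl fun j _ => ?_
  rw [map_smul, ContinuousMultilinearMap.toContinuousLinearMap_apply, update_fin2_one,
    smul_eq_mul]
  ring

lemma taylor_bound (f : EuclideanSpace ℝ (Fin d) → ℝ) (hf : ContDiff ℝ 2 f)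
    (C β : ℝ) (hC : 0 ≤ C) (hβ0 : 0 < β)
    (hH : ∀ y z : EuclideanSpace ℝ (Fin d),
      ‖iteratedFDeriv ℝ 2 f y - iteratedFDeriv ℝ 2 f z‖ ≤ C * ‖y - z‖ ^ β)
    (x v : EuclideanSpace ℝ (Fin d)) :
    |f (x + v) - f x - fderiv ℝ f x v - (1/2) * iteratedFDeriv ℝ 2 f x ![v, v]|
      ≤ C * ‖v‖ ^ β * ‖v‖ ^ (2:ℕ) := by
  set F := fderiv ℝ f with hF
  set Q : ℝ := iteratedFDeriv ℝ 2 f x ![v, v] with hQ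
  set K : ℝ := C * ‖v‖ ^ β * ‖v‖ ^ (2:ℕ) with hK
  have hγ : ∀ t : ℝ, HasDerivAt (fun s : ℝ => x + s • v) v t := by
    intro t
    simpa using ((hasDerivAt_id t).smul_const v).const_add x
  have hFdiff : ContDiff ℝ 1 F := hf.fderiv_right (by norm_num)
  have hA : ∀ t : ℝ, HasDerivAt (fun s : ℝ => F (x + s • v) v)
      (iteratedFDeriv ℝ 2 f (x + t • v) ![v, v]) t := by
    intro t
    have h1 : HasDerivAt (fun s : ℝ => F (x + s • v))
        (fderiv ℝ F (x + t • v) v) t :=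
      ((hFdiff.differentiable (by norm_num)).differentiableAt.hasFDerivAt).comp_hasDerivAt t (hγ t)
    have h2 := h1.clm_apply (hasDerivAt_const t v)
    simpa [iteratedFDeriv_two_apply] using h2
  have hBnd : ∀ t ∈ Set.Icc (0:ℝ) 1,
      ‖iteratedFDeriv ℝ 2 f (x + t • v) ![v, v] - Q‖ ≤ K := by
    intro t ht
    have h1 : iteratedFDeriv ℝ 2 f (x + t • v) ![v, v] - Q
        = (iteratedFDeriv ℝ 2 f (x + t • v) - iteratedFDeriv ℝ 2 f x) ![v, v] := by
      simp [hQ]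
    rw [h1]
    have hle1 : ‖(iteratedFDeriv ℝ 2 f (x + t • v) - iteratedFDeriv ℝ 2 f x) ![v, v]‖
        ≤ ‖iteratedFDeriv ℝ 2 f (x + t • v) - iteratedFDeriv ℝ 2 f x‖
            * ∏ i, ‖(![v, v] : Fin 2 → _) i‖ :=
      ContinuousMultilinearMap.le_opNorm _ _
    have hprod : (∏ i, ‖(![v, v] : Fin 2 → _) i‖) = ‖v‖ * ‖v‖ := by
      rw [Fin.prod_univ_two]; simp
    have hnorm : ‖(x + t • v) - x‖ = t * ‖v‖ := by
      simp [norm_smul, abs_of_nonneg ht.1]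
    have h2 : (t * ‖v‖) ^ β ≤ ‖v‖ ^ β := by
      apply Real.rpow_le_rpow (mul_nonneg ht.1 (norm_nonneg v)) _ hβ0.le
      nlinarith [norm_nonneg v, ht.1, ht.2]
    have h3 : ‖iteratedFDeriv ℝ 2 f (x + t • v) - iteratedFDeriv ℝ 2 f x‖ ≤ C * ‖v‖ ^ β := by
      refine (hH _ _).trans ?_
      rw [hnorm]
      exact mul_le_mul_of_nonneg_left h2 hC
    calc ‖(iteratedFDeriv ℝ 2 f (x + t • v) - iteratedFDeriv ℝ 2 f x) ![v, v]‖
        ≤ (C * ‖v‖ ^ β) * (‖v‖ * ‖v‖) := by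
          rw [hprod] at hle1
          refine hle1.trans (mul_le_mul_of_nonneg_right h3 (by positivity))
      _ = K := by rw [hK]; ring
  have hAmvt : ∀ t ∈ Set.Icc (0:ℝ) 1, |F (x + t • v) v - F x v - t * Q| ≤ K := by
    intro t ht
    have hderiv : ∀ s ∈ Set.Icc (0:ℝ) 1,
        HasDerivWithinAt (fun s : ℝ => F (x + s • v) v - F x v - s * Q)
          (iteratedFDeriv ℝ 2 f (x + s • v) ![v, v] - Q) (Set.Icc 0 1) s := by
      intro s _
      have := ((hA s).sub (hasDerivAt_const s (F x v))).sub ((hasDerivAt_id s).mul_const Q)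
      rw [show iteratedFDeriv ℝ 2 f (x + s • v) ![v, v] - 0 - 1 * Q
          = iteratedFDeriv ℝ 2 f (x + s • v) ![v, v] - Q by ring] at this
      exact this.hasDerivWithinAt
    have h0 : F (x + (0:ℝ) • v) v - F x v - 0 * Q = 0 := by simp
    calc |F (x + t • v) v - F x v - t * Q|
        = |(F (x + t • v) v - F x v - t * Q) -
            (F (x + (0:ℝ) • v) v - F x v - 0 * Q)| := by rw [h0, sub_zero]
      _ ≤ K * |t - 0| := by
          have := Convex.norm_image_sub_le_of_norm_hasDerivWithin_le hderiv
            (fun s hs => hBnd s hs) (convex_Icc 0 1) (Set.left_mem_Icc.2 one_pos.le) ht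
          simpa [Real.norm_eq_abs] using this
      _ ≤ K := by
          rw [sub_zero]
          have hK0 : 0 ≤ K := le_trans (norm_nonneg _) (hBnd 0 (Set.left_mem_Icc.2 one_pos.le))
          have : |t| ≤ 1 := abs_le.2 ⟨by linarith [ht.1], ht.2⟩
          nlinarith [abs_nonneg t]
  have hBderiv : ∀ s ∈ Set.Icc (0:ℝ) 1,
      HasDerivWithinAt (fun s : ℝ => f (x + s • v) - s * (F x v) - s ^ 2 / 2 * Q)
        (F (x + s • v) v - F x v - s * Q) (Set.Icc 0 1) s := by
    intro s _
    have h1 : HasDerivAt (fun s : ℝ => f (x + s • v)) (F (x + s • v) v) s :=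
      ((hf.differentiable (by norm_num)).differentiableAt.hasFDerivAt).comp_hasDerivAt s (hγ s)
    have h2 : HasDerivAt (fun s : ℝ => s ^ 2 / 2 * Q) (s * Q) s := by
      have := ((hasDerivAt_pow 2 s).div_const 2).mul_const Q
      convert this using 1 <;> [rfl; rfl; (push_cast; ring)]
    have := (h1.sub ((hasDerivAt_id s).mul_const (F x v))).sub h2
    rw [show F (x + s • v) v - 1 * F x v - s * Q = F (x + s • v) v - F x v - s * Q by ring] at this
    exact this.hasDerivWithinAt
  have hfinal := Convex.norm_image_sub_le_of_norm_hasDerivWithin_le hBderiv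
    (fun s hs => by simpa [Real.norm_eq_abs] using hAmvt s hs) (convex_Icc 0 1)
    (Set.left_mem_Icc.2 one_pos.le) (Set.right_mem_Icc.2 one_pos.le)
  simp only [one_smul, zero_smul, add_zero, Real.norm_eq_abs] at hfinal
  calc |f (x + v) - f x - fderiv ℝ f x v - (1/2) * Q|
      = |(f (x + v) - 1 * F x v - 1 ^ 2 / 2 * Q) - (f x - 0 * F x v - 0 ^ 2 / 2 * Q)| := by
        rw [hF]; ring_nf
    _ ≤ K * |1 - 0| := by simpa [Real.norm_eq_abs] using hfinal
    _ = K := by norm_num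

end Aux

lemma myBddAbove {A : Type*} (f : A → ℝ) (M : ℝ) (h : ∀ u, f u ≤ M) :
    BddAbove (Set.range f) :=
  ⟨M, Set.forall_mem_range.2 h⟩

lemma my_ciSup_add {A : Type*} [Nonempty A] (f : A → ℝ) (hf : BddAbove (Set.range f)) (c : ℝ) :
    (⨆ u, (f u + c)) = (⨆ u, f u) + c := by
  apply le_antisymm
  · exact ciSup_le fun u => add_le_add_left (le_ciSup hf u) c
  · have hb : BddAbove (Set.range fun u => f u + c) := by
      obtain ⟨M, hM⟩ := hf
      exact ⟨M + c, Set.forall_mem_range.2 fun u =>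
        add_le_add_left (hM (Set.mem_range_self u)) c⟩
    have : (⨆ u, f u) ≤ (⨆ u, (f u + c)) - c :=
      ciSup_le fun u => le_sub_iff_add_le.2 (le_ciSup hb u)
    linarith

lemma ciSup_abs_diff {A : Type*} [Nonempty A] (f g : A → ℝ)
    (hf : BddAbove (Set.range f)) (hg : BddAbove (Set.range g)) (c : ℝ)
    (h : ∀ u, |f u - g u| ≤ c) : |(⨆ u, f u) - ⨆ u, g u| ≤ c := by
  rw [abs_le]
  constructor
  · have : (⨆ u, g u) ≤ (⨆ u, f u) + c :=
      ciSup_le fun u => by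
        have := (abs_le.1 (h u)).1
        linarith [le_ciSup hf u]
    linarith
  · have : (⨆ u, f u) ≤ (⨆ u, g u) + c :=
      ciSup_le fun u => by
        have := (abs_le.1 (h u)).2
        linarith [le_ciSup hg u]
    linarith

lemma abs_tsum_le_of_hasSum {ι : Type*} (f p : ι → ℝ) (s c : ℝ)
    (hf : HasSum f s) (hp : HasSum p c) (hb : ∀ i, |f i| ≤ p i) : |s| ≤ c := by
  rw [abs_le]
  constructor
  · have := hasSum_le (fun i => (abs_le.1 (hb i)).1) hp.neg hf
    linarith
  · exact hasSum_le (fun i => (abs_le.1 (hb i)).2) hf hp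

theorem uniform_tayloring_gap_bound
    (d : ℕ) (hd : 1 ≤ d) (α β jmp C : ℝ)
    (hα0 : 0 < α) (hα1 : α < 1) (hβ0 : 0 < β) (hβ1 : β ≤ 1)
    (hjmp : 1 ≤ jmp) (hC : 0 ≤ C)
    (A : Type) [Nonempty A]
    (r : Zd d → A → ℝ) (Cr : ℝ) (hr : ∀ x u, |r x u| ≤ Cr)
    (P : A → Zd d → Zd d → ℝ)
    (hP0 : ∀ u x y, 0 ≤ P u x y)
    (hPsum : ∀ u x, HasSum (P u x) 1)
    (hjump : ∀ u x y, jmp < ‖zToR y - zToR x‖ → P u x y = 0)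
    (μ : A → Zd d → EuclideanSpace ℝ (Fin d))
    (σ2 : A → Zd d → Matrix (Fin d) (Fin d) ℝ)
    (hμ : ∀ u x i, HasSum (fun y => P u x y * (zToR y - zToR x) i) (μ u x i))
    (hσ2 : ∀ u x i j,
      HasSum (fun y => P u x y * ((zToR y - zToR x) i * (zToR y - zToR x) j)) (σ2 u x i j))
    (Vs : Zd d → ℝ) (CV : ℝ) (hVsbd : ∀ x, |Vs x| ≤ CV)
    (hBellman : ∀ x, Vs x = ⨆ u : A, (r x u + α * ∑' y : Zd d, P u x y * Vs y))
    (Vh : EuclideanSpace ℝ (Fin d) → ℝ)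
    (hVhC2 : ContDiff ℝ 2 Vh)
    (CVh : ℝ) (hVhbd : ∀ z : EuclideanSpace ℝ (Fin d), |Vh z| ≤ CVh)
    (hHolder : ∀ y z : EuclideanSpace ℝ (Fin d),
      ‖iteratedFDeriv ℝ 2 Vh y - iteratedFDeriv ℝ 2 Vh z‖ ≤ C * ‖y - z‖ ^ β)
    (hTCP : ∀ x : Zd d,
      0 = (⨆ u : A, (r x u + α * (fderiv ℝ Vh (zToR x) (μ u x) +
            (1 / 2) * ∑ i, ∑ j, σ2 u x i j * hessianEntry Vh (zToR x) i j))) -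
        (1 - α) * Vh (zToR x)) :
    ∀ x : Zd d, |Vh (zToR x) - Vs x| ≤ jmp ^ (2 + β) * C / (1 - α) := by
  have hjpos : (0:ℝ) < jmp := lt_of_lt_of_le one_pos hjmp
  set ε : ℝ := jmp ^ (2 + β) * C with hεdef
  have hεsplit : jmp ^ (2 + β) = jmp ^ (2:ℕ) * jmp ^ β := by
    rw [show (2:ℝ) + β = ((2:ℕ):ℝ) + β by push_cast; ring, Real.rpow_add hjpos,
      Real.rpow_natCast]
  have hε0 : 0 ≤ ε := by
    rw [hεdef]
    exact mul_nonneg (Real.rpow_nonneg hjpos.le _) hC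
  -- basic bounds
  have hCVh0 : 0 ≤ CVh := le_trans (abs_nonneg _) (hVhbd 0)
  have hCV0 : 0 ≤ CV := le_trans (abs_nonneg _) (hVsbd fun _ => 0)
  -- Taylor error bounded by ε, for ‖w‖ ≤ jmp
  have hTaylorε : ∀ w : EuclideanSpace ℝ (Fin d), ‖w‖ ≤ jmp →
      C * ‖w‖ ^ β * ‖w‖ ^ (2:ℕ) ≤ ε := by
    intro w hw
    rw [hεdef, hεsplit]
    have h1 : ‖w‖ ^ β ≤ jmp ^ β := Real.rpow_le_rpow (norm_nonneg w) hw hβ0.le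
    have h2 : ‖w‖ ^ (2:ℕ) ≤ jmp ^ (2:ℕ) := pow_le_pow_left₀ (norm_nonneg w) hw 2
    have h3 : (0:ℝ) ≤ ‖w‖ ^ β := Real.rpow_nonneg (norm_nonneg w) β
    have h4 : (0:ℝ) ≤ jmp ^ β := Real.rpow_nonneg hjpos.le β
    calc C * ‖w‖ ^ β * ‖w‖ ^ (2:ℕ)
        ≤ (C * jmp ^ β) * jmp ^ (2:ℕ) :=
          mul_le_mul (mul_le_mul_of_nonneg_left h1 hC) h2
            (pow_nonneg (norm_nonneg w) 2) (mul_nonneg hC h4)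
      _ = jmp ^ (2:ℕ) * jmp ^ β * C := by ring
  -- summability facts
  have hsummVh : ∀ u x, Summable (fun y => P u x y * Vh (zToR y)) := by
    intro u x
    refine Summable.of_abs (Summable.of_nonneg_of_le (fun y => abs_nonneg _) (fun y => ?_)
      (((hPsum u x).summable).mul_right CVh))
    rw [abs_mul, abs_of_nonneg (hP0 u x y)]
    exact mul_le_mul_of_nonneg_left (hVhbd _) (hP0 u x y)
  have hsummVs : ∀ u x, Summable (fun y => P u x y * Vs y) := by
    intro u x
    refine Summable.of_abs (Summable.of_nonneg_of_le (fun y => abs_nonneg _) (fun y => ?_)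
      (((hPsum u x).summable).mul_right CV))
    rw [abs_mul, abs_of_nonneg (hP0 u x y)]
    exact mul_le_mul_of_nonneg_left (hVsbd _) (hP0 u x y)
  -- the gap function and its sup
  set gap : Zd d → ℝ := fun x => |Vh (zToR x) - Vs x| with hgapdef
  have hgapBdd : BddAbove (Set.range gap) := by
    refine myBddAbove gap (CVh + CV) fun x => ?_
    calc gap x ≤ |Vh (zToR x)| + |Vs x| := abs_sub _ _
      _ ≤ CVh + CV := add_le_add (hVhbd _) (hVsbd _)
  set M : ℝ := ⨆ x, gap x with hMdef
  have hgapleM : ∀ x, gap x ≤ M := fun x => le_ciSup hgapBdd x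
  -- main step
  have hstep : ∀ x : Zd d, gap x ≤ α * M + α * ε := by
    intro x
    -- per-control data
    set L : EuclideanSpace ℝ (Fin d) →L[ℝ] ℝ := fderiv ℝ Vh (zToR x) with hLdef
    set H : Fin d → Fin d → ℝ := hessianEntry Vh (zToR x) with hHdef
    set iF2 := iteratedFDeriv ℝ 2 Vh (zToR x) with hiF2def
    -- HasSum facts
    have hS0 : ∀ u, HasSum (fun y => P u x y * Vh (zToR x)) (Vh (zToR x)) := by
      intro u; simpa using (hPsum u x).mul_right (Vh (zToR x))
    have hS1 : ∀ u, HasSum (fun y => P u x y * L (zToR y - zToR x)) (L (μ u x)) := by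
      intro u
      have h2 := hasSum_sum (s := Finset.univ)
        (f := fun i y => (P u x y * (zToR y - zToR x) i) * L (EuclideanSpace.single i 1))
        (a := fun i => μ u x i * L (EuclideanSpace.single i 1))
        (fun i _ => (hμ u x i).mul_right _)
      have heq : (fun y => ∑ i, (P u x y * (zToR y - zToR x) i) * L (EuclideanSpace.single i 1))
          = fun y => P u x y * L (zToR y - zToR x) := by
        funext y
        rw [clm_expand L (zToR y - zToR x), Finset.mul_sum]
        exact Finset.sum_congr rfl fun i _ => by ring
      have heq2 : (∑ i, μ u x i * L (EuclideanSpace.single i 1)) = L (μ u x) :=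
        (clm_expand _ _).symm
      rw [heq, heq2] at h2
      exact h2
    have hS2 : ∀ u, HasSum (fun y => P u x y * ((1/2) * iF2 ![zToR y - zToR x, zToR y - zToR x]))
        ((1/2) * ∑ i, ∑ j, σ2 u x i j * H i j) := by
      intro u
      have h2 := hasSum_sum (s := Finset.univ)
        (f := fun i y => ∑ j, (1/2) * H i j *
          (P u x y * ((zToR y - zToR x) i * (zToR y - zToR x) j)))
        (a := fun i => ∑ j, (1/2) * H i j * σ2 u x i j)
        (fun i _ => hasSum_sum (s := Finset.univ)
          (f := fun j y => (1/2) * H i j *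
            (P u x y * ((zToR y - zToR x) i * (zToR y - zToR x) j)))
          (a := fun j => (1/2) * H i j * σ2 u x i j)
          (fun j _ => (hσ2 u x i j).mul_left _))
      have heq : (fun y => ∑ i, ∑ j, (1/2) * H i j *
            (P u x y * ((zToR y - zToR x) i * (zToR y - zToR x) j)))
          = fun y => P u x y * ((1/2) * iF2 ![zToR y - zToR x, zToR y - zToR x]) := by
        funext y
        rw [hiF2def, multilin_expand]
        rw [Finset.mul_sum, Finset.mul_sum]
        refine Finset.sum_congr rfl fun i _ => ?_
        rw [Finset.mul_sum, Finset.mul_sum]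
        refine Finset.sum_congr rfl fun j _ => ?_
        rw [hHdef]
        show (1/2) * hessianEntry Vh (zToR x) i j * _ = _
        rw [hessianEntry]
        ring
      have heq2 : (∑ i, ∑ j, (1/2) * H i j * σ2 u x i j)
          = (1/2) * ∑ i, ∑ j, σ2 u x i j * H i j := by
        rw [Finset.mul_sum]
        refine Finset.sum_congr rfl fun i _ => ?_
        rw [Finset.mul_sum]
        exact Finset.sum_congr rfl fun j _ => by ring
      rw [heq, heq2] at h2
      exact h2
    -- Taylor error per control
    set T : A → ℝ := fun u => ∑' y, P u x y * Vh (zToR y) with hTdef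
    have hS3 : ∀ u, HasSum (fun y => P u x y * Vh (zToR y)) (T u) :=
      fun u => (hsummVh u x).hasSum
    set Efn : A → ℝ := fun u => T u - Vh (zToR x) - L (μ u x)
        - (1/2) * ∑ i, ∑ j, σ2 u x i j * H i j with hEdef
    have hErrSum : ∀ u, HasSum (fun y => P u x y *
        (Vh (zToR y) - Vh (zToR x) - L (zToR y - zToR x)
          - (1/2) * iF2 ![zToR y - zToR x, zToR y - zToR x])) (Efn u) := by
      intro u
      have h := (((hS3 u).sub (hS0 u)).sub (hS1 u)).sub (hS2 u)
      have heq : (fun y => P u x y * Vh (zToR y) - P u x y * Vh (zToR x)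
            - P u x y * L (zToR y - zToR x)
            - P u x y * ((1/2) * iF2 ![zToR y - zToR x, zToR y - zToR x]))
          = fun y => P u x y * (Vh (zToR y) - Vh (zToR x) - L (zToR y - zToR x)
            - (1/2) * iF2 ![zToR y - zToR x, zToR y - zToR x]) := by
        funext y; ring
      rw [heq] at h
      exact h
    have hEbnd : ∀ u, |Efn u| ≤ ε := by
      intro u
      refine abs_tsum_le_of_hasSum _ (fun y => P u x y * ε) _ _ (hErrSum u)
        (by simpa using (hPsum u x).mul_right ε) (fun y => ?_)
      rcases eq_or_ne (P u x y) 0 with h0 | h0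
      · simp [h0]
      · have hPy : jmp ≥ ‖zToR y - zToR x‖ := by
          by_contra hcon
          exact h0 (hjump u x y (lt_of_not_ge hcon))
        have hzy : zToR y = zToR x + (zToR y - zToR x) := by abel
        have htay := taylor_bound Vh hVhC2 C β hC hβ0 hHolder (zToR x) (zToR y - zToR x)
        rw [← hzy] at htay
        rw [abs_mul, abs_of_nonneg (hP0 u x y)]
        have : |Vh (zToR y) - Vh (zToR x) - L (zToR y - zToR x)
            - (1/2) * iF2 ![zToR y - zToR x, zToR y - zToR x]| ≤ ε :=
          le_trans htay (hTaylorε _ hPy)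
        exact mul_le_mul_of_nonneg_left this (hP0 u x y)
    -- bounds on T
    have hTbnd : ∀ u, |T u| ≤ CVh := by
      intro u
      refine abs_tsum_le_of_hasSum _ (fun y => P u x y * CVh) _ _ (hS3 u)
        (by simpa using (hPsum u x).mul_right CVh) (fun y => ?_)
      rw [abs_mul, abs_of_nonneg (hP0 u x y)]
      exact mul_le_mul_of_nonneg_left (hVhbd _) (hP0 u x y)
    set T4 : A → ℝ := fun u => ∑' y, P u x y * Vs y with hT4def
    have hS4 : ∀ u, HasSum (fun y => P u x y * Vs y) (T4 u) :=
      fun u => (hsummVs u x).hasSum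
    have hT4bnd : ∀ u, |T4 u| ≤ CV := by
      intro u
      refine abs_tsum_le_of_hasSum _ (fun y => P u x y * CV) _ _ (hS4 u)
        (by simpa using (hPsum u x).mul_right CV) (fun y => ?_)
      rw [abs_mul, abs_of_nonneg (hP0 u x y)]
      exact mul_le_mul_of_nonneg_left (hVsbd _) (hP0 u x y)
    have hTT4 : ∀ u, |T u - T4 u| ≤ M := by
      intro u
      refine abs_tsum_le_of_hasSum (fun y => P u x y * Vh (zToR y) - P u x y * Vs y)
        (fun y => P u x y * M) _ _ ((hS3 u).sub (hS4 u))
        (by simpa using (hPsum u x).mul_right M) (fun y => ?_)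
      show |P u x y * Vh (zToR y) - P u x y * Vs y| ≤ P u x y * M
      have heq : P u x y * Vh (zToR y) - P u x y * Vs y = P u x y * (Vh (zToR y) - Vs y) := by
        ring
      rw [heq, abs_mul, abs_of_nonneg (hP0 u x y)]
      exact mul_le_mul_of_nonneg_left (hgapleM y) (hP0 u x y)
    -- the three families
    set fam : A → ℝ := fun u => r x u + α * (L (μ u x) +
        (1/2) * ∑ i, ∑ j, σ2 u x i j * H i j) with hfamdef
    set g : A → ℝ := fun u => r x u + α * T4 u with hgdef
    have hgeq : ∀ u, g u = r x u + α * ∑' y, P u x y * Vs y := fun u => rfl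
    -- identity : fam u + α * Vh x = r + α T u - α Efn u
    have hident : ∀ u, fam u + α * Vh (zToR x) = r x u + α * T u - α * Efn u := by
      intro u
      rw [hfamdef, hEdef]
      ring
    -- boundedness
    have hfamBdd : BddAbove (Set.range fam) := by
      refine myBddAbove fam (Cr + α * CVh + α * CVh + α * ε) fun u => ?_
      have h1 : fam u = r x u + α * T u - α * Efn u - α * Vh (zToR x) := by
        rw [← hident u]; ring
      rw [h1]
      have hTu := abs_le.1 (hTbnd u)
      have hEu := abs_le.1 (hEbnd u)
      have hVu := abs_le.1 (hVhbd (zToR x))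
      have hru := abs_le.1 (hr x u)
      have p1 : α * T u ≤ α * CVh := mul_le_mul_of_nonneg_left hTu.2 hα0.le
      have p2 := mul_le_mul_of_nonneg_left hEu.1 hα0.le
      have p3 := mul_le_mul_of_nonneg_left hVu.1 hα0.le
      rw [mul_neg] at p2 p3
      linarith
    have hhBdd : BddAbove (Set.range fun u => fam u + α * Vh (zToR x)) := by
      obtain ⟨B, hB⟩ := hfamBdd
      exact ⟨B + α * Vh (zToR x), Set.forall_mem_range.2 fun u =>
        add_le_add_left (hB (Set.mem_range_self u)) _⟩
    have hgBdd : BddAbove (Set.range g) := by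
      refine myBddAbove g (Cr + α * CV) fun u => ?_
      show r x u + α * T4 u ≤ Cr + α * CV
      have h1 := abs_le.1 (hT4bnd u)
      have h2 := abs_le.1 (hr x u)
      have p1 : α * T4 u ≤ α * CV := mul_le_mul_of_nonneg_left h1.2 hα0.le
      linarith
    -- Vh x = ⨆ (fam + α Vh x)
    have hTCPx := hTCP x
    have hsupfam : (⨆ u, fam u) = (1 - α) * Vh (zToR x) := by linarith [hTCPx]
    have hVhsup : Vh (zToR x) = ⨆ u, (fam u + α * Vh (zToR x)) := by
      rw [my_ciSup_add fam hfamBdd, hsupfam]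
      ring
    have hVssup : Vs x = ⨆ u, g u := hBellman x
    -- compare
    have hdiff : ∀ u, |(fam u + α * Vh (zToR x)) - g u| ≤ α * M + α * ε := by
      intro u
      rw [hident u, hgdef]
      have h1 : r x u + α * T u - α * Efn u - (r x u + α * T4 u)
          = α * (T u - T4 u) - α * Efn u := by ring
      rw [h1]
      calc |α * (T u - T4 u) - α * Efn u| ≤ |α * (T u - T4 u)| + |α * Efn u| := abs_sub _ _
        _ = α * |T u - T4 u| + α * |Efn u| := by
            rw [abs_mul, abs_mul, abs_of_nonneg hα0.le]
        _ ≤ α * M + α * ε := add_le_add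
            (mul_le_mul_of_nonneg_left (hTT4 u) hα0.le)
            (mul_le_mul_of_nonneg_left (hEbnd u) hα0.le)
    calc gap x = |(⨆ u, (fam u + α * Vh (zToR x))) - ⨆ u, g u| := by
          rw [hgapdef]
          simp only []
          rw [← hVhsup, ← hVssup]
      _ ≤ α * M + α * ε := ciSup_abs_diff _ _ hhBdd hgBdd _ hdiff
  -- conclude
  have hMle : M ≤ α * M + α * ε := ciSup_le hstep
  have hMfin : M ≤ ε / (1 - α) := by
    rw [le_div_iff₀ (by linarith)]
    nlinarith [hε0]
  intro x
  calc |Vh (zToR x) - Vs x| = gap x := rfl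
    _ ≤ M := hgapleM x
    _ ≤ ε / (1 - α) := hMfin
    _ = jmp ^ (2 + β) * C / (1 - α) := by rw [hεdef]
end
end

section
/- Explicit solution of the Taylored equation for the discrete-time single-server queue in heavy traffic: Let 0 < λ < μ be real numbers with λ + μ = 1, and let α ∈ (0,1). Define γ₋ := (μ−λ) − √((μ−λ)² + 2(1−α)/α), c₁ := −1/((1−α)γ₋), and V̂(x) := −α(μ−λ)/(1−α)² + x/(1−α) + c₁·e^{γ₋ x}. Then γ₋ < 0, V̂'(0) = 0, and for every x ∈ ℝ, 0 = x + α( (λ−μ)·V̂'(x) + (1/2)·V̂''(x) ) − (1−α)·V̂(x). -/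
noncomputable section

theorem heavy_traffic_taylored_solution
    (lam mu α : ℝ) (hlam : 0 < lam) (hlm : lam < mu) (hsum : lam + mu = 1)
    (hα0 : 0 < α) (hα1 : α < 1)
    (γ c₁ : ℝ) (Vh : ℝ → ℝ)
    (hγ : γ = (mu - lam) - Real.sqrt ((mu - lam) ^ 2 + 2 * (1 - α) / α))
    (hc₁ : c₁ = -1 / ((1 - α) * γ))
    (hVh : ∀ x : ℝ, Vh x = -α * (mu - lam) / (1 - α) ^ 2 + x / (1 - α) +
      c₁ * Real.exp (γ * x)) :
    γ < 0 ∧ deriv Vh 0 = 0 ∧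
      ∀ x : ℝ, 0 = x + α * ((lam - mu) * deriv Vh x + (1 / 2) * deriv (deriv Vh) x) -
        (1 - α) * Vh x := by
  have hα1' : (1 : ℝ) - α > 0 := by linarith
  have hd : mu - lam > 0 := by linarith
  have hpos : 2 * (1 - α) / α > 0 := by positivity
  have hsq : Real.sqrt ((mu - lam) ^ 2 + 2 * (1 - α) / α) > mu - lam := by
    rw [gt_iff_lt, show ((mu - lam) ^ 2 + 2 * (1 - α) / α) = ((mu-lam)^2 + 2 * (1 - α) / α) from rfl]
    exact (Real.lt_sqrt (by positivity)).mpr (by linarith)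
  have hγneg : γ < 0 := by rw [hγ]; linarith
  have hγne : γ ≠ 0 := ne_of_lt hγneg
  -- key quadratic identity: γ² - 2(mu-lam)γ = 2(1-α)/α
  have hquad : γ ^ 2 - 2 * (mu - lam) * γ = 2 * (1 - α) / α := by
    have hs : Real.sqrt ((mu - lam) ^ 2 + 2 * (1 - α) / α) ^ 2
        = (mu - lam) ^ 2 + 2 * (1 - α) / α := Real.sq_sqrt (by positivity)
    rw [hγ]; ring_nf; ring_nf at hs; linarith
  have hc₁γ : c₁ * γ = -1 / (1 - α) := by
    rw [hc₁]; field_simp; try ring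
  -- derivative of Vh
  have hVh' : ∀ x, HasDerivAt Vh (1 / (1 - α) + c₁ * γ * Real.exp (γ * x)) x := by
    intro x
    have he : HasDerivAt (fun x : ℝ => Real.exp (γ * x)) (Real.exp (γ * x) * γ) x := by
      simpa using (((hasDerivAt_id x).const_mul γ).exp)
    have h1 : HasDerivAt (fun x : ℝ => -α * (mu - lam) / (1 - α) ^ 2 + x / (1 - α) +
        c₁ * Real.exp (γ * x))
        (0 + 1 / (1 - α) + c₁ * (Real.exp (γ * x) * γ)) x :=
      ((hasDerivAt_const x _).add ((hasDerivAt_id x).div_const _)).add (he.const_mul c₁)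
    have := h1.congr_of_eventuallyEq (Filter.Eventually.of_forall fun y => (hVh y))
    exact this.congr_deriv (by ring)
  have hderiv : deriv Vh = fun x => 1 / (1 - α) + c₁ * γ * Real.exp (γ * x) := by
    funext x; exact (hVh' x).deriv
  have hVh'' : ∀ x, deriv (deriv Vh) x = c₁ * γ ^ 2 * Real.exp (γ * x) := by
    intro x
    rw [hderiv]
    have he : HasDerivAt (fun x : ℝ => Real.exp (γ * x)) (Real.exp (γ * x) * γ) x := by
      simpa using (((hasDerivAt_id x).const_mul γ).exp)
    have h1 : HasDerivAt (fun x : ℝ => 1 / (1 - α) + c₁ * γ * Real.exp (γ * x))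
        (0 + c₁ * γ * (Real.exp (γ * x) * γ)) x :=
      (hasDerivAt_const x _).add (he.const_mul (c₁ * γ))
    rw [h1.deriv]; ring
  refine ⟨hγneg, ?_, ?_⟩
  · rw [(hVh' 0).deriv, mul_zero, Real.exp_zero, mul_one, hc₁γ]; ring
  · intro x
    rw [(hVh' x).deriv, hVh'' x, hVh x]
    have hexp : Real.exp (γ * x) ≠ 0 := Real.exp_ne_zero _
    have hαne : α ≠ 0 := ne_of_gt hα0
    have h1αne : (1 : ℝ) - α ≠ 0 := ne_of_gt hα1'
    -- bracket coefficient of exp vanishes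
    have hbr : α * ((lam - mu) * (c₁ * γ) + (1/2) * (c₁ * γ ^ 2)) - (1 - α) * c₁ = 0 := by
      have : γ ^ 2 = 2 * (mu - lam) * γ + 2 * (1 - α) / α := by linarith
      rw [this, hc₁]
      field_simp
      ring
    have h2 : α * ((lam - mu) * (1 / (1 - α))) - (1 - α) * (-α * (mu - lam) / (1 - α) ^ 2) = 0 := by
      field_simp
      ring
    have h3 : x - (1 - α) * (x / (1 - α)) = 0 := by field_simp; ring
    have hbre : (α * ((lam - mu) * (c₁ * γ) + (1/2) * (c₁ * γ ^ 2)) - (1 - α) * c₁) *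
        Real.exp (γ * x) = 0 := by rw [hbr]; ring
    linear_combination (-1 : ℝ) * hbre - h2 - h3
end
end

section
/- Derivative bounds for the heavy-traffic Taylored solution: Let 0 < λ < μ with λ + μ = 1 and α ∈ (0,1), and let γ₋ := (μ−λ) − √((μ−λ)² + 2(1−α)/α), c₁ := −1/((1−α)γ₋), V̂(x) := −α(μ−λ)/(1−α)² + x/(1−α) + c₁·e^{γ₋ x}. Then: (i) for every x ≥ 0, |V̂'''(x)| = (γ₋²/(1−α))·e^{γ₋ x} ≤ γ₋²/(1−α); and (ii) |γ₋| ≤ (1−α)/(α(μ−λ)), hence γ₋²/(1−α)² ≤ 1/(α²(μ−λ)²). -/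
noncomputable section

theorem heavy_traffic_derivative_bounds
    (lam mu α : ℝ) (hlam : 0 < lam) (hlm : lam < mu) (hsum : lam + mu = 1)
    (hα0 : 0 < α) (hα1 : α < 1)
    (γ c₁ : ℝ) (Vh : ℝ → ℝ)
    (hγ : γ = (mu - lam) - Real.sqrt ((mu - lam) ^ 2 + 2 * (1 - α) / α))
    (hc₁ : c₁ = -1 / ((1 - α) * γ))
    (hVh : ∀ x : ℝ, Vh x = -α * (mu - lam) / (1 - α) ^ 2 + x / (1 - α) +
      c₁ * Real.exp (γ * x)) :
    (∀ x : ℝ, 0 ≤ x →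
      |deriv (deriv (deriv Vh)) x| = γ ^ 2 / (1 - α) * Real.exp (γ * x) ∧
      γ ^ 2 / (1 - α) * Real.exp (γ * x) ≤ γ ^ 2 / (1 - α)) ∧
    |γ| ≤ (1 - α) / (α * (mu - lam)) ∧
    γ ^ 2 / (1 - α) ^ 2 ≤ 1 / (α ^ 2 * (mu - lam) ^ 2) := by
  have hd : 0 < mu - lam := by linarith
  have h1α : 0 < 1 - α := by linarith
  have hγneg : γ < 0 := by
    have h2 : (mu - lam) ^ 2 < (mu - lam) ^ 2 + 2 * (1 - α) / α := by
      have : 0 < 2 * (1 - α) / α := by positivity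
      linarith
    have := (Real.lt_sqrt hd.le).mpr h2
    rw [hγ]; linarith
  -- exp derivative
  have hexp : ∀ x : ℝ, HasDerivAt (fun x => Real.exp (γ * x)) (γ * Real.exp (γ * x)) x := by
    intro x
    have h1 : HasDerivAt (fun x : ℝ => γ * x) γ x := by
      simpa using (hasDerivAt_id x).const_mul γ
    simpa [mul_comm, Function.comp_def] using (Real.hasDerivAt_exp (γ * x)).comp x h1
  have hVf : Vh = fun x => -α * (mu - lam) / (1 - α) ^ 2 + x / (1 - α) +
      c₁ * Real.exp (γ * x) := funext hVh
  subst hVf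
  have H1 : ∀ x : ℝ, HasDerivAt (fun x : ℝ => -α * (mu - lam) / (1 - α) ^ 2 + x / (1 - α) +
      c₁ * Real.exp (γ * x)) (1 / (1 - α) + c₁ * (γ * Real.exp (γ * x))) x := by
    intro x
    have ha : HasDerivAt (fun x : ℝ => -α * (mu - lam) / (1 - α) ^ 2 + x / (1 - α))
        (1 / (1 - α)) x := by
      simpa using ((hasDerivAt_id x).div_const (1 - α)).const_add
        (-α * (mu - lam) / (1 - α) ^ 2)
    exact ha.add ((hexp x).const_mul c₁)
  have hD1 : deriv (fun x : ℝ => -α * (mu - lam) / (1 - α) ^ 2 + x / (1 - α) +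
      c₁ * Real.exp (γ * x)) = fun x => 1 / (1 - α) + c₁ * (γ * Real.exp (γ * x)) :=
    funext fun x => (H1 x).deriv
  have H2 : ∀ x : ℝ, HasDerivAt (fun x : ℝ => 1 / (1 - α) + c₁ * (γ * Real.exp (γ * x)))
      (c₁ * (γ * (γ * Real.exp (γ * x)))) x := fun x =>
    (((hexp x).const_mul γ).const_mul c₁).const_add _
  have hD2 : deriv (fun x : ℝ => 1 / (1 - α) + c₁ * (γ * Real.exp (γ * x))) =
      fun x => c₁ * (γ * (γ * Real.exp (γ * x))) := funext fun x => (H2 x).deriv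
  have H3 : ∀ x : ℝ, HasDerivAt (fun x : ℝ => c₁ * (γ * (γ * Real.exp (γ * x))))
      (c₁ * (γ * (γ * (γ * Real.exp (γ * x))))) x := fun x =>
    ((((hexp x)).const_mul γ).const_mul γ).const_mul c₁
  have habs : |γ| ≤ (1 - α) / (α * (mu - lam)) := by
    set D := (mu - lam) ^ 2 + 2 * (1 - α) / α with hD
    have hDle : D ≤ ((mu - lam) + (1 - α) / (α * (mu - lam))) ^ 2 := by
      have hkey : ((mu - lam) + (1 - α) / (α * (mu - lam))) ^ 2 =
          (mu - lam) ^ 2 + 2 * (1 - α) / α + ((1 - α) / (α * (mu - lam))) ^ 2 := by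
        field_simp
        ring
      have : 0 ≤ ((1 - α) / (α * (mu - lam))) ^ 2 := sq_nonneg _
      rw [hD, hkey]; linarith
    have hs : Real.sqrt D ≤ (mu - lam) + (1 - α) / (α * (mu - lam)) := by
      have h1 := Real.sqrt_le_sqrt hDle
      rwa [Real.sqrt_sq (by positivity)] at h1
    rw [abs_of_nonpos hγneg.le, hγ]
    linarith
  refine ⟨?_, habs, ?_⟩
  · intro x hx
    have hder : deriv (deriv (deriv fun x : ℝ => -α * (mu - lam) / (1 - α) ^ 2 + x / (1 - α) +
        c₁ * Real.exp (γ * x))) x = c₁ * (γ * (γ * (γ * Real.exp (γ * x)))) := by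
      rw [hD1, hD2]
      exact (H3 x).deriv
    have hval : c₁ * (γ * (γ * (γ * Real.exp (γ * x)))) =
        -(γ ^ 2 / (1 - α) * Real.exp (γ * x)) := by
      have hγne : γ ≠ 0 := hγneg.ne
      rw [hc₁]
      field_simp
    constructor
    · rw [hder, hval, abs_neg, abs_of_nonneg (by positivity)]
    · have he : Real.exp (γ * x) ≤ 1 := by
        rw [Real.exp_le_one_iff]
        exact mul_nonpos_of_nonpos_of_nonneg hγneg.le hx
      have h0 : 0 ≤ γ ^ 2 / (1 - α) := by positivity
      nlinarith
  · have h2 : γ ^ 2 ≤ ((1 - α) / (α * (mu - lam))) ^ 2 := by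
      nlinarith [sq_abs γ, abs_nonneg γ]
    have h3 : ((1 - α) / (α * (mu - lam))) ^ 2 * (α * (mu - lam)) ^ 2 = (1 - α) ^ 2 := by
      field_simp
    rw [div_le_div_iff₀ (by positivity) (by positivity)]
    nlinarith [h2, h3, sq_nonneg (α * (mu - lam))]
end
end
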